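/- arXiv:1502.04928 — 13 statements merged into one kernel-verified Lean document; each statement's English description precedes it below -/
import Mathlib

section
/- If there exist diagonal positive definite matrices P, Q satisfying A^T P + P A + Q + P B Q^{-1} B^T P ≺ 0, then for every non-zero positive semi-definite 2n×2n matrix H with blocks H11, H12, H12^T, H22 (each n×n) such that every diagonal entry of H11 is at least the corresponding diagonal entry of H22, the matrix A H11 + B H12^T has at least one negative diagonal entry. -/
open Matrix

section Aux

variable {m l : Type*} [Fintype m] [Fintype l] [DecidableEq l]

lemma aux_posDef_fromBlocks₂₂ {A : Matrix m m ℝ} (B : Matrix m l ℝ) {D : Matrix l l ℝ}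
    (hD : D.PosDef) (h : (A - B * D⁻¹ * Bᴴ).PosDef) :
    (Matrix.fromBlocks A B Bᴴ D).PosDef := by
  haveI := hD.isUnit.invertible
  rw [Matrix.posDef_iff_dotProduct_mulVec]
  constructor
  · rw [Matrix.IsHermitian.fromBlocks₂₂ _ _ hD.1]
    exact h.1
  · intro x hx
    rw [dotProduct_mulVec, ← Sum.elim_comp_inl_inr x,
      Matrix.schur_complement_eq₂₂ A B _ _ hD.1]
    by_cases hx1 : x ∘ Sum.inl = 0
    · have hx2 : x ∘ Sum.inr ≠ 0 := by
        intro hx2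
        apply hx
        ext (i | i)
        · exact congrFun hx1 i
        · exact congrFun hx2 i
      have h1 : (0:ℝ) < star ((D⁻¹ * Bᴴ) *ᵥ (x ∘ Sum.inl) + x ∘ Sum.inr) ᵥ* D ⬝ᵥ
          ((D⁻¹ * Bᴴ) *ᵥ (x ∘ Sum.inl) + x ∘ Sum.inr) := by
        rw [← dotProduct_mulVec]
        apply hD.dotProduct_mulVec_pos
        simpa [hx1] using hx2
      have h2 : (0:ℝ) ≤ star (x ∘ Sum.inl) ᵥ* (A - B * D⁻¹ * Bᴴ) ⬝ᵥ (x ∘ Sum.inl) := by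
        rw [← dotProduct_mulVec]
        exact h.posSemidef.dotProduct_mulVec_nonneg _
      linarith
    · have h1 : (0:ℝ) ≤ star ((D⁻¹ * Bᴴ) *ᵥ (x ∘ Sum.inl) + x ∘ Sum.inr) ᵥ* D ⬝ᵥ
          ((D⁻¹ * Bᴴ) *ᵥ (x ∘ Sum.inl) + x ∘ Sum.inr) := by
        rw [← dotProduct_mulVec]
        exact hD.posSemidef.dotProduct_mulVec_nonneg _
      have h2 : (0:ℝ) < star (x ∘ Sum.inl) ᵥ* (A - B * D⁻¹ * Bᴴ) ⬝ᵥ (x ∘ Sum.inl) := by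
        rw [← dotProduct_mulVec]
        exact h.dotProduct_mulVec_pos hx1
      linarith

lemma aux_trace_fromBlocks {m l : Type*} [Fintype m] [Fintype l] (A : Matrix m m ℝ)
    (B : Matrix m l ℝ) (C : Matrix l m ℝ) (D : Matrix l l ℝ) :
    (Matrix.fromBlocks A B C D).trace = A.trace + D.trace := by
  simp [Matrix.trace, Fintype.sum_sum_type]

lemma aux_trace_pos [DecidableEq m] {M N : Matrix m m ℝ} (hM : M.PosDef)
    (hN : N.PosSemidef) (hN0 : N ≠ 0) : 0 < (M * N).trace := by
  obtain ⟨C, rfl⟩ : ∃ C : Matrix m m ℝ, N = Cᴴ * C := by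
    open scoped MatrixOrder in
    exact CStarAlgebra.nonneg_iff_eq_star_mul_self.mp hN.nonneg
  have hC : C ≠ 0 := by
    rintro rfl
    simp at hN0
  have hkey : (M * (Cᴴ * C)).trace = ∑ i, (C i) ⬝ᵥ (M *ᵥ (C i)) := by
    rw [← Matrix.mul_assoc, Matrix.trace_mul_cycle]
    rw [Matrix.trace]
    apply Finset.sum_congr rfl
    intro i _
    simp only [Matrix.diag_apply, Matrix.mul_apply, Matrix.conjTranspose_apply, star_trivial,
      dotProduct, Matrix.mulVec, Finset.sum_mul, Finset.mul_sum]
    rw [Finset.sum_comm]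
    apply Finset.sum_congr rfl
    intro j _
    apply Finset.sum_congr rfl
    intro k _
    ring
  rw [hkey]
  obtain ⟨i0, hi0⟩ : ∃ i, C i ≠ 0 := by
    by_contra hcon
    push_neg at hcon
    apply hC
    ext i j
    exact congrFun (hcon i) j
  apply Finset.sum_pos'
  · intro i _
    exact hM.posSemidef.dotProduct_mulVec_nonneg (C i)
  · exact ⟨i0, Finset.mem_univ i0, hM.dotProduct_mulVec_pos hi0⟩

end Aux

theorem diag_riccati_necessary (n : ℕ) (A B : Matrix (Fin n) (Fin n) ℝ)
    (p q : Fin n → ℝ) (hp : ∀ i, 0 < p i) (hq : ∀ i, 0 < q i)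
    (hRic : (-(Aᵀ * Matrix.diagonal p + Matrix.diagonal p * A + Matrix.diagonal q +
        Matrix.diagonal p * B * (Matrix.diagonal q)⁻¹ * Bᵀ * Matrix.diagonal p)).PosDef) :
    ∀ H11 H12 H22 : Matrix (Fin n) (Fin n) ℝ,
      (Matrix.fromBlocks H11 H12 H12ᵀ H22).PosSemidef →
      Matrix.fromBlocks H11 H12 H12ᵀ H22 ≠ 0 →
      (∀ i, H22 i i ≤ H11 i i) →
      ∃ i, (A * H11 + B * H12ᵀ) i i < 0 := by
  intro H11 H12 H22 hH hH0 hdiag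
  by_contra hcon
  push_neg at hcon
  set P := Matrix.diagonal p with hP
  set Q := Matrix.diagonal q with hQ
  have hQpd : Q.PosDef := Matrix.posDef_diagonal_iff.mpr hq
  -- the big negative-definite block matrix
  set Mbig : Matrix (Fin n ⊕ Fin n) (Fin n ⊕ Fin n) ℝ :=
    Matrix.fromBlocks (-(Aᵀ * P + P * A + Q)) (-(P * B)) (-(P * B))ᴴ Q with hMbig
  have hschur : ((-(Aᵀ * P + P * A + Q)) - (-(P * B)) * Q⁻¹ * (-(P * B))ᴴ).PosDef := by
    have : ((-(Aᵀ * P + P * A + Q)) - (-(P * B)) * Q⁻¹ * (-(P * B))ᴴ)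
        = -(Aᵀ * P + P * A + Q + P * B * Q⁻¹ * Bᵀ * P) := by
      have hPB : (-(P * B))ᴴ = -(Bᵀ * P) := by
        rw [Matrix.conjTranspose_eq_transpose_of_trivial, Matrix.transpose_neg,
          Matrix.transpose_mul, hP, Matrix.diagonal_transpose]
      rw [hPB]
      noncomm_ring
    rw [this]
    exact hRic
  have hMbigPD : Mbig.PosDef := aux_posDef_fromBlocks₂₂ _ hQpd hschur
  -- the trace of Mbig * H is positive
  have htrpos : 0 < (Mbig * Matrix.fromBlocks H11 H12 H12ᵀ H22).trace :=
    aux_trace_pos hMbigPD hH hH0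
  -- compute the trace
  have hPBH : (-(P * B))ᴴ = -(Bᵀ * P) := by
    rw [Matrix.conjTranspose_eq_transpose_of_trivial, Matrix.transpose_neg,
      Matrix.transpose_mul, hP, Matrix.diagonal_transpose]
  have hH11sym : H11ᵀ = H11 := by
    ext i j
    have := congrFun (congrFun hH.1 (Sum.inl i)) (Sum.inl j)
    simpa using this
  have htr : (Mbig * Matrix.fromBlocks H11 H12 H12ᵀ H22).trace =
      -(2 * (P * (A * H11 + B * H12ᵀ)).trace + (Q * (H11 - H22)).trace) := by
    rw [hMbig, hPBH, Matrix.fromBlocks_multiply]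
    rw [aux_trace_fromBlocks]
    have e1 : (Aᵀ * P * H11).trace = (P * (A * H11)).trace := by
      calc (Aᵀ * P * H11).trace = ((Aᵀ * P * H11)ᵀ).trace := (Matrix.trace_transpose _).symm
        _ = (H11ᵀ * (Pᵀ * Aᵀᵀ)).trace := by
            rw [Matrix.transpose_mul, Matrix.transpose_mul]
        _ = (H11 * (P * A)).trace := by
            rw [hH11sym, hP, Matrix.diagonal_transpose, Matrix.transpose_transpose]
        _ = (P * (A * H11)).trace := by rw [Matrix.trace_mul_comm, Matrix.mul_assoc]
    have e2 : (Bᵀ * P * H12).trace = (P * (B * H12ᵀ)).trace := by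
      calc (Bᵀ * P * H12).trace = ((Bᵀ * P * H12)ᵀ).trace := (Matrix.trace_transpose _).symm
        _ = (H12ᵀ * (Pᵀ * Bᵀᵀ)).trace := by
            rw [Matrix.transpose_mul, Matrix.transpose_mul]
        _ = (H12ᵀ * (P * B)).trace := by
            rw [hP, Matrix.diagonal_transpose, Matrix.transpose_transpose]
        _ = (P * (B * H12ᵀ)).trace := by rw [Matrix.trace_mul_comm, Matrix.mul_assoc]
    simp only [Matrix.neg_mul, Matrix.add_mul, Matrix.trace_add, Matrix.trace_neg,
      Matrix.mul_sub, Matrix.trace_sub, Matrix.mul_add]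
    rw [Matrix.mul_assoc P A H11, Matrix.mul_assoc P B H12ᵀ]
    linarith [e1, e2]
  -- each piece of the trace is nonnegative
  have h1 : 0 ≤ (P * (A * H11 + B * H12ᵀ)).trace := by
    rw [Matrix.trace]
    apply Finset.sum_nonneg
    intro i _
    simp only [Matrix.diag_apply, hP, Matrix.diagonal_mul]
    exact mul_nonneg (hp i).le (hcon i)
  have h2 : 0 ≤ (Q * (H11 - H22)).trace := by
    rw [Matrix.trace]
    apply Finset.sum_nonneg
    intro i _
    simp only [Matrix.diag_apply, hQ, Matrix.diagonal_mul, Matrix.sub_apply]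
    exact mul_nonneg (hq i).le (by linarith [hdiag i])
  rw [htr] at htrpos
  linarith
end

section
/- Let A, B ∈ ℝ^{n×n}. Suppose that for every non-zero positive semi-definite 2n×2n matrix H = [[H11,H12],[H12^T,H22]] with diag(H11) ≥ diag(H22), the matrix A H11 + B H12^T has a negative diagonal entry. Then there exist diagonal positive definite matrices P, Q with A^T P + P A + Q + P B Q^{-1} B^T P ≺ 0. -/
open Matrix

namespace DRA

variable {n : ℕ}

/-! ### basic diagonal helpers -/

theorem diag_add' (a b : Fin n → ℝ) :
    diagonal (a + b) = diagonal a + diagonal b := by rw [diagonal_add]; rfl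

theorem diag_zero' : diagonal (0 : Fin n → ℝ) = 0 := by rw [← diagonal_zero]; rfl

/-- The block matrix `[[AᵀP+PA+Q, PB],[BᵀP, -Q]]`. -/
noncomputable def Lm (A B : Matrix (Fin n) (Fin n) ℝ) (p q : Fin n → ℝ) :
    Matrix (Fin n ⊕ Fin n) (Fin n ⊕ Fin n) ℝ :=
  fromBlocks (Aᵀ * diagonal p + diagonal p * A + diagonal q) (diagonal p * B)
    (Bᵀ * diagonal p) (-(diagonal q))

theorem Lm_add (A B : Matrix (Fin n) (Fin n) ℝ) (p q p' q' : Fin n → ℝ) :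
    Lm A B (p + p') (q + q') = Lm A B p q + Lm A B p' q' := by
  simp only [Lm, diag_add', Matrix.mul_add, Matrix.add_mul, fromBlocks_add, neg_add]
  congr 1 <;> abel

theorem Lm_smul (A B : Matrix (Fin n) (Fin n) ℝ) (c : ℝ) (p q : Fin n → ℝ) :
    Lm A B (c • p) (c • q) = c • Lm A B p q := by
  simp only [Lm, diagonal_smul, Matrix.mul_smul, Matrix.smul_mul, fromBlocks_smul, smul_add,
    smul_neg]

theorem Lm_zero (A B : Matrix (Fin n) (Fin n) ℝ) : Lm A B 0 0 = 0 := by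
  simp [Lm, diag_zero', ← fromBlocks_zero]

/-! ### the pairing -/

noncomputable def ip (M N : Matrix (Fin n ⊕ Fin n) (Fin n ⊕ Fin n) ℝ) : ℝ :=
  ∑ i, ∑ j, M i j * N i j

theorem ip_fromBlocks (W X Y Z : Matrix (Fin n) (Fin n) ℝ)
    (N : Matrix (Fin n ⊕ Fin n) (Fin n ⊕ Fin n) ℝ) :
    ip (fromBlocks W X Y Z) N =
      (∑ i, ∑ j, W i j * N.toBlocks₁₁ i j) + (∑ i, ∑ j, X i j * N.toBlocks₁₂ i j) +
      ((∑ i, ∑ j, Y i j * N.toBlocks₂₁ i j) + ∑ i, ∑ j, Z i j * N.toBlocks₂₂ i j) := by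
  simp only [ip, Fintype.sum_sum_type, fromBlocks, toBlocks₁₁, toBlocks₁₂, toBlocks₂₁, toBlocks₂₂,
    Finset.sum_add_distrib, Sum.elim_inl, Sum.elim_inr, of_apply]
  ring

theorem sum_diagL (p : Fin n → ℝ) (M N : Matrix (Fin n) (Fin n) ℝ) :
    (∑ i, ∑ j, (diagonal p * M) i j * N i j) = ∑ i, p i * (M * Nᵀ) i i := by
  refine Finset.sum_congr rfl fun i _ => ?_
  rw [mul_apply]
  simp only [diagonal_mul, transpose_apply, Finset.mul_sum]
  exact Finset.sum_congr rfl fun j _ => by ring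

theorem sum_diagR (p : Fin n → ℝ) (M N : Matrix (Fin n) (Fin n) ℝ) :
    (∑ i, ∑ j, (M * diagonal p) i j * N i j) = ∑ j, p j * (Mᵀ * N) j j := by
  rw [Finset.sum_comm]
  refine Finset.sum_congr rfl fun j _ => ?_
  rw [mul_apply]
  simp only [mul_diagonal, transpose_apply, Finset.mul_sum]
  exact Finset.sum_congr rfl fun i _ => by ring

theorem sum_diag (q : Fin n → ℝ) (N : Matrix (Fin n) (Fin n) ℝ) :
    (∑ i, ∑ j, (diagonal q) i j * N i j) = ∑ i, q i * N i i := by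
  refine Finset.sum_congr rfl fun i _ => ?_
  rw [Finset.sum_eq_single i]
  · rw [diagonal_apply_eq]
  · intro b _ hb
    rw [diagonal_apply_ne _ (Ne.symm hb), zero_mul]
  · intro hi
    exact absurd (Finset.mem_univ i) hi

theorem sum2_add (M M' N : Matrix (Fin n) (Fin n) ℝ) :
    (∑ i, ∑ j, (M + M') i j * N i j)
      = (∑ i, ∑ j, M i j * N i j) + ∑ i, ∑ j, M' i j * N i j := by
  simp only [Matrix.add_apply, add_mul, Finset.sum_add_distrib]

theorem sum2_neg (M N : Matrix (Fin n) (Fin n) ℝ) :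
    (∑ i, ∑ j, (-M) i j * N i j) = -∑ i, ∑ j, M i j * N i j := by
  simp only [Matrix.neg_apply, neg_mul, Finset.sum_neg_distrib]

/-- coefficient of `p i` in `ip (Lm A B p q) N` -/
noncomputable def cp (A B : Matrix (Fin n) (Fin n) ℝ)
    (N : Matrix (Fin n ⊕ Fin n) (Fin n ⊕ Fin n) ℝ) (i : Fin n) : ℝ :=
  (A * N.toBlocks₁₁) i i + (A * N.toBlocks₁₁ᵀ) i i + (B * N.toBlocks₁₂ᵀ) i i
    + (B * N.toBlocks₂₁) i i

/-- coefficient of `q i` in `ip (Lm A B p q) N` -/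
noncomputable def cq (N : Matrix (Fin n ⊕ Fin n) (Fin n ⊕ Fin n) ℝ) (i : Fin n) : ℝ :=
  N.toBlocks₁₁ i i - N.toBlocks₂₂ i i

theorem ip_Lm (A B : Matrix (Fin n) (Fin n) ℝ) (p q : Fin n → ℝ)
    (N : Matrix (Fin n ⊕ Fin n) (Fin n ⊕ Fin n) ℝ) :
    ip (Lm A B p q) N = (∑ i, p i * cp A B N i) + ∑ i, q i * cq N i := by
  rw [Lm, ip_fromBlocks, sum2_add, sum2_add, sum2_neg, sum_diagR p Aᵀ, sum_diagL p A,
    sum_diag q, sum_diagL p B, sum_diagR p Bᵀ, sum_diag q, transpose_transpose,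
    transpose_transpose]
  simp only [cp, cq, mul_add, mul_sub, Finset.sum_add_distrib, Finset.sum_sub_distrib]
  ring

/-! ### vectorization and functionals -/

abbrev Em (n : ℕ) := ((Fin n ⊕ Fin n) × (Fin n ⊕ Fin n)) → ℝ

def m2v (M : Matrix (Fin n ⊕ Fin n) (Fin n ⊕ Fin n) ℝ) : Em n := fun k => M k.1 k.2

theorem m2v_expand (v : Em n) : v = ∑ k, v k • (Pi.single k 1 : Em n) := by
  funext j
  rw [Finset.sum_apply]
  rw [Finset.sum_eq_single j]
  · simp
  · intro b _ hb
    simp [Pi.single_apply, Ne.symm hb]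
  · intro hj; exact absurd (Finset.mem_univ j) hj

theorem feval (f : Em n →L[ℝ] ℝ) (M : Matrix (Fin n ⊕ Fin n) (Fin n ⊕ Fin n) ℝ) :
    f (m2v M) = ∑ i, ∑ j, M i j * f (Pi.single (i, j) (1:ℝ)) := by
  conv_lhs => rw [m2v_expand (m2v M)]
  rw [map_sum, Fintype.sum_prod_type]
  refine Finset.sum_congr rfl fun i _ => Finset.sum_congr rfl fun j _ => ?_
  rw [_root_.map_smul, smul_eq_mul]
  rfl

/-! ### quadratic form facts -/

theorem psd_vecMulVec (x : Fin n ⊕ Fin n → ℝ) : (vecMulVec x x).PosSemidef := by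
  rw [vecMulVec_eq (ι := Unit)]
  have : (replicateCol Unit x)ᴴ = replicateRow Unit x := by
    ext i j; simp [conjTranspose_apply]
  rw [← this]
  exact posSemidef_self_mul_conjTranspose _

theorem ip_vecMulVec (x : Fin n ⊕ Fin n → ℝ) (H : Matrix (Fin n ⊕ Fin n) (Fin n ⊕ Fin n) ℝ) :
    (∑ i, ∑ j, (vecMulVec x x) i j * H i j) = x ⬝ᵥ H *ᵥ x := by
  simp only [vecMulVec_apply, dotProduct, mulVec, Finset.mul_sum]
  exact Finset.sum_congr rfl fun i _ => Finset.sum_congr rfl fun j _ => by ring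

theorem dot_transpose (x : Fin n ⊕ Fin n → ℝ) (H : Matrix (Fin n ⊕ Fin n) (Fin n ⊕ Fin n) ℝ) :
    x ⬝ᵥ Hᵀ *ᵥ x = x ⬝ᵥ H *ᵥ x := by
  rw [dotProduct_mulVec, vecMul_transpose, dotProduct_comm]

theorem quad_bound (M : Matrix (Fin n ⊕ Fin n) (Fin n ⊕ Fin n) ℝ) (x : Fin n ⊕ Fin n → ℝ) :
    x ⬝ᵥ M *ᵥ x ≤ (∑ k, ∑ l, |M k l|) * ∑ i, x i ^ 2 := by
  have hsq : ∀ k l, |x k| * |x l| ≤ ∑ i, x i ^ 2 := by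
    intro k l
    have h1 : x k ^ 2 ≤ ∑ i, x i ^ 2 :=
      Finset.single_le_sum (f := fun i => x i ^ 2) (fun i _ => sq_nonneg _) (Finset.mem_univ k)
    have h2 : x l ^ 2 ≤ ∑ i, x i ^ 2 :=
      Finset.single_le_sum (f := fun i => x i ^ 2) (fun i _ => sq_nonneg _) (Finset.mem_univ l)
    nlinarith [sq_abs (x k), sq_abs (x l), sq_nonneg (|x k| - |x l|)]
  calc x ⬝ᵥ M *ᵥ x = ∑ k, ∑ l, x k * (M k l * x l) := by
        simp only [dotProduct, mulVec, Finset.mul_sum]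
    _ ≤ ∑ k, ∑ l, |M k l| * ∑ i, x i ^ 2 := by
        refine Finset.sum_le_sum fun k _ => Finset.sum_le_sum fun l _ => ?_
        calc x k * (M k l * x l) ≤ |x k * (M k l * x l)| := le_abs_self _
          _ = |M k l| * (|x k| * |x l|) := by rw [abs_mul, abs_mul]; ring
          _ ≤ |M k l| * ∑ i, x i ^ 2 := mul_le_mul_of_nonneg_left (hsq k l) (abs_nonneg _)
    _ = (∑ k, ∑ l, |M k l|) * ∑ i, x i ^ 2 := by
        rw [Finset.sum_mul]
        exact Finset.sum_congr rfl fun k _ => by rw [Finset.sum_mul]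

/-! ### PSD helpers -/

theorem psd_add {S T : Matrix (Fin n ⊕ Fin n) (Fin n ⊕ Fin n) ℝ}
    (hS : S.PosSemidef) (hT : T.PosSemidef) : (S + T).PosSemidef := by
  refine PosSemidef.of_dotProduct_mulVec_nonneg ?_ fun x => ?_
  · rw [IsHermitian, conjTranspose_add, hS.1.eq, hT.1.eq]
  · rw [add_mulVec, dotProduct_add]
    exact add_nonneg (hS.dotProduct_mulVec_nonneg x) (hT.dotProduct_mulVec_nonneg x)

theorem psd_smul {S : Matrix (Fin n ⊕ Fin n) (Fin n ⊕ Fin n) ℝ}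
    (hS : S.PosSemidef) {c : ℝ} (hc : 0 ≤ c) : (c • S).PosSemidef := by
  refine PosSemidef.of_dotProduct_mulVec_nonneg ?_ fun x => ?_
  · rw [IsHermitian, conjTranspose_smul, hS.1.eq]
    congr 1
  · rw [smul_mulVec, dotProduct_smul, smul_eq_mul]
    exact mul_nonneg hc (hS.dotProduct_mulVec_nonneg x)

/-! ### the cone K -/

noncomputable def K (A B : Matrix (Fin n) (Fin n) ℝ) : Set (Em n) :=
  {v | ∃ p q : Fin n → ℝ, ∃ S : Matrix (Fin n ⊕ Fin n) (Fin n ⊕ Fin n) ℝ,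
    (∀ i, 0 ≤ p i) ∧ (∀ i, 0 ≤ q i) ∧ S.PosSemidef ∧ v = m2v (Lm A B p q + S)}

theorem K_convex (A B : Matrix (Fin n) (Fin n) ℝ) : Convex ℝ (K A B) := by
  rintro v ⟨p, q, S, hp, hq, hS, rfl⟩ w ⟨p', q', S', hp', hq', hS', rfl⟩ a b ha hb hab
  refine ⟨a • p + b • p', a • q + b • q', a • S + b • S', ?_, ?_, ?_, ?_⟩
  · intro i
    exact add_nonneg (mul_nonneg ha (hp i)) (mul_nonneg hb (hp' i))
  · intro i
    exact add_nonneg (mul_nonneg ha (hq i)) (mul_nonneg hb (hq' i))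
  · exact psd_add (psd_smul hS ha) (psd_smul hS' hb)
  · rw [Lm_add, Lm_smul, Lm_smul]
    funext k
    simp [m2v, Matrix.add_apply, Matrix.smul_apply]
    ring

theorem K_cone (A B : Matrix (Fin n) (Fin n) ℝ) {v : Em n} (hv : v ∈ K A B) {t : ℝ}
    (ht : 0 ≤ t) : t • v ∈ K A B := by
  obtain ⟨p, q, S, hp, hq, hS, rfl⟩ := hv
  refine ⟨t • p, t • q, t • S, fun i => mul_nonneg ht (hp i), fun i => mul_nonneg ht (hq i),
    psd_smul hS ht, ?_⟩
  rw [Lm_smul]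
  funext k
  simp [m2v, Matrix.add_apply, Matrix.smul_apply]
  ring

theorem zero_mem_K (A B : Matrix (Fin n) (Fin n) ℝ) : (0 : Em n) ∈ K A B := by
  refine ⟨0, 0, 0, fun _ => le_refl _, fun _ => le_refl _, Matrix.PosSemidef.zero, ?_⟩
  rw [Lm_zero, add_zero]
  rfl

/-! ### miscellaneous identities -/

theorem ip_negOne (N : Matrix (Fin n ⊕ Fin n) (Fin n ⊕ Fin n) ℝ) :
    ip (-1) N = -∑ i, N i i := by
  rw [ip, ← Finset.sum_neg_distrib]
  refine Finset.sum_congr rfl fun i _ => ?_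
  rw [Finset.sum_eq_single i]
  · simp
  · intro b _ hb
    simp [one_apply_ne (Ne.symm hb)]
  · intro hi
    exact absurd (Finset.mem_univ i) hi

theorem cpG (A B : Matrix (Fin n) (Fin n) ℝ) (Hm : Matrix (Fin n ⊕ Fin n) (Fin n ⊕ Fin n) ℝ)
    (i : Fin n) :
    (A * ((-(1/2:ℝ)) • (Hm + Hmᵀ)).toBlocks₁₁
      + B * (((-(1/2:ℝ)) • (Hm + Hmᵀ)).toBlocks₁₂)ᵀ) i i = (-(1/2)) * cp A B Hm i := by
  have t1 : ((-(1/2:ℝ)) • (Hm + Hmᵀ)).toBlocks₁₁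
      = (-(1/2:ℝ)) • (Hm.toBlocks₁₁ + (Hm.toBlocks₁₁)ᵀ) := by
    ext a b
    simp [toBlocks₁₁]
  have t2 : ((-(1/2:ℝ)) • (Hm + Hmᵀ)).toBlocks₁₂
      = (-(1/2:ℝ)) • (Hm.toBlocks₁₂ + (Hm.toBlocks₂₁)ᵀ) := by
    ext a b
    simp [toBlocks₁₂, toBlocks₂₁]
  rw [t1, t2, transpose_smul, transpose_add, transpose_transpose, mul_smul_comm, mul_smul_comm,
    ← smul_add, Matrix.smul_apply, smul_eq_mul, cp]
  simp only [Matrix.mul_add, Matrix.add_apply]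
  ring

theorem cqG (Hm : Matrix (Fin n ⊕ Fin n) (Fin n ⊕ Fin n) ℝ) (i : Fin n) :
    ((-(1/2:ℝ)) • (Hm + Hmᵀ)).toBlocks₂₂ i i ≤ ((-(1/2:ℝ)) • (Hm + Hmᵀ)).toBlocks₁₁ i i
      ↔ cq Hm i ≤ 0 := by
  simp only [cq, toBlocks₁₁, toBlocks₂₂, Matrix.smul_apply, Matrix.add_apply, transpose_apply,
    of_apply, smul_eq_mul]
  constructor <;> intro hh <;> nlinarith

theorem schur_step (A B : Matrix (Fin n) (Fin n) ℝ) (p q : Fin n → ℝ) (hq : ∀ i, 0 < q i)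
    (hneg : ∀ z : Fin n ⊕ Fin n → ℝ, z ≠ 0 → z ⬝ᵥ (Lm A B p q) *ᵥ z < 0) :
    (-(Aᵀ * diagonal p + diagonal p * A + diagonal q +
      diagonal p * B * (diagonal q)⁻¹ * Bᵀ * diagonal p)).PosDef := by
  have hQQi : diagonal q * diagonal (fun i => (q i)⁻¹) = 1 := by
    rw [diagonal_mul_diagonal]
    rw [show (fun i => q i * (q i)⁻¹) = fun _ => (1:ℝ) from
      funext fun i => mul_inv_cancel₀ (hq i).ne', diagonal_one]
  have hQi : (diagonal q)⁻¹ = diagonal (fun i => (q i)⁻¹) := inv_eq_right_inv hQQi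
  rw [hQi]
  refine PosDef.of_dotProduct_mulVec_pos ?_ ?_
  · have hsym : (Aᵀ * diagonal p + diagonal p * A + diagonal q +
        diagonal p * B * diagonal (fun i => (q i)⁻¹) * Bᵀ * diagonal p)ᵀ =
        Aᵀ * diagonal p + diagonal p * A + diagonal q +
        diagonal p * B * diagonal (fun i => (q i)⁻¹) * Bᵀ * diagonal p := by
      simp only [transpose_add, transpose_mul, transpose_transpose, diagonal_transpose]
      noncomm_ring
    rw [IsHermitian, conjTranspose_eq_transpose_of_trivial, transpose_neg, hsym]
  · intro x hx
    set y := diagonal (fun i => (q i)⁻¹) *ᵥ ((Bᵀ * diagonal p) *ᵥ x) with hy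
    have hz : Sum.elim x y ≠ 0 := fun hz => hx (funext fun i => congrFun hz (Sum.inl i))
    have hlt := hneg (Sum.elim x y) hz
    rw [Lm, fromBlocks_mulVec] at hlt
    rw [sumElim_dotProduct_sumElim] at hlt
    simp only [Sum.elim_comp_inl, Sum.elim_comp_inr] at hlt
    have hQy : diagonal q *ᵥ y = (Bᵀ * diagonal p) *ᵥ x := by
      rw [hy, mulVec_mulVec, hQQi, one_mulVec]
    have hXy : (diagonal p * B) *ᵥ y =
        (diagonal p * B * diagonal (fun i => (q i)⁻¹) * Bᵀ * diagonal p) *ᵥ x := by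
      rw [hy, mulVec_mulVec, mulVec_mulVec, ← Matrix.mul_assoc]
    rw [neg_mulVec, dotProduct_add, dotProduct_add, dotProduct_neg, hQy, hXy] at hlt
    have key : x ⬝ᵥ ((Aᵀ * diagonal p + diagonal p * A + diagonal q +
        diagonal p * B * diagonal (fun i => (q i)⁻¹) * Bᵀ * diagonal p) *ᵥ x) < 0 := by
      rw [add_mulVec, dotProduct_add]
      linarith [hlt]
    have hstar : (star x : Fin n → ℝ) = x := by funext i; simp
    rw [hstar, neg_mulVec, dotProduct_neg]
    linarith [key]

theorem caseA (A B : Matrix (Fin n) (Fin n) ℝ)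
    (hmem : m2v (-1 : Matrix (Fin n ⊕ Fin n) (Fin n ⊕ Fin n) ℝ) ∈ closure (K A B)) :
    ∃ p q : Fin n → ℝ, (∀ i, 0 < p i) ∧ (∀ i, 0 < q i) ∧
      (-(Aᵀ * Matrix.diagonal p + Matrix.diagonal p * A + Matrix.diagonal q +
        Matrix.diagonal p * B * (Matrix.diagonal q)⁻¹ * Bᵀ * Matrix.diagonal p)).PosDef := by
  classical
  -- a uniform bound for entrywise-small matrices
  obtain ⟨m, hm0, hmsum⟩ : ∃ m : ℝ, 0 ≤ m ∧
      ∀ (E : Matrix (Fin n ⊕ Fin n) (Fin n ⊕ Fin n) ℝ) (ε : ℝ), (∀ k l, |E k l| ≤ ε) →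
        (∑ k, ∑ l, |E k l|) ≤ m * ε := by
    refine ⟨((Fintype.card (Fin n ⊕ Fin n) : ℝ)) ^ 2, by positivity, fun E ε hE => ?_⟩
    calc (∑ k, ∑ l, |E k l|) ≤ ∑ _k : Fin n ⊕ Fin n, ∑ _l : Fin n ⊕ Fin n, ε :=
          Finset.sum_le_sum fun k _ => Finset.sum_le_sum fun l _ => hE k l
      _ = ((Fintype.card (Fin n ⊕ Fin n) : ℝ)) ^ 2 * ε := by
          simp [Finset.sum_const, Finset.card_univ]
          ring
  obtain ⟨ε, hε0, hmε⟩ : ∃ ε : ℝ, 0 < ε ∧ m * ε ≤ 1 / 2 := by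
    refine ⟨1 / (2 * (m + 1)), by positivity, ?_⟩
    rw [mul_one_div, div_le_div_iff₀ (by positivity) (by norm_num)]
    nlinarith
  obtain ⟨v, hvK, hdist⟩ := Metric.mem_closure_iff.mp hmem ε hε0
  obtain ⟨p, q, S, hp, hq, hS, rfl⟩ := hvK
  have hErr : ∀ k l, |((Lm A B p q + S) + 1) k l| ≤ ε := by
    intro k l
    have h1 := (dist_pi_lt_iff hε0).mp hdist (k, l)
    rw [Real.dist_eq] at h1
    have heq : m2v (-1 : Matrix (Fin n ⊕ Fin n) (Fin n ⊕ Fin n) ℝ) (k, l)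
        - m2v (Lm A B p q + S) (k, l) = -(((Lm A B p q + S) + 1) k l) := by
      simp [m2v, Matrix.add_apply, Matrix.neg_apply]
      ring
    rw [heq, abs_neg] at h1
    exact h1.le
  have hsumErr := hmsum _ ε hErr
  have key1 : ∀ x : Fin n ⊕ Fin n → ℝ,
      x ⬝ᵥ (Lm A B p q) *ᵥ x ≤ (-(1/2)) * ∑ i, x i ^ 2 := by
    intro x
    have hLdecomp : Lm A B p q = (-1) + ((Lm A B p q + S) + 1) + (-S) := by abel
    have hx2 : (0:ℝ) ≤ ∑ i, x i ^ 2 := Finset.sum_nonneg fun i _ => sq_nonneg _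
    have hone : x ⬝ᵥ ((1 : Matrix (Fin n ⊕ Fin n) (Fin n ⊕ Fin n) ℝ)) *ᵥ x
        = ∑ i, x i ^ 2 := by
      rw [one_mulVec]
      simp [dotProduct, sq]
    have hSx : 0 ≤ x ⬝ᵥ S *ᵥ x := by
      have h5 := hS.dotProduct_mulVec_nonneg x
      have hstar : (star x : Fin n ⊕ Fin n → ℝ) = x := by funext i; simp
      rwa [hstar] at h5
    have hErrx : x ⬝ᵥ ((Lm A B p q + S) + 1) *ᵥ x ≤ (1/2) * ∑ i, x i ^ 2 := by
      calc x ⬝ᵥ ((Lm A B p q + S) + 1) *ᵥ x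
          ≤ (∑ k, ∑ l, |((Lm A B p q + S) + 1) k l|) * ∑ i, x i ^ 2 := quad_bound _ x
        _ ≤ (m * ε) * ∑ i, x i ^ 2 := mul_le_mul_of_nonneg_right hsumErr hx2
        _ ≤ (1/2) * ∑ i, x i ^ 2 := mul_le_mul_of_nonneg_right hmε hx2
    have hexp : x ⬝ᵥ (Lm A B p q) *ᵥ x
        = -(x ⬝ᵥ (1 : Matrix (Fin n ⊕ Fin n) (Fin n ⊕ Fin n) ℝ) *ᵥ x)
          + x ⬝ᵥ ((Lm A B p q + S) + 1) *ᵥ x + (-(x ⬝ᵥ S *ᵥ x)) := by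
      conv_lhs => rw [hLdecomp]
      simp only [add_mulVec, neg_mulVec, dotProduct_add, dotProduct_neg]
    rw [hexp, hone]
    linarith
  -- perturb to strict positivity
  obtain ⟨c, hc0, hcq⟩ : ∃ c : ℝ, 0 ≤ c ∧
      ∀ z : Fin n ⊕ Fin n → ℝ, z ⬝ᵥ (Lm A B 1 1) *ᵥ z ≤ c * ∑ i, z i ^ 2 :=
    ⟨∑ k, ∑ l, |Lm A B 1 1 k l|,
      Finset.sum_nonneg fun k _ => Finset.sum_nonneg fun l _ => abs_nonneg _,
      fun z => quad_bound _ z⟩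
  obtain ⟨δ, hδ0, hδc⟩ : ∃ δ : ℝ, 0 < δ ∧ δ * c < 1 / 2 := by
    refine ⟨1 / (4 * (c + 1)), by positivity, ?_⟩
    rw [div_mul_eq_mul_div, div_lt_div_iff₀ (by positivity) (by norm_num)]
    nlinarith
  have hδfun : (fun _ : Fin n => δ) = δ • (1 : Fin n → ℝ) := by
    funext i
    simp
  have hL' : Lm A B (p + fun _ => δ) (q + fun _ => δ) = Lm A B p q + δ • Lm A B 1 1 := by
    rw [hδfun, Lm_add, Lm_smul]
  refine ⟨p + fun _ => δ, q + fun _ => δ, fun i => ?_, fun i => ?_, ?_⟩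
  · have := hp i
    simp only [Pi.add_apply]
    linarith
  · have := hq i
    simp only [Pi.add_apply]
    linarith
  apply schur_step
  · intro i
    have := hq i
    simp only [Pi.add_apply]
    linarith
  · intro z hz
    have hz2 : 0 < ∑ i, z i ^ 2 := by
      have h8 : ∃ i, z i ≠ 0 := by
        by_contra hcon
        push_neg at hcon
        exact hz (funext hcon)
      obtain ⟨i, hi⟩ := h8
      refine Finset.sum_pos' (fun j _ => sq_nonneg _) ⟨i, Finset.mem_univ i, by positivity⟩
    have e1 : z ⬝ᵥ (Lm A B (p + fun _ => δ) (q + fun _ => δ)) *ᵥ z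
        = z ⬝ᵥ (Lm A B p q) *ᵥ z + δ * (z ⬝ᵥ (Lm A B 1 1) *ᵥ z) := by
      rw [hL', add_mulVec, dotProduct_add, smul_mulVec, dotProduct_smul, smul_eq_mul]
    rw [e1]
    have h2 : δ * (z ⬝ᵥ (Lm A B 1 1) *ᵥ z) ≤ δ * (c * ∑ i, z i ^ 2) :=
      mul_le_mul_of_nonneg_left (hcq z) hδ0.le
    have h3 := key1 z
    nlinarith

/-! ### the separation argument -/

theorem caseB (A B : Matrix (Fin n) (Fin n) ℝ)
    (h : ∀ H11 H12 H22 : Matrix (Fin n) (Fin n) ℝ,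
      (Matrix.fromBlocks H11 H12 H12ᵀ H22).PosSemidef →
      Matrix.fromBlocks H11 H12 H12ᵀ H22 ≠ 0 →
      (∀ i, H22 i i ≤ H11 i i) →
      ∃ i, (A * H11 + B * H12ᵀ) i i < 0)
    (hmem : m2v (-1 : Matrix (Fin n ⊕ Fin n) (Fin n ⊕ Fin n) ℝ) ∉ closure (K A B)) :
    False := by
  obtain ⟨f, u, hfK, hfx⟩ :=
    geometric_hahn_banach_closed_point (K_convex A B).closure isClosed_closure hmem
  have hu : 0 < u := by
    have h0 := hfK 0 (subset_closure (zero_mem_K A B))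
    rwa [map_zero] at h0
  have hfle : ∀ v ∈ K A B, f v ≤ 0 := by
    intro v hv
    by_contra hpos
    push_neg at hpos
    have ht : (u / f v + 1) • v ∈ K A B :=
      K_cone A B hv (by positivity)
    have h2 := hfK _ (subset_closure ht)
    rw [_root_.map_smul, smul_eq_mul] at h2
    rw [add_mul, div_mul_cancel₀ _ (ne_of_gt hpos), one_mul] at h2
    linarith
  -- the separating matrix
  set Hm : Matrix (Fin n ⊕ Fin n) (Fin n ⊕ Fin n) ℝ :=
    Matrix.of fun i j => f (Pi.single (i, j) (1:ℝ)) with hHm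
  have hfeval : ∀ M, f (m2v M) = ip M Hm := by
    intro M
    rw [feval]
    rfl
  -- quadratic form of Hm is nonpositive
  have hHquad : ∀ x : Fin n ⊕ Fin n → ℝ, x ⬝ᵥ Hm *ᵥ x ≤ 0 := by
    intro x
    have hmemK : m2v (vecMulVec x x) ∈ K A B := by
      refine ⟨0, 0, vecMulVec x x, fun _ => le_refl _, fun _ => le_refl _, psd_vecMulVec x, ?_⟩
      rw [Lm_zero, zero_add]
    have := hfle _ hmemK
    rw [hfeval] at this
    rw [← ip_vecMulVec]
    exact this
  set G : Matrix (Fin n ⊕ Fin n) (Fin n ⊕ Fin n) ℝ := (-(1/2:ℝ)) • (Hm + Hmᵀ) with hG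
  have hGherm : G.IsHermitian := by
    rw [IsHermitian, conjTranspose_eq_transpose_of_trivial, hG, transpose_smul, transpose_add,
      transpose_transpose, add_comm Hmᵀ Hm]
  have hGpsd : G.PosSemidef := by
    refine PosSemidef.of_dotProduct_mulVec_nonneg hGherm fun x => ?_
    have hstar : (star x : Fin n ⊕ Fin n → ℝ) = x := by funext i; simp
    rw [hstar, hG, smul_mulVec, dotProduct_smul, smul_eq_mul, add_mulVec, dotProduct_add,
      dot_transpose]
    nlinarith [hHquad x]
  -- trace of G is positive, so G ≠ 0
  have htr : ∑ i, Hm i i < -u := by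
    have := hfx
    rw [hfeval, ip_negOne] at this
    linarith
  have hGne : G ≠ 0 := by
    intro h0
    have : (∑ i, G i i) = 0 := by rw [h0]; simp
    rw [hG] at this
    simp only [Matrix.smul_apply, Matrix.add_apply, transpose_apply, smul_eq_mul] at this
    have hsum : ∑ i, (-(1/2:ℝ)) * (Hm i i + Hm i i) = -∑ i, Hm i i := by
      rw [← Finset.sum_neg_distrib]
      exact Finset.sum_congr rfl fun i _ => by ring
    rw [hsum] at this
    have : ∑ i, Hm i i = 0 := by linarith
    linarith
  -- coefficient inequalities
  have hcp : ∀ i, cp A B Hm i ≤ 0 := by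
    intro i
    have hmemK : m2v (Lm A B (Pi.single i 1) 0) ∈ K A B := by
      refine ⟨Pi.single i 1, 0, 0, ?_, fun _ => le_refl _, Matrix.PosSemidef.zero, ?_⟩
      · intro j
        by_cases hji : j = i
        · subst hji; rw [Pi.single_eq_same]; norm_num
        · rw [Pi.single_eq_of_ne hji]
      · rw [add_zero]
    have := hfle _ hmemK
    rw [hfeval, ip_Lm] at this
    have hzero : (∑ j, (0 : Fin n → ℝ) j * cq Hm j) = 0 := by simp
    have hone : (∑ j, (Pi.single i 1 : Fin n → ℝ) j * cp A B Hm j) = cp A B Hm i := by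
      rw [Finset.sum_eq_single i]
      · rw [Pi.single_eq_same, one_mul]
      · intro b _ hb
        rw [Pi.single_eq_of_ne hb, zero_mul]
      · intro hi
        exact absurd (Finset.mem_univ i) hi
    rw [hzero, hone] at this
    linarith
  have hcq : ∀ i, cq Hm i ≤ 0 := by
    intro i
    have hmemK : m2v (Lm A B 0 (Pi.single i 1)) ∈ K A B := by
      refine ⟨0, Pi.single i 1, 0, fun _ => le_refl _, ?_, Matrix.PosSemidef.zero, ?_⟩
      · intro j
        by_cases hji : j = i
        · subst hji; rw [Pi.single_eq_same]; norm_num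
        · rw [Pi.single_eq_of_ne hji]
      · rw [add_zero]
    have := hfle _ hmemK
    rw [hfeval, ip_Lm] at this
    have hzero : (∑ j, (0 : Fin n → ℝ) j * cp A B Hm j) = 0 := by simp
    have hone : (∑ j, (Pi.single i 1 : Fin n → ℝ) j * cq Hm j) = cq Hm i := by
      rw [Finset.sum_eq_single i]
      · rw [Pi.single_eq_same, one_mul]
      · intro b _ hb
        rw [Pi.single_eq_of_ne hb, zero_mul]
      · intro hi
        exact absurd (Finset.mem_univ i) hi
    rw [hzero, hone] at this
    linarith
  -- assemble the blocks of G
  have hGsym : G.toBlocks₂₁ = (G.toBlocks₁₂)ᵀ := by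
    ext i j
    have := congrFun (congrFun hGherm.eq (Sum.inr i)) (Sum.inl j)
    rw [conjTranspose_eq_transpose_of_trivial] at this
    exact this.symm
  have hGblocks : fromBlocks G.toBlocks₁₁ G.toBlocks₁₂ (G.toBlocks₁₂)ᵀ G.toBlocks₂₂ = G := by
    rw [← hGsym, fromBlocks_toBlocks]
  obtain ⟨i, hi⟩ := h G.toBlocks₁₁ G.toBlocks₁₂ G.toBlocks₂₂
    (by rw [hGblocks]; exact hGpsd)
    (by rw [hGblocks]; exact hGne)
    (by
      intro i
      rw [show G.toBlocks₂₂ = ((-(1/2:ℝ)) • (Hm + Hmᵀ)).toBlocks₂₂ from by rw [hG],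
        show G.toBlocks₁₁ = ((-(1/2:ℝ)) • (Hm + Hmᵀ)).toBlocks₁₁ from by rw [hG]]
      exact (cqG Hm i).mpr (hcq i))
  rw [show G.toBlocks₁₁ = ((-(1/2:ℝ)) • (Hm + Hmᵀ)).toBlocks₁₁ from by rw [hG],
    show G.toBlocks₁₂ = ((-(1/2:ℝ)) • (Hm + Hmᵀ)).toBlocks₁₂ from by rw [hG],
    cpG A B Hm i] at hi
  nlinarith [hcp i]

end DRA

open DRA in
theorem diag_riccati_sufficient (n : ℕ) (A B : Matrix (Fin n) (Fin n) ℝ)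
    (h : ∀ H11 H12 H22 : Matrix (Fin n) (Fin n) ℝ,
      (Matrix.fromBlocks H11 H12 H12ᵀ H22).PosSemidef →
      Matrix.fromBlocks H11 H12 H12ᵀ H22 ≠ 0 →
      (∀ i, H22 i i ≤ H11 i i) →
      ∃ i, (A * H11 + B * H12ᵀ) i i < 0) :
    ∃ p q : Fin n → ℝ, (∀ i, 0 < p i) ∧ (∀ i, 0 < q i) ∧
      (-(Aᵀ * Matrix.diagonal p + Matrix.diagonal p * A + Matrix.diagonal q +
        Matrix.diagonal p * B * (Matrix.diagonal q)⁻¹ * Bᵀ * Matrix.diagonal p)).PosDef := by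
  by_cases hmem : m2v (-1 : Matrix (Fin n ⊕ Fin n) (Fin n ⊕ Fin n) ℝ) ∈ closure (K A B)
  · exact caseA A B hmem
  · exact absurd (caseB A B h hmem) not_false
end

section
/- Let A ∈ ℝ^{n×n} be Metzler and Hurwitz. Then for every non-zero vector v ∈ ℝ^n there exists an index i such that v_i (A v)_i < 0. -/
open Matrix Filter

section
attribute [local instance] Matrix.linftyOpNormedRing Matrix.linftyOpNormedAlgebra

theorem metzler_hurwitz_neg_component (n : ℕ) (A : Matrix (Fin n) (Fin n) ℝ)
    (hMetzler : ∀ i j, i ≠ j → 0 ≤ A i j)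
    (hHurwitz : ∀ μ ∈ spectrum ℂ (A.map Complex.ofReal), μ.re < 0) :
    ∀ v : Fin n → ℝ, v ≠ 0 → ∃ i, v i * (A.mulVec v) i < 0 := by
  intro v hv
  by_contra hcon
  push_neg at hcon
  classical
  -- n ≠ 0
  rcases Nat.eq_zero_or_pos n with hn | hn
  · exact hv (funext fun i => absurd i.2 (by omega))
  haveI : Nonempty (Fin n) := ⟨⟨0, hn⟩⟩
  -- the absolute value vector
  set w : Fin n → ℝ := fun i => |v i| with hwdef
  have hw0 : ∀ i, 0 ≤ w i := fun i => abs_nonneg _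
  obtain ⟨j₁, hj₁⟩ := Function.ne_iff.mp hv
  have hwj₁ : 0 < w j₁ := abs_pos.mpr (by simpa using hj₁)
  -- A *ᵥ w is entrywise nonnegative
  have claim : ∀ (i : Fin n) (u : Fin n → ℝ), (∀ j, 0 ≤ u j) → u i = 0 → 0 ≤ A.mulVec u i := by
    intro i u hu hui
    have : A.mulVec u i = ∑ j, A i j * u j := by
      simp [Matrix.mulVec, dotProduct]
    rw [this]
    refine Finset.sum_nonneg fun j _ => ?_
    rcases eq_or_ne j i with rfl | hne
    · simp [hui]
    · exact mul_nonneg (hMetzler i j (Ne.symm hne)) (hu j)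
  have hAw : ∀ i, 0 ≤ A.mulVec w i := by
    intro i
    rcases lt_trichotomy (v i) 0 with h | h | h
    · have hAv : A.mulVec v i ≤ 0 := by nlinarith [hcon i]
      have hdec : w = -v + (w + v) := by abel
      have h2 : 0 ≤ A.mulVec (w + v) i := by
        refine claim i _ (fun j => ?_) ?_
        · simp only [hwdef, Pi.add_apply]; linarith [neg_abs_le (v j)]
        · simp [hwdef, abs_of_neg h, Pi.add_apply]
      have heq : A.mulVec w i = -(A.mulVec v i) + A.mulVec (w + v) i := by
        conv_lhs => rw [hdec]
        rw [Matrix.mulVec_add, Matrix.mulVec_neg]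
        simp
      linarith
    · exact claim i w hw0 (by simp [hwdef, h])
    · have hAv : 0 ≤ A.mulVec v i := by nlinarith [hcon i]
      have hdec : w = v + (w - v) := by abel
      have h2 : 0 ≤ A.mulVec (w - v) i := by
        refine claim i _ (fun j => ?_) ?_
        · simp only [hwdef, Pi.sub_apply]; linarith [le_abs_self (v j)]
        · simp [hwdef, abs_of_pos h, Pi.sub_apply]
      have heq : A.mulVec w i = A.mulVec v i + A.mulVec (w - v) i := by
        conv_lhs => rw [hdec]
        rw [Matrix.mulVec_add]
        simp
      linarith
  -- spectral set-up
  set B : Matrix (Fin n) (Fin n) ℂ := A.map Complex.ofReal with hBdef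
  obtain ⟨μ₀, hμ₀mem, hμ₀max⟩ :=
    (spectrum.isCompact B).exists_isMaxOn (spectrum.nonempty B)
      (Complex.continuous_re.continuousOn)
  set δ : ℝ := -μ₀.re with hδdef
  have hδ : 0 < δ := by have := hHurwitz μ₀ hμ₀mem; simp [hδdef]; linarith
  set R : ℝ := ‖B‖ with hRdef
  have hR0 : 0 ≤ R := norm_nonneg _
  set α : ℝ := 1 + R ^ 2 / δ + ∑ i, |A i i| with hαdef
  have hα1 : 1 ≤ α := by
    have h1 : 0 ≤ R ^ 2 / δ := div_nonneg (sq_nonneg _) hδ.le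
    have h2 : 0 ≤ ∑ i, |A i i| := Finset.sum_nonneg fun i _ => abs_nonneg _
    simp [hαdef]; linarith
  have hα0 : 0 < α := by linarith
  have hαδ : R ^ 2 ≤ α * δ := by
    have h2 : 0 ≤ ∑ i, |A i i| := Finset.sum_nonneg fun i _ => abs_nonneg _
    have : R ^ 2 / δ ≤ α := by simp [hαdef]; linarith
    calc R ^ 2 = R ^ 2 / δ * δ := by field_simp
      _ ≤ α * δ := by nlinarith
  have hαdiag : ∀ i, 0 ≤ A i i + α := by
    intro i
    have h1 : |A i i| ≤ ∑ j, |A j j| :=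
      Finset.single_le_sum (f := fun j => |A j j|) (fun j _ => abs_nonneg _) (Finset.mem_univ i)
    have h2 : 0 ≤ R ^ 2 / δ := div_nonneg (sq_nonneg _) hδ.le
    have := neg_abs_le (A i i)
    simp [hαdef]; linarith
  -- the nonnegative matrix M
  set M : Matrix (Fin n) (Fin n) ℝ := A + α • (1 : Matrix (Fin n) (Fin n) ℝ) with hMdef
  have hM0 : ∀ i j, 0 ≤ M i j := by
    intro i j
    rcases eq_or_ne i j with rfl | hne
    · simpa [hMdef, Matrix.add_apply, Matrix.one_apply] using hαdiag i
    · simpa [hMdef, Matrix.add_apply, Matrix.one_apply, hne] using hMetzler i j hne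
  have hMw : ∀ i, α * w i ≤ M.mulVec w i := by
    intro i
    have : M.mulVec w = A.mulVec w + α • w := by
      simp [hMdef, Matrix.add_mulVec, Matrix.smul_mulVec]
    rw [this]
    have := hAw i
    simp only [Pi.add_apply, Pi.smul_apply, smul_eq_mul]
    linarith
  -- monotonicity of mulVec for nonneg matrix
  have hmono : ∀ (x y : Fin n → ℝ), (∀ j, x j ≤ y j) → ∀ i, M.mulVec x i ≤ M.mulVec y i := by
    intro x y hxy i
    simp only [Matrix.mulVec, dotProduct]
    exact Finset.sum_le_sum fun j _ => mul_le_mul_of_nonneg_left (hxy j) (hM0 i j)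
  -- power bound
  have hpow : ∀ (k : ℕ) (i : Fin n), α ^ k * w i ≤ (M ^ k).mulVec w i := by
    intro k
    induction k with
    | zero => intro i; simp [Matrix.one_mulVec]
    | succ k ih =>
      intro i
      have h1 : (M ^ (k + 1)).mulVec w = M.mulVec ((M ^ k).mulVec w) := by
        rw [pow_succ', ← Matrix.mulVec_mulVec]
      rw [h1]
      have h2 : ∀ j, (α ^ k • w) j ≤ (M ^ k).mulVec w j := fun j => by
        simpa using ih j
      have h3 : M.mulVec (α ^ k • w) i ≤ M.mulVec ((M ^ k).mulVec w) i := hmono _ _ h2 i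
      have h4 : M.mulVec (α ^ k • w) i = α ^ k * M.mulVec w i := by
        simp [Matrix.mulVec_smul]
      have h5 : α ^ (k + 1) * w i ≤ α ^ k * M.mulVec w i := by
        have := hMw i
        have hαk : (0:ℝ) ≤ α ^ k := pow_nonneg hα0.le k
        calc α ^ (k + 1) * w i = α ^ k * (α * w i) := by ring
          _ ≤ α ^ k * M.mulVec w i := by nlinarith
      linarith [h4 ▸ h3]
  -- norm lower bound
  obtain ⟨i₀, hi₀⟩ := Finite.exists_max w
  have hwi₀ : 0 < w i₀ := lt_of_lt_of_le hwj₁ (hi₀ j₁)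
  have hwnorm : ‖w‖ ≤ w i₀ := by
    rw [pi_norm_le_iff_of_nonneg hwi₀.le]
    intro i
    rw [Real.norm_of_nonneg (hw0 i)]
    exact hi₀ i
  have hnormpow : ∀ k : ℕ, α ^ k ≤ ‖M ^ k‖ := by
    intro k
    have h1 : α ^ k * w i₀ ≤ (M ^ k).mulVec w i₀ := hpow k i₀
    have h2 : (M ^ k).mulVec w i₀ ≤ ‖(M ^ k).mulVec w‖ :=
      le_trans (le_abs_self _) (by simpa [Real.norm_eq_abs] using norm_le_pi_norm ((M ^ k).mulVec w) i₀)
    have h3 : ‖(M ^ k).mulVec w‖ ≤ ‖M ^ k‖ * ‖w‖ := Matrix.linfty_opNorm_mulVec _ _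
    have h4 : ‖M ^ k‖ * ‖w‖ ≤ ‖M ^ k‖ * w i₀ :=
      mul_le_mul_of_nonneg_left hwnorm (norm_nonneg _)
    have : α ^ k * w i₀ ≤ ‖M ^ k‖ * w i₀ := by linarith
    exact le_of_mul_le_mul_right (by linarith) hwi₀
  -- complex matrix
  set Mc : Matrix (Fin n) (Fin n) ℂ := M.map Complex.ofReal with hMcdef
  have hMcpow : ∀ k : ℕ, ‖Mc ^ k‖₊ = ‖M ^ k‖₊ := by
    intro k
    have h1 : Mc ^ k = (M ^ k).map Complex.ofReal := by
      exact (map_pow (Complex.ofRealHom.mapMatrix) M k).symm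
    rw [h1]
    simp [Matrix.linfty_opNNNorm_def, Matrix.map_apply]
  -- lower bound on spectral radius
  have hgel := spectrum.pow_nnnorm_pow_one_div_tendsto_nhds_spectralRadius Mc
  have hlow : ENNReal.ofReal α ≤ spectralRadius ℂ Mc := by
    refine ge_of_tendsto hgel ?_
    filter_upwards [eventually_ge_atTop 1] with k hk
    have h1 : ENNReal.ofReal (α ^ k) ≤ (‖Mc ^ k‖₊ : ENNReal) := by
      rw [hMcpow k, ← ENNReal.ofReal_coe_nnreal, coe_nnnorm]
      exact ENNReal.ofReal_le_ofReal (hnormpow k)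
    have h2 : ENNReal.ofReal (α ^ k) = (ENNReal.ofReal α) ^ k := ENNReal.ofReal_pow hα0.le k
    have h3 := ENNReal.rpow_le_rpow h1 (by positivity : (0:ℝ) ≤ 1 / k)
    have h4 : (ENNReal.ofReal (α ^ k)) ^ (1 / k : ℝ) = ENNReal.ofReal α := by
      rw [h2, ← ENNReal.rpow_natCast, ← ENNReal.rpow_mul]
      rw [mul_one_div_cancel (Nat.cast_ne_zero.mpr (Nat.one_le_iff_ne_zero.mp hk) : (k:ℝ) ≠ 0), ENNReal.rpow_one]
    calc ENNReal.ofReal α = (ENNReal.ofReal (α ^ k)) ^ (1 / k : ℝ) := h4.symm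
      _ ≤ (‖Mc ^ k‖₊ : ENNReal) ^ (1 / k : ℝ) := h3
  -- upper bound on spectral radius
  have hδR : δ ≤ R := by
    have h1 : ‖μ₀‖ ≤ R := spectrum.norm_le_norm_of_mem hμ₀mem
    have h2 : |μ₀.re| ≤ ‖μ₀‖ := by
      exact Complex.abs_re_le_norm μ₀
    have := neg_abs_le μ₀.re
    simp only [hδdef]; linarith
  have hδα : δ < α := by
    have hRdiv : R ≤ R ^ 2 / δ := by
      rw [le_div_iff₀ hδ]; nlinarith
    have hsum : 0 ≤ ∑ i, |A i i| := Finset.sum_nonneg fun i _ => abs_nonneg _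
    simp only [hαdef]; linarith
  have hr2 : 0 ≤ α ^ 2 - α * δ := by
    have h := mul_nonneg hα0.le (sub_nonneg.mpr hδα.le)
    calc (0:ℝ) ≤ α * (α - δ) := h
      _ = α ^ 2 - α * δ := by ring
  set r : ℝ := Real.sqrt (α ^ 2 - α * δ) with hrdef
  have hrα : r < α := by
    have h1 : α ^ 2 - α * δ < α ^ 2 := by nlinarith
    calc r < Real.sqrt (α ^ 2) := Real.sqrt_lt_sqrt hr2 h1
      _ = α := by rw [Real.sqrt_sq hα0.le]
  have hshift : Mc = B + (α : ℂ) • (1 : Matrix (Fin n) (Fin n) ℂ) := by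
    ext i j
    rcases eq_or_ne i j with rfl | hne
    · simp [hMcdef, hMdef, hBdef, Matrix.map_apply, Matrix.add_apply, Matrix.one_apply]
    · simp [hMcdef, hMdef, hBdef, Matrix.map_apply, Matrix.add_apply, Matrix.one_apply, hne]
  have hspecMc : ∀ μ ∈ spectrum ℂ Mc, μ - α ∈ spectrum ℂ B := by
    intro μ hμ
    rw [spectrum.mem_iff] at hμ ⊢
    intro hcontra
    apply hμ
    have : (algebraMap ℂ (Matrix (Fin n) (Fin n) ℂ)) μ - Mc
        = (algebraMap ℂ (Matrix (Fin n) (Fin n) ℂ)) (μ - α) - B := by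
      rw [hshift, Algebra.algebraMap_eq_smul_one, Algebra.algebraMap_eq_smul_one, sub_smul]
      abel
    rw [this]
    exact hcontra
  have hup : spectralRadius ℂ Mc ≤ ENNReal.ofReal r := by
    rw [spectralRadius]
    refine iSup₂_le fun μ hμ => ?_
    have hν := hspecMc μ hμ
    set ν : ℂ := μ - α with hνdef
    have hνre : ν.re ≤ -δ := by
      have h := hμ₀max hν
      simp only [Set.mem_setOf_eq] at h
      simp only [hδdef]; linarith
    have hνR : ‖ν‖ ≤ R := spectrum.norm_le_norm_of_mem hν
    have hμν : μ = ν + (α : ℂ) := by simp [hνdef]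
    have hμre : μ.re = ν.re + α := by rw [hμν]; simp
    have hμim : μ.im = ν.im := by rw [hμν]; simp
    have hνsq : ν.re ^ 2 + ν.im ^ 2 ≤ R ^ 2 := by
      have h1 : ν.re ^ 2 + ν.im ^ 2 = ‖ν‖ ^ 2 := by
        rw [Complex.sq_norm, Complex.normSq_apply]; ring
      rw [h1]
      exact pow_le_pow_left₀ (norm_nonneg ν) hνR 2
    have hμsq : μ.re ^ 2 + μ.im ^ 2 ≤ α ^ 2 - α * δ := by
      rw [hμre, hμim]
      have e1 : α * ν.re ≤ α * (-δ) := mul_le_mul_of_nonneg_left hνre hα0.le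
      have e2 : (ν.re + α) ^ 2 + ν.im ^ 2 = (ν.re ^ 2 + ν.im ^ 2) + 2 * (α * ν.re) + α ^ 2 := by
        ring
      rw [e2]
      linarith [hνsq, hαδ]
    have hμnorm : ‖μ‖ ≤ r := by
      rw [hrdef]
      rw [Real.le_sqrt (norm_nonneg _) hr2]
      have : ‖μ‖ ^ 2 = μ.re ^ 2 + μ.im ^ 2 := by
        rw [Complex.sq_norm, Complex.normSq_apply]; ring
      linarith [this ▸ hμsq]
    rw [← ENNReal.ofReal_coe_nnreal, coe_nnnorm]
    exact ENNReal.ofReal_le_ofReal hμnorm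
  have : ENNReal.ofReal α ≤ ENNReal.ofReal r := le_trans hlow hup
  have : α ≤ r := by
    have hr0 : 0 ≤ r := Real.sqrt_nonneg _
    exact (ENNReal.ofReal_le_ofReal_iff hr0).mp this
  linarith

end

example (n : ℕ) (A : Matrix (Fin n) (Fin n) ℝ)
    (hMetzler : ∀ i j, i ≠ j → 0 ≤ A i j)
    (hHurwitz : ∀ μ ∈ spectrum ℂ (A.map Complex.ofReal), μ.re < 0) :
    ∀ v : Fin n → ℝ, v ≠ 0 → ∃ i, v i * (A.mulVec v) i < 0 :=
  metzler_hurwitz_neg_component n A hMetzler hHurwitz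
end

section
/- Let A ∈ ℝ^{n×n} be Metzler. Then A is Hurwitz if and only if there exists a vector v with all entries strictly positive such that A v has all entries strictly negative. -/
open Matrix

section Aux

attribute [local instance] Matrix.linftyOpNormedRing Matrix.linftyOpNormedAlgebra

variable {n : ℕ}

/-- entry evaluation as a continuous linear map -/
noncomputable def entryCLM (n : ℕ) (i j : Fin n) : Matrix (Fin n) (Fin n) ℝ →L[ℝ] ℝ :=
  LinearMap.toContinuousLinearMap
    { toFun := fun M => M i j
      map_add' := fun _ _ => rfl
      map_smul' := fun _ _ => rfl }

lemma entryCLM_apply (i j : Fin n) (M : Matrix (Fin n) (Fin n) ℝ) :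
    entryCLM n i j M = M i j := rfl

lemma entNN_mul {M N : Matrix (Fin n) (Fin n) ℝ} (hM : ∀ i j, 0 ≤ M i j)
    (hN : ∀ i j, 0 ≤ N i j) : ∀ i j, 0 ≤ (M * N) i j := by
  intro i j
  rw [Matrix.mul_apply]
  exact Finset.sum_nonneg fun k _ => mul_nonneg (hM i k) (hN k j)

lemma entNN_pow {M : Matrix (Fin n) (Fin n) ℝ} (hM : ∀ i j, 0 ≤ M i j) (k : ℕ) :
    ∀ i j, 0 ≤ (M ^ k) i j := by
  induction k with
  | zero => intro i j; simp [Matrix.one_apply]; split <;> norm_num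
  | succ m ih =>
    rw [pow_succ]
    exact entNN_mul ih hM

lemma entNN_tsum {f : ℕ → Matrix (Fin n) (Fin n) ℝ} (hf : Summable f)
    (h : ∀ k i j, 0 ≤ f k i j) : ∀ i j, 0 ≤ (∑' k, f k) i j := by
  intro i j
  have : (∑' k, f k) i j = ∑' k, f k i j := by
    simpa [entryCLM_apply] using (entryCLM n i j).map_tsum hf
  rw [this]
  exact tsum_nonneg fun k => h k i j

lemma entNN_geom {x : Matrix (Fin n) (Fin n) ℝ} (hx : ‖x‖ < 1)
    (h : ∀ i j, 0 ≤ x i j) : ∀ i j, 0 ≤ (∑' k, x ^ k) i j :=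
  entNN_tsum (summable_geometric_of_norm_lt_one hx) fun k => entNN_pow h k

lemma ring_inverse_eq_of {R : Type*} [Ring R] {M W : R} (hM : IsUnit M)
    (h : M * W = 1) : Ring.inverse M = W := by
  have := congrArg (fun z => Ring.inverse M * z) h
  simpa [← mul_assoc, Ring.inverse_mul_cancel M hM] using this.symm

end Aux

section Main

attribute [local instance] Matrix.linftyOpNormedRing Matrix.linftyOpNormedAlgebra

theorem metzler_hurwitz_iff_pos_vector (n : ℕ) (A : Matrix (Fin n) (Fin n) ℝ)
    (hMetzler : ∀ i j, i ≠ j → 0 ≤ A i j) :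
    (∀ μ ∈ spectrum ℂ (A.map Complex.ofReal), μ.re < 0) ↔
    (∃ v : Fin n → ℝ, (∀ i, 0 < v i) ∧ (∀ i, (A.mulVec v) i < 0)) := by
  constructor
  · -- Hurwitz → existence of v
    intro hH
    -- every t ≥ 0 gives an invertible matrix t•1 - A
    have hUnit : ∀ t : ℝ, 0 ≤ t → IsUnit ((t • (1 : Matrix (Fin n) (Fin n) ℝ) - A)) := by
      intro t ht
      rw [Matrix.isUnit_iff_isUnit_det, isUnit_iff_ne_zero]
      intro hdet
      have hmap : ((t • (1 : Matrix (Fin n) (Fin n) ℝ) - A).map Complex.ofReal)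
          = (t : ℂ) • (1 : Matrix (Fin n) (Fin n) ℂ) - A.map Complex.ofReal := by
        ext i j
        simp only [Matrix.map_apply, Matrix.sub_apply, Matrix.smul_apply, Matrix.one_apply]
        by_cases h : i = j <;> simp [h]
      have hmem : (t : ℂ) ∈ spectrum ℂ (A.map Complex.ofReal) := by
        rw [spectrum.mem_iff, Algebra.algebraMap_eq_smul_one, Matrix.isUnit_iff_isUnit_det,
          isUnit_iff_ne_zero, not_not, ← hmap]
        have : ((t • (1 : Matrix (Fin n) (Fin n) ℝ) - A).map Complex.ofReal).det
            = ((t • (1 : Matrix (Fin n) (Fin n) ℝ) - A).map Complex.ofRealHom).det := rfl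
        rw [this, ← RingHom.mapMatrix_apply, ← RingHom.map_det, hdet, map_zero]
      have := hH _ hmem
      rw [Complex.ofReal_re] at this
      linarith
    -- nonnegative matrix B = A + s•1
    set s : ℝ := ∑ i, |A i i| with hs
    have hs0 : 0 ≤ s := Finset.sum_nonneg fun i _ => abs_nonneg _
    set B : Matrix (Fin n) (Fin n) ℝ := A + s • 1 with hBdef
    have hB : ∀ i j, 0 ≤ B i j := by
      intro i j
      by_cases h : i = j
      · subst h
        have h1 : |A i i| ≤ s := Finset.single_le_sum (f := fun i => |A i i|)
          (fun k _ => abs_nonneg _) (Finset.mem_univ i)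
        have : B i i = A i i + s := by simp [hBdef, Matrix.one_apply]
        rw [this]
        have := neg_abs_le (A i i)
        linarith
      · have : B i j = A i j := by simp [hBdef, Matrix.one_apply, h]
        rw [this]
        exact hMetzler i j h
    -- property P t : the resolvent at t is entrywise nonnegative
    set P : ℝ → Prop := fun t => ∀ i j,
      0 ≤ (Ring.inverse (t • (1 : Matrix (Fin n) (Fin n) ℝ) - A)) i j with hPdef
    -- base case: large t
    have hbase : ∀ t : ℝ, ‖B‖ < t + s → P t := by
      intro t h1
      have h2 : 0 < t + s := lt_of_le_of_lt (norm_nonneg B) h1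
      set c : ℝ := (t + s)⁻¹ with hc
      have hc0 : 0 < c := inv_pos.mpr h2
      set x : Matrix (Fin n) (Fin n) ℝ := c • B with hxdef
      have hx1 : ‖x‖ < 1 := by
        rw [hxdef, norm_smul, Real.norm_of_nonneg hc0.le]
        calc c * ‖B‖ < c * (t + s) := by exact mul_lt_mul_of_pos_left h1 hc0
        _ = 1 := inv_mul_cancel₀ h2.ne'
      have hM : t • (1 : Matrix (Fin n) (Fin n) ℝ) - A = (t + s) • ((1 : Matrix (Fin n) (Fin n) ℝ) - x) := by
        rw [smul_sub, hxdef, smul_smul, mul_inv_cancel₀ h2.ne', one_smul, hBdef,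
          add_smul]
        abel
      have hW : (t • (1 : Matrix (Fin n) (Fin n) ℝ) - A) * (c • ∑' k, x ^ k) = 1 := by
        rw [hM, Matrix.smul_mul, Matrix.mul_smul, smul_smul, mul_inv_cancel₀ h2.ne',
          one_smul, show (1 - x) * ∑' k, x ^ k = 1 from mul_neg_geom_series x hx1]
      have hu : IsUnit (t • (1 : Matrix (Fin n) (Fin n) ℝ) - A) := by
        rw [Matrix.isUnit_iff_isUnit_det]
        have := congrArg Matrix.det hW
        rw [Matrix.det_mul, Matrix.det_one] at this
        exact IsUnit.of_mul_eq_one _ this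
      intro i j
      rw [ring_inverse_eq_of hu hW]
      have := entNN_geom hx1 (fun i j => by
        rw [hxdef, Matrix.smul_apply, smul_eq_mul]
        exact mul_nonneg hc0.le (hB i j)) i j
      rw [Matrix.smul_apply, smul_eq_mul]
      exact mul_nonneg hc0.le this
    -- step: propagation downward
    have hstep : ∀ t t' : ℝ, 0 ≤ t' → t' ≤ t → 0 ≤ t → P t →
        (t - t') * ‖Ring.inverse (t • (1 : Matrix (Fin n) (Fin n) ℝ) - A)‖ < 1 → P t' := by
      intro t t' ht' htt' ht hPt hsmall
      set R : Matrix (Fin n) (Fin n) ℝ := Ring.inverse (t • (1 : Matrix (Fin n) (Fin n) ℝ) - A) with hRdef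
      set y : Matrix (Fin n) (Fin n) ℝ := (t - t') • R with hydef
      have hy1 : ‖y‖ < 1 := by
        rw [hydef, norm_smul, Real.norm_of_nonneg (by linarith)]
        exact hsmall
      have hyNN : ∀ i j, 0 ≤ y i j := by
        intro i j
        rw [hydef, Matrix.smul_apply, smul_eq_mul]
        exact mul_nonneg (by linarith) (hPt i j)
      have hR1 : (t • (1 : Matrix (Fin n) (Fin n) ℝ) - A) * R = 1 :=
        Ring.mul_inverse_cancel _ (hUnit t ht)
      have hfact : t' • (1 : Matrix (Fin n) (Fin n) ℝ) - A
          = (t • (1 : Matrix (Fin n) (Fin n) ℝ) - A) * ((1 : Matrix (Fin n) (Fin n) ℝ) - y) := by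
        rw [mul_sub, mul_one, hydef, Matrix.mul_smul, hR1, sub_smul]
        abel
      have hW : (t' • (1 : Matrix (Fin n) (Fin n) ℝ) - A) * ((∑' k, y ^ k) * R) = 1 := by
        rw [hfact, mul_assoc, ← mul_assoc ((1 : Matrix (Fin n) (Fin n) ℝ) - y),
          show (1 - y) * ∑' k, y ^ k = 1 from mul_neg_geom_series y hy1, one_mul, hR1]
      have hu : IsUnit (t' • (1 : Matrix (Fin n) (Fin n) ℝ) - A) := hUnit t' ht'
      intro i j
      rw [ring_inverse_eq_of hu hW]
      exact entNN_mul (entNN_geom hy1 hyNN) hPt i j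
    -- continuation down to 0
    have hP0 : P 0 := by
      set t₀ : ℝ := ‖B‖ + 1 with ht₀def
      have ht₀0 : 0 ≤ t₀ := by positivity
      have hPt₀ : P t₀ := hbase t₀ (by linarith)
      set S : Set ℝ := {t | 0 ≤ t ∧ t ≤ t₀ ∧ P t} with hSdef
      have hne : S.Nonempty := ⟨t₀, ht₀0, le_refl _, hPt₀⟩
      have hbdd : BddBelow S := ⟨0, fun x hx => hx.1⟩
      have hclosed : IsClosed S := by
        have hSet : S = Set.Icc (0:ℝ) t₀ ∩
            (fun t => Ring.inverse (t • (1 : Matrix (Fin n) (Fin n) ℝ) - A)) ⁻¹'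
            {M : Matrix (Fin n) (Fin n) ℝ | ∀ i j, 0 ≤ M i j} := by
          ext t
          simp only [hSdef, Set.mem_setOf_eq, Set.mem_inter_iff, Set.mem_Icc, Set.mem_preimage]
          tauto
        rw [hSet]
        apply ContinuousOn.preimage_isClosed_of_isClosed
        · intro t ht
          apply ContinuousAt.continuousWithinAt
          have h1 : ContinuousAt (fun t : ℝ => t • (1 : Matrix (Fin n) (Fin n) ℝ) - A) t := by
            fun_prop
          have h2 : ContinuousAt Ring.inverse (t • (1 : Matrix (Fin n) (Fin n) ℝ) - A) := by
            have hu := hUnit t ht.1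
            have := NormedRing.inverse_continuousAt hu.unit
            rwa [hu.unit_spec] at this
          exact ContinuousAt.comp (g := Ring.inverse)
            (f := fun s : ℝ => s • (1 : Matrix (Fin n) (Fin n) ℝ) - A) h2 h1
        · exact isClosed_Icc
        · have : {M : Matrix (Fin n) (Fin n) ℝ | ∀ i j, 0 ≤ M i j}
              = ⋂ i, ⋂ j, (entryCLM n i j) ⁻¹' Set.Ici (0:ℝ) := by
            ext M
            simp [entryCLM_apply]
          rw [this]
          exact isClosed_iInter fun i => isClosed_iInter fun j =>
            IsClosed.preimage (entryCLM n i j).continuous isClosed_Ici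
      have hτS : sInf S ∈ S := hclosed.csInf_mem hne hbdd
      set τ := sInf S with hτdef
      have hτ0 : τ = 0 := by
        by_contra hne0
        have hτpos : 0 < τ := lt_of_le_of_ne hτS.1 (Ne.symm hne0)
        set Rn : ℝ := ‖Ring.inverse (τ • (1 : Matrix (Fin n) (Fin n) ℝ) - A)‖ with hRn
        have hRn0 : 0 ≤ Rn := norm_nonneg _
        set δ : ℝ := min τ ((1 + Rn)⁻¹ / 2) with hδdef
        have hδpos : 0 < δ := lt_min hτpos (by positivity)
        have hδτ : δ ≤ τ := min_le_left _ _
        have hδR : δ * Rn < 1 := by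
          have h1 : δ ≤ (1 + Rn)⁻¹ / 2 := min_le_right _ _
          have h2 : (1 + Rn)⁻¹ / 2 * Rn < 1 := by
            have e : (1 + Rn)⁻¹ * (1 + Rn) = 1 := inv_mul_cancel₀ (by positivity)
            have e2 : 0 < (1 + Rn)⁻¹ := by positivity
            nlinarith
          calc δ * Rn ≤ (1 + Rn)⁻¹ / 2 * Rn := by nlinarith
          _ < 1 := h2
        have hP' : P (τ - δ) := by
          apply hstep τ (τ - δ) (by linarith) (by linarith) hτS.1 hτS.2.2
          rw [show τ - (τ - δ) = δ by ring]
          exact hδR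
        have hmem : τ - δ ∈ S := ⟨by linarith, by linarith [hτS.2.1], hP'⟩
        have := csInf_le hbdd hmem
        rw [← hτdef] at this
        linarith
      rw [hτ0] at hτS
      exact hτS.2.2
    -- extract the vector
    set G : Matrix (Fin n) (Fin n) ℝ :=
      Ring.inverse ((0:ℝ) • (1 : Matrix (Fin n) (Fin n) ℝ) - A) with hGdef
    have hG : ∀ i j, 0 ≤ G i j := hP0
    have hu0 := hUnit 0 le_rfl
    have hAG : (-A) * G = 1 := by
      have := Ring.mul_inverse_cancel _ hu0
      rw [← hGdef] at this
      simpa using this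
    have hGA : G * (-A) = 1 := by
      have := Ring.inverse_mul_cancel _ hu0
      rw [← hGdef] at this
      simpa using this
    refine ⟨fun i => ∑ j, G i j, ?_, ?_⟩
    · intro i
      rcases lt_or_eq_of_le (Finset.sum_nonneg fun j _ => hG i j) with h | h
      · exact h
      · exfalso
        have hz : ∀ j, G i j = 0 := by
          intro j
          have := (Finset.sum_eq_zero_iff_of_nonneg fun j _ => hG i j).mp h.symm
          exact this j (Finset.mem_univ j)
        have h1 : (G * (-A)) i i = 1 := by rw [hGA]; simp [Matrix.one_apply]
        rw [Matrix.mul_apply] at h1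
        simp [hz] at h1
    · intro i
      have : (A.mulVec fun i => ∑ j, G i j) i = ∑ k, (A * G) i k := by
        rw [Matrix.mulVec, dotProduct]
        simp_rw [Matrix.mul_apply, Finset.mul_sum]
        rw [Finset.sum_comm]
      rw [this]
      have hAG' : A * G = -1 := by
        have : A * G = -((-A) * G) := by simp
        rw [this, hAG]
      rw [hAG']
      have : ∑ k, (-1 : Matrix (Fin n) (Fin n) ℝ) i k = -1 := by
        simp [Matrix.neg_apply, Matrix.one_apply]
      rw [this]
      norm_num
  · -- existence of v → Hurwitz (Gershgorin-type argument)
    rintro ⟨v, hv, hAv⟩ μ hμ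
    set M : Matrix (Fin n) (Fin n) ℂ := A.map Complex.ofReal with hMdef
    have hnu : ¬ IsUnit (algebraMap ℂ (Matrix (Fin n) (Fin n) ℂ) μ - M) := spectrum.mem_iff.mp hμ
    rw [Algebra.algebraMap_eq_smul_one, Matrix.isUnit_iff_isUnit_det, isUnit_iff_ne_zero,
      not_not] at hnu
    obtain ⟨x, hx0, hxker⟩ := (Matrix.exists_mulVec_eq_zero_iff).mpr hnu
    have hx : M.mulVec x = μ • x := by
      have := congrArg (fun w => M.mulVec x + w) hxker
      simp only [Matrix.sub_mulVec, Matrix.smul_mulVec, Matrix.one_mulVec] at this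
      simpa using this.symm
    obtain ⟨j0, hj0⟩ : ∃ j, x j ≠ 0 := Function.ne_iff.mp hx0
    obtain ⟨i, -, hi⟩ := Finset.exists_max_image Finset.univ
      (fun j => ‖x j‖ / v j) ⟨j0, Finset.mem_univ j0⟩
    set c : ℝ := ‖x i‖ / v i with hc
    have hcpos : 0 < c := by
      have h1 : ‖x j0‖ / v j0 ≤ c := hi j0 (Finset.mem_univ j0)
      have h2 : 0 < ‖x j0‖ / v j0 :=
        div_pos (by simpa using hj0) (hv j0)
      linarith
    have hbound : ∀ j, ‖x j‖ ≤ c * v j := by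
      intro j
      have := hi j (Finset.mem_univ j)
      rw [div_le_iff₀ (hv j)] at this
      linarith [this]
    have hxi : ‖x i‖ = c * v i := by
      rw [hc, div_mul_cancel₀]
      exact (hv i).ne'
    have hxipos : 0 < ‖x i‖ := by
      rw [hxi]; exact mul_pos hcpos (hv i)
    -- row i of the eigen equation
    have hrow : μ * x i = ∑ j, (A i j : ℂ) * x j := by
      have := congrFun hx i
      simp only [Matrix.mulVec, dotProduct, Pi.smul_apply, smul_eq_mul] at this
      rw [← this]
      rfl
    have hsplit : (μ - (A i i : ℂ)) * x i = ∑ j ∈ Finset.univ.erase i, (A i j : ℂ) * x j := by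
      rw [sub_mul, hrow, ← Finset.add_sum_erase _ _ (Finset.mem_univ i)]
      ring
    have hnormle : ‖μ - (A i i : ℂ)‖ * ‖x i‖
        ≤ ∑ j ∈ Finset.univ.erase i, A i j * (c * v j) := by
      rw [← norm_mul, hsplit]
      calc ‖∑ j ∈ Finset.univ.erase i, (A i j : ℂ) * x j‖
          ≤ ∑ j ∈ Finset.univ.erase i, ‖(A i j : ℂ) * x j‖ :=
            norm_sum_le _ _
        _ ≤ ∑ j ∈ Finset.univ.erase i, A i j * (c * v j) := by
            apply Finset.sum_le_sum
            intro j hj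
            have hj' : j ≠ i := Finset.ne_of_mem_erase hj
            have hAij : 0 ≤ A i j := hMetzler i j (Ne.symm hj')
            rw [norm_mul, Complex.norm_real, Real.norm_of_nonneg hAij]
            exact mul_le_mul_of_nonneg_left (hbound j) hAij
    have hmv : (A.mulVec v) i = ∑ j, A i j * v j := by
      rw [Matrix.mulVec, dotProduct]
    have hsum : ∑ j ∈ Finset.univ.erase i, A i j * (c * v j)
        = c * ((A.mulVec v) i - A i i * v i) := by
      rw [hmv, ← Finset.sum_erase_eq_sub (Finset.mem_univ i), Finset.mul_sum]
      apply Finset.sum_congr rfl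
      intro j _
      ring
    have hkey : ‖μ - (A i i : ℂ)‖ * ‖x i‖ < -(A i i) * ‖x i‖ := by
      have h1 : ‖μ - (A i i : ℂ)‖ * ‖x i‖
          ≤ c * ((A.mulVec v) i - A i i * v i) := by rw [← hsum]; exact hnormle
      have h2 : c * ((A.mulVec v) i - A i i * v i) < c * (0 - A i i * v i) := by
        apply mul_lt_mul_of_pos_left _ hcpos
        have := hAv i
        linarith
      have h3 : c * (0 - A i i * v i) = -(A i i) * ‖x i‖ := by rw [hxi]; ring
      linarith
    have habs : ‖μ - (A i i : ℂ)‖ < -(A i i) :=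
      lt_of_mul_lt_mul_right (by linarith [hkey]) hxipos.le
    have hre : μ.re - A i i ≤ ‖μ - (A i i : ℂ)‖ := by
      have := Complex.re_le_norm (μ - (A i i : ℂ))
      simpa using this
    linarith

end Main
end

section
/- Let A ∈ ℝ^{n×n} be Metzler. Then A is Hurwitz if and only if there exists a diagonal positive definite matrix D with A^T D + D A negative definite. -/
open Matrix Filter Finset
open scoped NNReal ENNReal

variable {n : ℕ}



lemma spec_iff_eig (B : Matrix (Fin n) (Fin n) ℂ) (μ : ℂ) :
    μ ∈ spectrum ℂ B ↔ ∃ v, v ≠ 0 ∧ B *ᵥ v = μ • v := by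
  rw [spectrum.mem_iff, Matrix.isUnit_iff_isUnit_det, isUnit_iff_ne_zero, not_not,
    ← Matrix.exists_mulVec_eq_zero_iff]
  constructor
  · rintro ⟨v, hv, h⟩
    refine ⟨v, hv, ?_⟩
    have := h
    rw [sub_mulVec, sub_eq_zero] at this
    rw [← this]
    simp [Algebra.algebraMap_eq_smul_one, smul_mulVec]
  · rintro ⟨v, hv, h⟩
    refine ⟨v, hv, ?_⟩
    rw [sub_mulVec, h]
    simp [Algebra.algebraMap_eq_smul_one, smul_mulVec]

lemma spec_transpose (B : Matrix (Fin n) (Fin n) ℂ) :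
    spectrum ℂ Bᵀ = spectrum ℂ B := by
  ext μ
  rw [spectrum.mem_iff, spectrum.mem_iff, Matrix.isUnit_iff_isUnit_det,
    Matrix.isUnit_iff_isUnit_det]
  have : algebraMap ℂ (Matrix (Fin n) (Fin n) ℂ) μ - Bᵀ = (algebraMap ℂ _ μ - B)ᵀ := by
    simp [Algebra.algebraMap_eq_smul_one, transpose_smul]
  rw [this, Matrix.det_transpose]




lemma neg_posdef_of_symm_metzler (S : Matrix (Fin n) (Fin n) ℝ)
    (hsymm : Sᵀ = S) (hoff : ∀ i j, i ≠ j → 0 ≤ S i j)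
    (x : Fin n → ℝ) (hx : ∀ i, 0 < x i) (hSx : ∀ i, (S *ᵥ x) i < 0) :
    (-S).PosDef := by
  have hsymm' : ∀ i j, S j i = S i j := fun i j => by
    rw [← congrFun (congrFun hsymm j) i, transpose_apply]
  have hherm : S.IsHermitian := by
    ext i j
    simp only [conjTranspose_apply, star_trivial]
    exact hsymm' i j
  rw [posDef_iff_dotProduct_mulVec]
  constructor
  · exact hherm.neg
  · intro v hv
    simp only [star_trivial, neg_mulVec, dotProduct_neg, neg_pos]
    -- goal : v ⬝ᵥ S *ᵥ v < 0
    set u : Fin n → ℝ := fun i => v i / x i with hu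
    have hvu : ∀ i, v i = x i * u i := fun i => by
      rw [hu, mul_comm, div_mul_cancel₀ _ (hx i).ne']
    have key1 : v ⬝ᵥ S *ᵥ v ≤ ∑ i, u i ^ 2 * (x i * (S *ᵥ x) i) := by
      have step1 : v ⬝ᵥ S *ᵥ v ≤
          ∑ i, ∑ j, S i j * (x i * x j) * ((u i ^ 2 + u j ^ 2) / 2) := by
        rw [dotProduct, ]
        simp only [mulVec, dotProduct, Finset.mul_sum]
        refine Finset.sum_le_sum fun i _ => Finset.sum_le_sum fun j _ => ?_
        rw [hvu i, hvu j]
        rcases eq_or_ne i j with rfl | hij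
        · ring_nf; exact le_refl _
        · have h1 := hoff i j hij
          have h2 := (hx i).le
          have h3 := (hx j).le
          nlinarith [sq_nonneg (u i - u j), mul_nonneg h2 h3, mul_nonneg (mul_nonneg h1 h2) h3]
      refine step1.trans (le_of_eq ?_)
      have swap : ∑ i, ∑ j, S i j * (x i * x j) * (u j ^ 2)
          = ∑ i, ∑ j, S i j * (x i * x j) * (u i ^ 2) := by
        rw [Finset.sum_comm]
        refine Finset.sum_congr rfl fun i _ => Finset.sum_congr rfl fun j _ => ?_
        rw [hsymm' i j]
        ring
      have expand : ∀ i j, S i j * (x i * x j) * ((u i ^ 2 + u j ^ 2) / 2)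
          = (S i j * (x i * x j) * (u i ^ 2) + S i j * (x i * x j) * (u j ^ 2)) / 2 := by
        intro i j; ring
      simp only [expand, ← Finset.sum_div, Finset.sum_add_distrib, swap]
      rw [← two_mul]
      rw [mul_div_cancel_left₀ _ (two_ne_zero)]
      refine Finset.sum_congr rfl fun i _ => ?_
      simp only [mulVec, dotProduct, Finset.mul_sum]
      refine Finset.sum_congr rfl fun j _ => by ring
    have hterm : ∀ i, u i ^ 2 * (x i * (S *ᵥ x) i) ≤ 0 := fun i =>
      mul_nonpos_of_nonneg_of_nonpos (sq_nonneg _)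
        (mul_nonpos_of_nonneg_of_nonpos (hx i).le (hSx i).le)
    obtain ⟨i0, hi0⟩ : ∃ i, v i ≠ 0 := Function.ne_iff.mp hv
    have hu0 : u i0 ≠ 0 := by
      simp only [hu]
      exact div_ne_zero hi0 (hx i0).ne'
    have hstrict : u i0 ^ 2 * (x i0 * (S *ᵥ x) i0) < 0 :=
      mul_neg_of_pos_of_neg (by positivity) (mul_neg_of_pos_of_neg (hx i0) (hSx i0))
    calc v ⬝ᵥ S *ᵥ v ≤ ∑ i, u i ^ 2 * (x i * (S *ᵥ x) i) := key1
      _ < 0 := Finset.sum_neg' (fun i _ => hterm i) ⟨i0, Finset.mem_univ i0, hstrict⟩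




attribute [local instance] Matrix.linftyOpNormedRing Matrix.linftyOpNormedAlgebra

noncomputable instance : CompleteSpace (Matrix (Fin n) (Fin n) ℂ) :=
  by infer_instance

-- entry bound for linfty op norm
lemma entry_le_norm (B : Matrix (Fin n) (Fin n) ℂ) (i j : Fin n) : ‖B i j‖ ≤ ‖B‖ := by
  rw [Matrix.linfty_opNorm_def]
  have h1 : ‖B i j‖₊ ≤ ∑ k, ‖B i k‖₊ :=
    Finset.single_le_sum (f := fun k => ‖B i k‖₊) (fun k _ => zero_le) (Finset.mem_univ j)
  have h2 : (∑ k, ‖B i k‖₊) ≤ (Finset.univ : Finset (Fin n)).sup fun i => ∑ j, ‖B i j‖₊ :=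
    Finset.le_sup (f := fun i => ∑ j, ‖B i j‖₊) (Finset.mem_univ i)
  exact_mod_cast h1.trans h2

lemma geom_bound (B : Matrix (Fin n) (Fin n) ℂ)
    (hs : ∀ z ∈ spectrum ℂ B, ‖z‖ < 1) :
    ∃ c : ℝ, 0 ≤ c ∧ c < 1 ∧ ∃ N : ℕ, ∀ k ≥ N, ‖B ^ k‖ ≤ c ^ k := by
  have hfin := Matrix.finite_spectrum B
  -- r : ℝ≥0 bound on spectrum
  set T := hfin.toFinset with hT
  have hr : ∃ r : ℝ≥0, r < 1 ∧ ∀ z ∈ spectrum ℂ B, ‖z‖₊ ≤ r := by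
    refine ⟨T.sup (fun z => ‖z‖₊) , ?_, fun z hz => Finset.le_sup (hfin.mem_toFinset.mpr hz)⟩
    rw [Finset.sup_lt_iff (by norm_num : (⊥ : ℝ≥0) < 1)]
    intro z hz
    have := hs z (hfin.mem_toFinset.mp hz)
    rwa [← coe_nnnorm, NNReal.coe_lt_one] at this
  obtain ⟨r, hr1, hrb⟩ := hr
  have hρ : spectralRadius ℂ B ≤ (r : ℝ≥0∞) := by
    apply iSup₂_le
    intro z hz
    exact_mod_cast hrb z hz
  have hρ1 : spectralRadius ℂ B < 1 := lt_of_le_of_lt hρ (by exact_mod_cast hr1)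
  -- pick c strictly between
  obtain ⟨c, hc0, hc1⟩ : ∃ c : ℝ≥0, spectralRadius ℂ B < (c : ℝ≥0∞) ∧ c < 1 := by
    refine ⟨(r + 1) / 2, ?_, ?_⟩
    · apply lt_of_le_of_lt hρ
      rw [ENNReal.coe_lt_coe]
      rw [lt_div_iff₀ (by norm_num : (0:ℝ≥0) < 2)]
      calc r * 2 = r + r := by ring
        _ < r + 1 := by exact add_lt_add_right hr1 r
    · rw [div_lt_iff₀ (by norm_num : (0:ℝ≥0) < 2)]
      calc r + 1 < 1 + 1 := by exact add_lt_add_left hr1 1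
        _ = 1 * 2 := by ring
  have hG := spectrum.pow_nnnorm_pow_one_div_tendsto_nhds_spectralRadius B
  have hev : ∀ᶠ k : ℕ in atTop, (‖B ^ k‖₊ : ℝ≥0∞) ^ (1 / (k:ℝ)) < (c : ℝ≥0∞) :=
    hG.eventually_lt_const hc0
  rw [eventually_atTop] at hev
  obtain ⟨N, hN⟩ := hev
  refine ⟨c, c.coe_nonneg, by exact_mod_cast hc1, max N 1, fun k hk => ?_⟩
  have hk1 : 1 ≤ k := le_trans (le_max_right _ _) hk
  have hkN : N ≤ k := le_trans (le_max_left _ _) hk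
  have h := (hN k hkN).le
  have hkne : (k : ℝ) ≠ 0 := by positivity
  have h2 : ((‖B ^ k‖₊ : ℝ≥0∞) ^ (1 / (k:ℝ))) ^ (k : ℝ) ≤ ((c : ℝ≥0∞)) ^ (k:ℝ) :=
    ENNReal.rpow_le_rpow h (by positivity)
  rw [← ENNReal.rpow_mul, one_div, inv_mul_cancel₀ hkne, ENNReal.rpow_one] at h2
  rw [ENNReal.rpow_natCast, ← ENNReal.coe_pow, ENNReal.coe_le_coe] at h2
  calc ‖B ^ k‖ = ((‖B ^ k‖₊ : ℝ)) := rfl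
    _ ≤ ((c ^ k : ℝ≥0) : ℝ) := by exact_mod_cast h2
    _ = (c:ℝ) ^ k := by push_cast; rfl




lemma neumann (M : Matrix (Fin n) (Fin n) ℝ) (hnn : ∀ i j, 0 ≤ M i j)
    (c : ℝ) (hc0 : 0 ≤ c) (hc1 : c < 1) (N : ℕ)
    (hb : ∀ k ≥ N, ∀ i j, |(M ^ k) i j| ≤ c ^ k) :
    ∃ S : Matrix (Fin n) (Fin n) ℝ, (∀ i j, 0 ≤ S i j) ∧ (1 - M) * S = 1 := by
  classical
  have hsum : ∀ i j, Summable fun k => (M ^ k) i j := by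
    intro i j
    rw [← summable_nat_add_iff N]
    apply Summable.of_norm_bounded (g := fun k => c ^ N * c ^ k)
      ((summable_geometric_of_lt_one hc0 hc1).mul_left _)
    intro k
    rw [Real.norm_eq_abs]
    calc |(M ^ (k + N)) i j| ≤ c ^ (k + N) := hb (k + N) (Nat.le_add_left _ _) i j
      _ = c ^ N * c ^ k := by rw [pow_add]; ring
  have hpow : ∀ k i j, (0:ℝ) ≤ (M ^ k) i j := by
    intro k
    induction k with
    | zero =>
        intro i j
        by_cases h : i = j <;> simp [Matrix.one_apply, h]
    | succ m ih =>
        intro i j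
        rw [pow_succ, Matrix.mul_apply]
        exact Finset.sum_nonneg fun l _ => mul_nonneg (ih i l) (hnn l j)
  refine ⟨Matrix.of fun i j => ∑' k, (M ^ k) i j, ?_, ?_⟩
  · exact fun i j => tsum_nonneg fun k => hpow k i j
  · ext i j
    have hmul : ∀ l, (1 - M) i l * ∑' k, (M ^ k) l j = ∑' k, (1 - M) i l * (M ^ k) l j :=
      fun l => (tsum_mul_left).symm
    calc ((1 - M) * (of fun i j => ∑' k, (M ^ k) i j)) i j
        = ∑ l, (1 - M) i l * ∑' k, (M ^ k) l j := by
          simp [Matrix.mul_apply]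
      _ = ∑ l, ∑' k, (1 - M) i l * (M ^ k) l j := by
          exact Finset.sum_congr rfl fun l _ => hmul l
      _ = ∑' k, ∑ l, (1 - M) i l * (M ^ k) l j := by
          exact (Summable.tsum_finsetSum fun l _ => (hsum l j).mul_left _).symm
      _ = ∑' k, ((M ^ k) i j - (M ^ (k+1)) i j) := by
          refine tsum_congr fun k => ?_
          rw [← Matrix.mul_apply, sub_mul, one_mul, Matrix.sub_apply, ← pow_succ']
      _ = (1 : Matrix (Fin n) (Fin n) ℝ) i j := by
          rw [Summable.tsum_sub (hsum i j) ((summable_nat_add_iff 1).mpr (hsum i j)),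
            Summable.tsum_eq_zero_add (hsum i j)]
          simp



-- choose ε
lemma eps_choice (A : Matrix (Fin n) (Fin n) ℝ)
    (hH : ∀ μ ∈ spectrum ℂ (A.map Complex.ofReal), μ.re < 0) :
    ∃ ε : ℝ, 0 < ε ∧ (∀ i, 0 ≤ 1 + ε * A i i) ∧
      (∀ μ ∈ spectrum ℂ (A.map Complex.ofReal), ‖1 + (ε : ℂ) * μ‖ < 1) := by
  have hfin := Matrix.finite_spectrum (A.map Complex.ofReal)
  have h1 : ∀ μ ∈ spectrum ℂ (A.map Complex.ofReal),
      ∀ᶠ ε : ℝ in nhdsWithin 0 (Set.Ioi 0), ‖1 + (ε : ℂ) * μ‖ < 1 := by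
    intro μ hμ
    have hμre := hH μ hμ
    have hμne : μ ≠ 0 := fun h => by simp [h] at hμre
    have hb : 0 < -(2 * μ.re) / Complex.normSq μ := by
      apply div_pos (by linarith) (Complex.normSq_pos.mpr hμne)
    filter_upwards [Ioo_mem_nhdsGT hb] with ε hε
    obtain ⟨hε0, hεb⟩ := hε
    have hεb' : ε * Complex.normSq μ < -(2 * μ.re) :=
      (lt_div_iff₀ (Complex.normSq_pos.mpr hμne)).mp hεb
    have hεb2 : ε * (μ.re ^ 2 + μ.im ^ 2) < -(2 * μ.re) := by
      have : Complex.normSq μ = μ.re ^ 2 + μ.im ^ 2 := by rw [Complex.normSq_apply]; ring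
      linarith [this ▸ hεb']
    have hnsq : Complex.normSq μ = μ.re ^ 2 + μ.im ^ 2 := by
      rw [Complex.normSq_apply]; ring
    have h2 : ‖1 + (ε : ℂ) * μ‖ ^ 2 < 1 := by
      rw [Complex.sq_norm, Complex.normSq_apply]
      simp only [Complex.add_re, Complex.add_im, Complex.one_re, Complex.one_im,
        Complex.mul_re, Complex.mul_im, Complex.ofReal_re, Complex.ofReal_im]
      nlinarith [mul_lt_mul_of_pos_left hεb2 hε0, hε0]
    nlinarith [norm_nonneg (1 + (ε:ℂ)*μ)]
  have h2 : ∀ᶠ ε : ℝ in nhdsWithin 0 (Set.Ioi 0),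
      ∀ μ ∈ spectrum ℂ (A.map Complex.ofReal), ‖1 + (ε : ℂ) * μ‖ < 1 :=
    hfin.eventually_all.mpr h1
  have h3 : ∀ᶠ ε : ℝ in nhdsWithin 0 (Set.Ioi 0), ∀ i, 0 ≤ 1 + ε * A i i := by
    rw [Filter.eventually_all]
    intro i
    rcases le_or_gt 0 (A i i) with h | h
    · filter_upwards [self_mem_nhdsWithin] with ε hε
      have : (0:ℝ) < ε := hε
      nlinarith
    · filter_upwards [Ioo_mem_nhdsGT
        
        (one_div_pos.mpr (by linarith : (0:ℝ) < -A i i))] with ε hε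
      obtain ⟨hε0, hεb⟩ := hε
      have : ε * (-A i i) < 1 := (lt_div_iff₀ (by linarith)).mp hεb
      nlinarith
  obtain ⟨ε, hε⟩ := (h3.and (h2.and self_mem_nhdsWithin)).exists
  exact ⟨ε, hε.2.2, hε.1, hε.2.1⟩

lemma pos_solution (A : Matrix (Fin n) (Fin n) ℝ)
    (hMetzler : ∀ i j, i ≠ j → 0 ≤ A i j)
    (hH : ∀ μ ∈ spectrum ℂ (A.map Complex.ofReal), μ.re < 0) :
    ∃ x : Fin n → ℝ, (∀ i, 0 < x i) ∧ (∀ i, (A *ᵥ x) i < 0) := by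
  classical
  obtain ⟨ε, hε0, hdiag, hspec⟩ := eps_choice A hH
  set M : Matrix (Fin n) (Fin n) ℝ := 1 + ε • A with hM
  have hnn : ∀ i j, 0 ≤ M i j := by
    intro i j
    by_cases h : i = j
    · subst h
      simpa [hM, Matrix.one_apply] using hdiag i
    · have := hMetzler i j h
      simp only [hM, Matrix.add_apply, Matrix.one_apply_ne h, Matrix.smul_apply, smul_eq_mul,
        zero_add]
      positivity
  have hmap : M.map Complex.ofReal =
      algebraMap ℂ (Matrix (Fin n) (Fin n) ℂ) 1 + (ε:ℂ) • (A.map Complex.ofReal) := by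
    ext i j
    by_cases h : i = j <;>
      simp [hM, Matrix.map_apply, Matrix.one_apply, h, Algebra.algebraMap_eq_smul_one,
        Matrix.smul_apply, Matrix.add_apply]
  have hspecM : ∀ z ∈ spectrum ℂ (M.map Complex.ofReal), ‖z‖ < 1 := by
    intro z hz
    rw [hmap, ← spectrum.singleton_add_eq] at hz
    obtain ⟨w, hw, y, hy, hzy⟩ := Set.mem_add.mp hz
    rw [Set.mem_singleton_iff] at hw
    have hεu : ((ε:ℂ)) ≠ 0 := by exact_mod_cast hε0.ne'
    rw [show ((ε:ℂ)) • (A.map Complex.ofReal) = (Units.mk0 (ε:ℂ) hεu) • (A.map Complex.ofReal)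
      from rfl, spectrum.unit_smul_eq_smul] at hy
    obtain ⟨μ, hμ, hμy⟩ := hy
    have : z = 1 + (ε:ℂ) * μ := by
      rw [← hzy, hw, ← hμy]
      simp [Units.smul_def, smul_eq_mul]
    rw [this]
    exact hspec μ hμ
  obtain ⟨c, hc0, hc1, N, hNb⟩ := geom_bound (M.map Complex.ofReal) hspecM
  have hb : ∀ k ≥ N, ∀ i j, |(M ^ k) i j| ≤ c ^ k := by
    intro k hk i j
    have hpowmap : (M.map Complex.ofReal) ^ k = (M ^ k).map Complex.ofReal := by
      clear hk
      induction k with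
      | zero =>
          rw [pow_zero, pow_zero, Matrix.map_one _ Complex.ofReal_zero Complex.ofReal_one]
      | succ m ih =>
          rw [pow_succ, pow_succ, ih]
          ext a b
          simp only [Matrix.mul_apply, Matrix.map_apply]
          push_cast
          rfl
    have h1 : ‖((M ^ k).map Complex.ofReal) i j‖ ≤ ‖(M.map Complex.ofReal) ^ k‖ := by
      rw [hpowmap]
      exact entry_le_norm _ i j
    have h2 : ‖((M ^ k).map Complex.ofReal) i j‖ = |(M ^ k) i j| := by
      simp [Matrix.map_apply]
    rw [h2] at h1
    exact h1.trans (hNb k hk)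
  obtain ⟨S, hSnn, hSinv⟩ := neumann M hnn c hc0 hc1 N hb
  set x : Fin n → ℝ := S *ᵥ (fun _ => 1) with hx
  have hxnn : ∀ i, 0 ≤ x i := by
    intro i
    rw [hx]
    simp only [Matrix.mulVec, dotProduct, mul_one]
    exact Finset.sum_nonneg fun j _ => hSnn i j
  have hsolve : (1 - M) *ᵥ x = fun _ => 1 := by
    rw [hx, mulVec_mulVec, hSinv, one_mulVec]
  have hAx : ∀ i, (A *ᵥ x) i = -(1/ε) := by
    intro i
    have h1m : (1 : Matrix (Fin n) (Fin n) ℝ) - M = (-ε) • A := by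
      rw [hM]; ring_nf; rw [neg_smul]; abel
    have := congrFun hsolve i
    rw [h1m] at this
    have h2 : ((-ε) • A) *ᵥ x = (-ε) • (A *ᵥ x) := by
      rw [smul_mulVec]
    rw [h2] at this
    have h3 : (-ε) * (A *ᵥ x) i = 1 := this
    field_simp
    linarith [h3]
  have hAxneg : ∀ i, (A *ᵥ x) i < 0 := by
    intro i
    rw [hAx i]
    have : 0 < 1/ε := by positivity
    linarith
  refine ⟨x, fun i => ?_, hAxneg⟩
  rcases lt_or_eq_of_le (hxnn i) with h | h
  · exact h
  · exfalso
    have h0 : (A *ᵥ x) i = ∑ j, A i j * x j := rfl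
    have hge : 0 ≤ (A *ᵥ x) i := by
      rw [h0]
      apply Finset.sum_nonneg
      intro j _
      by_cases hij : j = i
      · subst hij
        rw [← h]
        simp
      · exact mul_nonneg (hMetzler i j (Ne.symm hij)) (hxnn j)
    exact absurd (hAxneg i) (not_lt.mpr hge)

theorem metzler_hurwitz_iff_diag_lyapunov (n : ℕ) (A : Matrix (Fin n) (Fin n) ℝ)
    (hMetzler : ∀ i j, i ≠ j → 0 ≤ A i j) :
    (∀ μ ∈ spectrum ℂ (A.map Complex.ofReal), μ.re < 0) ↔
    (∃ d : Fin n → ℝ, (∀ i, 0 < d i) ∧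
      (-(Aᵀ * Matrix.diagonal d + Matrix.diagonal d * A)).PosDef) := by
  constructor
  · intro hH
    -- forward direction
    obtain ⟨x, hx, hAx⟩ := pos_solution A hMetzler hH
    have hHT : ∀ μ ∈ spectrum ℂ (Aᵀ.map Complex.ofReal), μ.re < 0 := by
      intro μ hμ
      apply hH
      rwa [Matrix.transpose_map, spec_transpose] at hμ
    obtain ⟨y, hy, hAy⟩ := pos_solution Aᵀ (fun i j hij => hMetzler j i (Ne.symm hij)) hHT
    refine ⟨fun i => y i / x i, fun i => div_pos (hy i) (hx i), ?_⟩
    set d : Fin n → ℝ := fun i => y i / x i with hd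
    apply neg_posdef_of_symm_metzler _ ?_ ?_ x hx ?_
    · rw [transpose_add, transpose_mul, transpose_mul, transpose_transpose,
        diagonal_transpose]
      abel
    · intro i j hij
      rw [Matrix.add_apply, Matrix.mul_diagonal, Matrix.diagonal_mul]
      have h1 : 0 ≤ Aᵀ i j := hMetzler j i (Ne.symm hij)
      have h2 : 0 ≤ A i j := hMetzler i j hij
      have h3 : 0 < d i := div_pos (hy i) (hx i)
      have h4 : 0 < d j := div_pos (hy j) (hx j)
      positivity
    · intro i
      have hdm : ∀ (v : Fin n → ℝ) (i : Fin n), (Matrix.diagonal d *ᵥ v) i = d i * v i := by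
        intro v i
        simp [Matrix.mulVec, Matrix.diagonal_apply, dotProduct, ite_mul,
          Finset.sum_ite_eq]
      have hDx : Matrix.diagonal d *ᵥ x = y := by
        ext k
        rw [hdm, hd]
        exact div_mul_cancel₀ _ (hx k).ne'
      rw [add_mulVec, Pi.add_apply, ← Matrix.mulVec_mulVec, ← Matrix.mulVec_mulVec, hDx,
        hdm]
      have h6 : d i * (A *ᵥ x) i < 0 := mul_neg_of_pos_of_neg (div_pos (hy i) (hx i)) (hAx i)
      linarith [hAy i]
  · rintro ⟨d, hd, hP⟩ μ hμ
    classical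
    obtain ⟨v, hv, heig⟩ := (spec_iff_eig _ μ).mp hμ
    set X : Fin n → ℝ := fun i => (v i).re with hX
    set Y : Fin n → ℝ := fun i => (v i).im with hY
    have hAXi : ∀ (Z : Fin n → ℝ) (i : Fin n), (A *ᵥ Z) i = ∑ j, A i j * Z j := by
      intro Z i; rfl
    have hcomp : ∀ i, (∑ j, (A i j : ℂ) * v j) = μ * v i := by
      intro i
      have h := congrFun heig i
      have h1 : ((A.map Complex.ofReal) *ᵥ v) i = ∑ j, (A i j : ℂ) * v j := by
        simp [Matrix.mulVec, dotProduct, Matrix.map_apply]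
      rw [h1] at h
      simpa using h
    have heigX : ∀ i, (A *ᵥ X) i = μ.re * X i - μ.im * Y i := by
      intro i
      have hre := congrArg Complex.re (hcomp i)
      simp only [Complex.re_sum, Complex.mul_re, Complex.ofReal_re, Complex.ofReal_im,
        zero_mul, sub_zero] at hre
      rw [hAXi]
      simp only [hX, hY]
      linarith [hre]
    have heigY : ∀ i, (A *ᵥ Y) i = μ.im * X i + μ.re * Y i := by
      intro i
      have him := congrArg Complex.im (hcomp i)
      simp only [Complex.im_sum, Complex.mul_im, Complex.ofReal_re, Complex.ofReal_im,
        zero_mul, add_zero] at him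
      rw [hAXi]
      simp only [hX, hY]
      linarith [him]
    set S : Matrix (Fin n) (Fin n) ℝ := Aᵀ * Matrix.diagonal d + Matrix.diagonal d * A with hS
    have hquad : ∀ w : Fin n → ℝ, w ⬝ᵥ (S *ᵥ w) = 2 * ∑ i, d i * w i * (A *ᵥ w) i := by
      intro w
      rw [hS, add_mulVec, dotProduct_add]
      have h1 : w ⬝ᵥ ((Aᵀ * Matrix.diagonal d) *ᵥ w) = ∑ j, d j * w j * (A *ᵥ w) j := by
        calc w ⬝ᵥ ((Aᵀ * Matrix.diagonal d) *ᵥ w)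
            = ∑ i, ∑ j, w i * (A j i * d j * w j) := by
              simp [dotProduct, Matrix.mulVec, Matrix.mul_diagonal,
                Matrix.transpose_apply, Finset.mul_sum]
          _ = ∑ j, ∑ i, w i * (A j i * d j * w j) := Finset.sum_comm
          _ = ∑ j, d j * w j * (A *ᵥ w) j := by
              refine Finset.sum_congr rfl fun j _ => ?_
              rw [show (A *ᵥ w) j = ∑ i, A j i * w i from rfl, Finset.mul_sum]
              exact Finset.sum_congr rfl fun i _ => by ring
      have h2 : w ⬝ᵥ ((Matrix.diagonal d * A) *ᵥ w) = ∑ i, d i * w i * (A *ᵥ w) i := by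
        calc w ⬝ᵥ ((Matrix.diagonal d * A) *ᵥ w)
            = ∑ i, ∑ j, w i * (d i * A i j * w j) := by
              simp [dotProduct, Matrix.mulVec, Matrix.diagonal_mul, Finset.mul_sum]
          _ = ∑ i, d i * w i * (A *ᵥ w) i := by
              refine Finset.sum_congr rfl fun i _ => ?_
              rw [show (A *ᵥ w) i = ∑ j, A i j * w j from rfl, Finset.mul_sum]
              exact Finset.sum_congr rfl fun j _ => by ring
      rw [h1, h2]
      ring
    have hneg : ∀ w : Fin n → ℝ, w ≠ 0 → w ⬝ᵥ (S *ᵥ w) < 0 := by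
      intro w hw
      have := hP.dotProduct_mulVec_pos hw
      simp only [star_trivial, neg_mulVec, dotProduct_neg] at this
      linarith
    have hnonpos : ∀ w : Fin n → ℝ, w ⬝ᵥ (S *ᵥ w) ≤ 0 := by
      intro w
      by_cases hw : w = 0
      · subst hw; simp
      · exact (hneg w hw).le
    set T : ℝ := ∑ i, d i * (X i ^ 2 + Y i ^ 2) with hT
    have hsum2 : X ⬝ᵥ (S *ᵥ X) + Y ⬝ᵥ (S *ᵥ Y) = 2 * μ.re * T := by
      rw [hquad X, hquad Y, hT]
      rw [Finset.mul_sum, Finset.mul_sum, Finset.mul_sum, ← Finset.sum_add_distrib]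
      refine Finset.sum_congr rfl fun i _ => ?_
      rw [heigX i, heigY i]
      ring
    have hvne : X ≠ 0 ∨ Y ≠ 0 := by
      by_contra h
      push_neg at h
      apply hv
      funext i
      apply Complex.ext
      · simpa using congrFun h.1 i
      · simpa using congrFun h.2 i
    have hTpos : 0 < T := by
      obtain ⟨i0, hi0⟩ : ∃ i, X i ≠ 0 ∨ Y i ≠ 0 := by
        rcases hvne with h | h
        · obtain ⟨i, hi⟩ := Function.ne_iff.mp h
          exact ⟨i, Or.inl hi⟩
        · obtain ⟨i, hi⟩ := Function.ne_iff.mp h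
          exact ⟨i, Or.inr hi⟩
      rw [hT]
      apply Finset.sum_pos' (fun i _ => mul_nonneg (hd i).le (by positivity))
      refine ⟨i0, Finset.mem_univ i0, ?_⟩
      have : 0 < X i0 ^ 2 + Y i0 ^ 2 := by
        rcases hi0 with h | h <;> positivity
      exact mul_pos (hd i0) this
    have hlt : X ⬝ᵥ (S *ᵥ X) + Y ⬝ᵥ (S *ᵥ Y) < 0 := by
      rcases hvne with h | h
      · linarith [hneg X h, hnonpos Y]
      · linarith [hneg Y h, hnonpos X]
    rw [hsum2] at hlt
    nlinarith [hTpos, hlt]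
end

section
/- Let A, B ∈ ℝ^{n×n} with A Metzler and B entrywise nonnegative. If A + B is Hurwitz, then there exist diagonal positive definite matrices P, Q with A^T P + P A + Q + P B Q^{-1} B^T P ≺ 0. -/
open Matrix

lemma neg_posDef_of_metzler_vec {n : ℕ} (S : Matrix (Fin n) (Fin n) ℝ)
    (hsym : Sᵀ = S) (hoff : ∀ i j, i ≠ j → 0 ≤ S i j)
    (v : Fin n → ℝ) (hv : ∀ i, 0 < v i) (hSv : ∀ i, S.mulVec v i < 0) :
    (-S).PosDef := by
  have hsym' : ∀ i j, S j i = S i j := fun i j => congrFun (congrFun hsym i) j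
  refine Matrix.PosDef.of_dotProduct_mulVec_pos ?_ ?_
  · show (-S)ᴴ = -S
    ext i j
    simp only [conjTranspose_apply, neg_apply, star_trivial]
    show -(S j i) = -(S i j)
    rw [hsym']
  · intro x hx
    have hx' : ∃ i, x i ≠ 0 := by
      by_contra h
      push_neg at h
      exact hx (funext fun i => h i)
    obtain ⟨i0, hi0⟩ := hx'
    have key : ∀ i j, S i j * (x i * x j)
        ≤ S i j * ((x i ^ 2 * (v j / v i) + x j ^ 2 * (v i / v j)) / 2) := by
      intro i j
      rcases eq_or_ne i j with rfl | hij
      · have : v i / v i = 1 := div_self (ne_of_gt (hv i))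
        rw [this]; ring_nf; exact le_refl _
      · have hS : 0 ≤ S i j := hoff i j hij
        have hu : 0 < v j / v i := div_pos (hv j) (hv i)
        have hw : 0 < v i / v j := div_pos (hv i) (hv j)
        have huw : (v j / v i) * (v i / v j) = 1 := by
          rw [div_mul_div_comm, mul_comm (v j) (v i)]
          exact div_self (mul_ne_zero (ne_of_gt (hv i)) (ne_of_gt (hv j)))
        have hamgm : x i * x j ≤ (x i ^ 2 * (v j / v i) + x j ^ 2 * (v i / v j)) / 2 := by
          nlinarith [sq_nonneg (x i * (v j / v i) - x j), hu, hw, huw]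
        exact mul_le_mul_of_nonneg_left hamgm hS
    have hquad : star x ⬝ᵥ S *ᵥ x = ∑ i, ∑ j, S i j * (x i * x j) := by
      simp only [star_trivial, dotProduct, mulVec, Finset.mul_sum]
      congr 1; ext i; congr 1; ext j; ring
    have hsum2 : ∑ i, ∑ j, S i j * ((x i ^ 2 * (v j / v i) + x j ^ 2 * (v i / v j)) / 2)
        = ∑ i, (x i ^ 2 / v i) * S.mulVec v i := by
      have split : ∀ i j : Fin n, S i j * ((x i ^ 2 * (v j / v i) + x j ^ 2 * (v i / v j)) / 2)
          = (x i ^ 2 / v i) * (S i j * v j) / 2 + (x j ^ 2 / v j) * (S i j * v i) / 2 := by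
        intro i j
        field_simp
      calc ∑ i, ∑ j, S i j * ((x i ^ 2 * (v j / v i) + x j ^ 2 * (v i / v j)) / 2)
          = ∑ i, ∑ j, ((x i ^ 2 / v i) * (S i j * v j) / 2
              + (x j ^ 2 / v j) * (S i j * v i) / 2) := by
            simp_rw [split]
        _ = (∑ i, ∑ j, (x i ^ 2 / v i) * (S i j * v j) / 2)
              + ∑ i, ∑ j, (x j ^ 2 / v j) * (S i j * v i) / 2 := by
            rw [← Finset.sum_add_distrib]
            congr 1; ext i; rw [← Finset.sum_add_distrib]
        _ = (∑ i, ∑ j, (x i ^ 2 / v i) * (S i j * v j) / 2)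
              + ∑ j, ∑ i, (x j ^ 2 / v j) * (S i j * v i) / 2 := by
            congr 1; exact Finset.sum_comm
        _ = ∑ i, ∑ j, (x i ^ 2 / v i) * (S i j * v j) := by
            rw [← Finset.sum_add_distrib]
            congr 1; ext i; rw [← Finset.sum_add_distrib]
            congr 1; ext j
            rw [hsym' i j]; ring
        _ = ∑ i, (x i ^ 2 / v i) * S.mulVec v i := by
            congr 1; ext i
            simp only [mulVec, dotProduct, Finset.mul_sum]
    have hneg : ∑ i, (x i ^ 2 / v i) * S.mulVec v i < 0 := by
      have h1 : ∀ i ∈ Finset.univ, (x i ^ 2 / v i) * S.mulVec v i ≤ (fun _ => (0:ℝ)) i := by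
        intro i _
        have ha : 0 ≤ x i ^ 2 / v i := div_nonneg (sq_nonneg _) (hv i).le
        have := mul_nonneg ha (neg_nonneg.mpr (hSv i).le)
        simp only []
        nlinarith
      have h2 : ∃ i ∈ Finset.univ, (x i ^ 2 / v i) * S.mulVec v i < (fun _ => (0:ℝ)) i := by
        refine ⟨i0, Finset.mem_univ _, ?_⟩
        have hpos : 0 < x i0 ^ 2 / v i0 :=
          div_pos (lt_of_le_of_ne (sq_nonneg _) (Ne.symm (pow_ne_zero 2 hi0))) (hv i0)
        exact mul_neg_of_pos_of_neg hpos (hSv i0)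
      have := Finset.sum_lt_sum h1 h2
      simpa using this
    have hchain : star x ⬝ᵥ S *ᵥ x < 0 := by
      rw [hquad]
      calc ∑ i, ∑ j, S i j * (x i * x j)
          ≤ ∑ i, ∑ j, S i j * ((x i ^ 2 * (v j / v i) + x j ^ 2 * (v i / v j)) / 2) :=
            Finset.sum_le_sum fun i _ => Finset.sum_le_sum fun j _ => key i j
        _ = ∑ i, (x i ^ 2 / v i) * S.mulVec v i := hsum2
        _ < 0 := hneg
    rw [neg_mulVec, dotProduct_neg]
    linarith


lemma exists_pos_vec {n : ℕ} (M : Matrix (Fin n) (Fin n) ℝ)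
    (hoff : ∀ i j, i ≠ j → 0 ≤ M i j)
    (hH : ∀ μ ∈ spectrum ℂ (M.map Complex.ofReal), μ.re < 0) :
    ∃ v : Fin n → ℝ, (∀ i, 0 < v i) ∧ ∀ i, M.mulVec v i < 0 := by
  classical
  set Mc : Matrix (Fin n) (Fin n) ℂ := M.map Complex.ofReal with hMcdef
  set Mt : ℝ → Matrix (Fin n) (Fin n) ℝ := fun t => t • M - (1 - t) • 1 with hMtdef
  have hmap : ∀ t : ℝ, (Mt t).map Complex.ofReal = (t : ℂ) • Mc - ((1 : ℂ) - t) • 1 := by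
    intro t
    ext i j
    simp only [Mt, Mc, Matrix.map_apply, Matrix.sub_apply, Matrix.smul_apply, Matrix.one_apply,
      smul_eq_mul, Matrix.map_apply]
    split_ifs <;> push_cast <;> ring
  have hspec : ∀ t : ℝ, 0 ≤ t → t ≤ 1 →
      ∀ μ ∈ spectrum ℂ ((Mt t).map Complex.ofReal), μ.re < 0 := by
    intro t ht0 ht1 μ hμ
    rw [hmap, spectrum.mem_iff] at hμ
    rcases eq_or_lt_of_le ht0 with rfl | htpos
    · -- t = 0
      have h1 : (algebraMap ℂ (Matrix (Fin n) (Fin n) ℂ)) μ - (((0:ℝ) : ℂ) • Mc - ((1:ℂ) - ((0:ℝ):ℂ)) • 1)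
          = algebraMap ℂ (Matrix (Fin n) (Fin n) ℂ) (μ + 1) := by
        rw [Algebra.algebraMap_eq_smul_one, Algebra.algebraMap_eq_smul_one]
        push_cast
        rw [zero_smul, zero_sub, sub_zero, sub_neg_eq_add, add_smul, one_smul]
      rw [h1] at hμ
      have hμ1 : μ + 1 = 0 := by
        by_contra hne
        exact hμ ((isUnit_iff_ne_zero.mpr hne).map (algebraMap ℂ (Matrix (Fin n) (Fin n) ℂ)))
      have : μ = -1 := by linear_combination hμ1
      rw [this]
      norm_num
    · -- t > 0
      have htC : (t : ℂ) ≠ 0 := by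
        exact_mod_cast ne_of_gt htpos
      set c : ℂ := (μ + 1 - t) / t with hc
      have h1 : (algebraMap ℂ (Matrix (Fin n) (Fin n) ℂ)) μ - ((t : ℂ) • Mc - ((1:ℂ) - t) • 1)
          = (t : ℂ) • (c • (1 : Matrix (Fin n) (Fin n) ℂ) - Mc) := by
        rw [Algebra.algebraMap_eq_smul_one]
        have htc : (t : ℂ) * c = μ + 1 - t := by
          rw [hc, mul_div_cancel₀ _ htC]
        rw [smul_sub, smul_smul, htc]
        module
      rw [h1] at hμ
      have hc_spec : c ∈ spectrum ℂ Mc := by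
        rw [spectrum.mem_iff, Algebra.algebraMap_eq_smul_one]
        intro hU
        apply hμ
        have : (t : ℂ) • (c • (1 : Matrix (Fin n) (Fin n) ℂ) - Mc)
            = (algebraMap ℂ (Matrix (Fin n) (Fin n) ℂ) (t : ℂ)) * (c • 1 - Mc) := by
          rw [Algebra.smul_def]
        rw [this]
        exact ((isUnit_iff_ne_zero.mpr htC).map (algebraMap ℂ (Matrix (Fin n) (Fin n) ℂ))).mul hU
      have hcre : c.re < 0 := hH c hc_spec
      have hcre' : c.re = (μ.re + 1 - t) / t := by
        rw [hc]
        rw [Complex.div_ofReal_re]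
        simp [Complex.sub_re, Complex.add_re, Complex.ofReal_re]
      rw [hcre'] at hcre
      have : μ.re + 1 - t < 0 := by
        by_contra hge
        push_neg at hge
        have := div_nonneg hge htpos.le
        linarith
      linarith
  have hdet : ∀ t : ℝ, 0 ≤ t → t ≤ 1 → (Mt t).det ≠ 0 := by
    intro t h0 h1 hd
    have h2 : ((Mt t).map Complex.ofReal).det = 0 := by
      have h3 := Complex.ofRealHom.map_det (Mt t)
      rw [RingHom.mapMatrix_apply] at h3
      have h4 : (Mt t).map ⇑Complex.ofRealHom = (Mt t).map Complex.ofReal := rfl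
      rw [h4] at h3
      rw [← h3, hd]
      simp
    have h5 : ¬ IsUnit ((Mt t).map Complex.ofReal) := by
      rw [Matrix.isUnit_iff_isUnit_det, isUnit_iff_ne_zero, h2]
      simp
    have h6 : (0 : ℂ) ∈ spectrum ℂ ((Mt t).map Complex.ofReal) := by
      rw [spectrum.mem_iff, map_zero, zero_sub]
      intro hU
      have hU2 := hU.neg
      rw [neg_neg] at hU2
      exact h5 hU2
    have := hspec t h0 h1 0 h6
    simp at this
  set b : Fin n → ℝ := fun _ => (-1 : ℝ) with hbdef
  set v : ℝ → (Fin n → ℝ) := fun t => (Mt t)⁻¹.mulVec b with hvdef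
  have hMv : ∀ t : ℝ, 0 ≤ t → t ≤ 1 → (Mt t).mulVec (v t) = b := by
    intro t h0 h1
    show (Mt t).mulVec ((Mt t)⁻¹.mulVec b) = b
    rw [Matrix.mulVec_mulVec, Matrix.mul_nonsing_inv _ (isUnit_iff_ne_zero.mpr (hdet t h0 h1)),
      Matrix.one_mulVec]
  have hcontM : Continuous Mt := by
    apply continuous_pi; intro i; apply continuous_pi; intro j
    have he : (fun t : ℝ => Mt t i j)
        = fun t : ℝ => t * M i j - (1 - t) * (1 : Matrix (Fin n) (Fin n) ℝ) i j := by
      funext t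
      simp [Mt, Matrix.sub_apply, Matrix.smul_apply, smul_eq_mul]
    show Continuous fun t : ℝ => Mt t i j
    rw [he]
    fun_prop
  have hcontD : Continuous fun t : ℝ => (Mt t).det := hcontM.matrix_det
  have hcontA : Continuous fun t : ℝ => (Mt t).adjugate := hcontM.matrix_adjugate
  have hvd : ∀ t : ℝ, v t = ((Mt t).det)⁻¹ • ((Mt t).adjugate.mulVec b) := by
    intro t
    show (Mt t)⁻¹.mulVec b = _
    rw [Matrix.inv_def, Ring.inverse_eq_inv, Matrix.smul_mulVec]
  have hcontV : ∀ i, Continuous fun s : Set.Icc (0:ℝ) 1 => v s.1 i := by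
    intro i
    have hnum : Continuous fun t : ℝ => ((Mt t).adjugate.mulVec b) i := by
      have he : (fun t : ℝ => ((Mt t).adjugate.mulVec b) i)
          = fun t : ℝ => ∑ j, (Mt t).adjugate i j * b j := by
        funext t
        simp [Matrix.mulVec, dotProduct]
      rw [he]
      exact continuous_finset_sum _ fun j _ =>
        ((continuous_apply j).comp ((continuous_apply i).comp hcontA)).mul continuous_const
    have he2 : (fun s : Set.Icc (0:ℝ) 1 => v s.1 i)
        = fun s : Set.Icc (0:ℝ) 1 => ((Mt s.1).adjugate.mulVec b) i / ((Mt s.1).det) := by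
      funext s
      rw [hvd]
      simp [smul_eq_mul, div_eq_inv_mul]
    rw [he2]
    exact ((hnum.comp continuous_subtype_val).div (hcontD.comp continuous_subtype_val)
      fun s => hdet s.1 s.2.1 s.2.2)
  have hTG : ∀ s : Set.Icc (0:ℝ) 1, (∀ i, 0 ≤ v s.1 i) → ∀ i, 0 < v s.1 i := by
    intro s hnn i
    rcases lt_or_eq_of_le (hnn i) with h | h
    · exact h
    · exfalso
      have hM : (Mt s.1).mulVec (v s.1) i = -1 := by
        rw [hMv s.1 s.2.1 s.2.2]
      have hexp : (Mt s.1).mulVec (v s.1) i = ∑ j, Mt s.1 i j * v s.1 j := by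
        simp [Matrix.mulVec, dotProduct]
      have hge : 0 ≤ (Mt s.1).mulVec (v s.1) i := by
        rw [hexp]
        apply Finset.sum_nonneg
        intro j _
        rcases eq_or_ne j i with rfl | hj
        · rw [← h, mul_zero]
        · have h1 : 0 ≤ Mt s.1 i j := by
            have : Mt s.1 i j = s.1 * M i j := by
              simp [Mt, Matrix.sub_apply, Matrix.smul_apply, smul_eq_mul,
                Matrix.one_apply_ne (Ne.symm hj)]
            rw [this]
            exact mul_nonneg s.2.1 (hoff i j (Ne.symm hj))
          exact mul_nonneg h1 (hnn j)
      rw [hM] at hge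
      linarith
  haveI : PreconnectedSpace (Set.Icc (0:ℝ) 1) := Subtype.preconnectedSpace isPreconnected_Icc
  set G : Set (Set.Icc (0:ℝ) 1) := {s | ∀ i, 0 < v s.1 i} with hGdef
  have hopen : IsOpen G := by
    have he : G = ⋂ i, {s : Set.Icc (0:ℝ) 1 | 0 < v s.1 i} := by
      ext s; simp [G, Set.mem_iInter]
    rw [he]
    exact isOpen_iInter_of_finite fun i => isOpen_lt continuous_const (hcontV i)
  have hclosed : IsClosed G := by
    have he : G = ⋂ i, {s : Set.Icc (0:ℝ) 1 | 0 ≤ v s.1 i} := by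
      ext s
      simp only [Set.mem_iInter, Set.mem_setOf_eq, hGdef]
      exact ⟨fun h i => (h i).le, fun h => hTG s h⟩
    rw [he]
    exact isClosed_iInter fun i => isClosed_le continuous_const (hcontV i)
  have hne : G.Nonempty := by
    refine ⟨⟨0, le_rfl, zero_le_one⟩, ?_⟩
    intro i
    have h0 : (Mt 0).mulVec (v 0) = b := hMv 0 le_rfl zero_le_one
    have hM0 : Mt 0 = -1 := by
      simp [Mt]
    rw [hM0] at h0
    have h1 : -((1 : Matrix (Fin n) (Fin n) ℝ).mulVec (v 0)) = b := by
      rw [← Matrix.neg_mulVec]; exact h0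
    rw [Matrix.one_mulVec] at h1
    have := congrFun h1 i
    simp only [Pi.neg_apply, b] at this
    show (0:ℝ) < v ((⟨0, le_rfl, zero_le_one⟩ : Set.Icc (0:ℝ) 1)).1 i
    simp only []
    linarith
  have huniv : G = Set.univ := IsClopen.eq_univ ⟨hclosed, hopen⟩ hne
  have h1G : (⟨1, zero_le_one, le_rfl⟩ : Set.Icc (0:ℝ) 1) ∈ G := by
    rw [huniv]
    trivial
  have hM1 : Mt 1 = M := by
    simp [Mt]
  refine ⟨v 1, h1G, ?_⟩
  intro i
  have := congrFun (hMv 1 zero_le_one le_rfl) i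
  rw [hM1] at this
  rw [this]
  norm_num

theorem metzler_nonneg_hurwitz_riccati (n : ℕ) (A B : Matrix (Fin n) (Fin n) ℝ)
    (hMetzler : ∀ i j, i ≠ j → 0 ≤ A i j) (hB : ∀ i j, 0 ≤ B i j)
    (hHurwitz : ∀ μ ∈ spectrum ℂ ((A + B).map Complex.ofReal), μ.re < 0) :
    ∃ p q : Fin n → ℝ, (∀ i, 0 < p i) ∧ (∀ i, 0 < q i) ∧
      (-(Aᵀ * Matrix.diagonal p + Matrix.diagonal p * A + Matrix.diagonal q +
        Matrix.diagonal p * B * (Matrix.diagonal q)⁻¹ * Bᵀ * Matrix.diagonal p)).PosDef := by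
  classical
  rcases Nat.eq_zero_or_pos n with hn | hn
  · subst hn
    refine ⟨fun _ => 1, fun _ => 1, fun i => one_pos, fun i => one_pos, ?_, ?_⟩
    · show _ = _
      ext i j
      exact i.elim0
    · intro x hx
      exact absurd (Finsupp.ext fun i : Fin 0 => i.elim0) hx
  haveI : Nonempty (Fin n) := ⟨⟨0, hn⟩⟩
  set M := A + B with hMdef
  have hMoff : ∀ i j, i ≠ j → 0 ≤ M i j := fun i j hij =>
    add_nonneg (hMetzler i j hij) (hB i j)
  obtain ⟨v, hv, hMv⟩ := exists_pos_vec M hMoff hHurwitz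
  have hHT : ∀ μ ∈ spectrum ℂ (Mᵀ.map Complex.ofReal), μ.re < 0 := by
    intro μ hμ
    apply hHurwitz
    rw [spectrum.mem_iff] at hμ ⊢
    intro hU
    apply hμ
    have he : (algebraMap ℂ (Matrix (Fin n) (Fin n) ℂ)) μ - Mᵀ.map Complex.ofReal
        = ((algebraMap ℂ (Matrix (Fin n) (Fin n) ℂ)) μ - M.map Complex.ofReal)ᵀ := by
      rw [Matrix.transpose_sub, Matrix.transpose_map, Algebra.algebraMap_eq_smul_one,
        Matrix.transpose_smul, Matrix.transpose_one]
    rw [he, Matrix.isUnit_iff_isUnit_det, Matrix.det_transpose, ← Matrix.isUnit_iff_isUnit_det]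
    exact hU
  obtain ⟨w, hw, hMw⟩ := exists_pos_vec Mᵀ (fun i j hij => hMoff j i (Ne.symm hij)) hHT
  set p : Fin n → ℝ := fun i => w i / v i with hpdef
  have hp : ∀ i, 0 < p i := fun i => div_pos (hw i) (hv i)
  set c : Fin n → ℝ := fun i => Mᵀ.mulVec w i + p i * M.mulVec v i with hcdef
  have hc : ∀ i, c i < 0 := by
    intro i
    have := mul_neg_of_pos_of_neg (hp i) (hMv i)
    have := hMw i
    simp only [hcdef]
    linarith
  set ε : ℝ := (Finset.univ.inf' Finset.univ_nonempty fun i => -c i) / 2 with hεdef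
  have hεpos : 0 < ε := by
    apply div_pos _ two_pos
    rw [Finset.lt_inf'_iff]
    exact fun i _ => by linarith [hc i]
  have hcε : ∀ i, c i + ε < 0 := by
    intro i
    have h1 : (Finset.univ.inf' Finset.univ_nonempty fun i => -c i) ≤ -c i :=
      Finset.inf'_le _ (Finset.mem_univ i)
    have h2 : ε ≤ -c i / 2 := by
      rw [hεdef]
      gcongr
    linarith [hc i]
  have hBw : ∀ i, 0 ≤ Bᵀ.mulVec w i := by
    intro i
    have he : Bᵀ.mulVec w i = ∑ j, B j i * w j := by
      simp [Matrix.mulVec, dotProduct, Matrix.transpose_apply]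
    rw [he]
    exact Finset.sum_nonneg fun j _ => mul_nonneg (hB j i) (hw j).le
  set q : Fin n → ℝ := fun i => (Bᵀ.mulVec w i + ε) / v i with hqdef
  have hq : ∀ i, 0 < q i := fun i => div_pos (by linarith [hBw i]) (hv i)
  refine ⟨p, q, hp, hq, ?_⟩
  have hQinv : (Matrix.diagonal q)⁻¹ = Matrix.diagonal fun i => (q i)⁻¹ := by
    apply Matrix.inv_eq_right_inv
    rw [Matrix.diagonal_mul_diagonal]
    have he : (fun i => q i * (q i)⁻¹) = fun _ => (1:ℝ) :=
      funext fun i => mul_inv_cancel₀ (ne_of_gt (hq i))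
    rw [he, Matrix.diagonal_one]
  set R := Aᵀ * Matrix.diagonal p + Matrix.diagonal p * A + Matrix.diagonal q +
      Matrix.diagonal p * B * (Matrix.diagonal q)⁻¹ * Bᵀ * Matrix.diagonal p with hRdef
  have hRentry : ∀ i j, R i j = A j i * p j + p i * A i j + (if i = j then q i else 0)
      + (∑ k, p i * B i k * (q k)⁻¹ * B j k) * p j := by
    intro i j
    rw [hRdef, hQinv]
    simp only [Matrix.add_apply, Matrix.mul_diagonal, Matrix.diagonal_mul,
      Matrix.transpose_apply, Matrix.diagonal_apply, Matrix.mul_apply, mul_ite, ite_mul,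
      mul_zero, zero_mul, Finset.sum_ite_eq, Finset.sum_ite_eq', Finset.mem_univ, if_true]
  have hsym : Rᵀ = R := by
    ext i j
    rw [Matrix.transpose_apply, hRentry, hRentry]
    have hif : (if j = i then q j else 0) = (if i = j then q i else 0) := by
      rcases eq_or_ne i j with rfl | hij
      · simp
      · simp [hij, Ne.symm hij]
    rw [hif]
    have hsum : (∑ k, p j * B j k * (q k)⁻¹ * B i k) * p i
        = (∑ k, p i * B i k * (q k)⁻¹ * B j k) * p j := by
      rw [Finset.sum_mul, Finset.sum_mul]
      apply Finset.sum_congr rfl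
      intro k _
      ring
    rw [hsum]
    ring
  have hoffR : ∀ i j, i ≠ j → 0 ≤ R i j := by
    intro i j hij
    rw [hRentry]
    have h1 : 0 ≤ A j i * p j := mul_nonneg (hMetzler j i (Ne.symm hij)) (hp j).le
    have h2 : 0 ≤ p i * A i j := mul_nonneg (hp i).le (hMetzler i j hij)
    have h3 : (if i = j then q i else 0) = 0 := by simp [hij]
    have h4 : 0 ≤ (∑ k, p i * B i k * (q k)⁻¹ * B j k) * p j := by
      apply mul_nonneg _ (hp j).le
      apply Finset.sum_nonneg
      intro k _
      have : 0 ≤ (q k)⁻¹ := (inv_pos.mpr (hq k)).le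
      exact mul_nonneg (mul_nonneg (mul_nonneg (hp i).le (hB i k)) this) (hB j k)
    rw [h3]
    linarith
  -- key inequality
  have hw' : ∀ j, p j * v j = w j := fun j => div_mul_cancel₀ (w j) (ne_of_gt (hv j))
  have hqv : ∀ k, q k * v k = Bᵀ.mulVec w k + ε :=
    fun k => div_mul_cancel₀ _ (ne_of_gt (hv k))
  have hqinv : ∀ k, (q k)⁻¹ * Bᵀ.mulVec w k ≤ v k := by
    intro k
    have hpos : (0:ℝ) < Bᵀ.mulVec w k + ε := by linarith [hBw k]
    have he : (q k)⁻¹ = v k / (Bᵀ.mulVec w k + ε) := by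
      rw [hqdef]
      simp only [inv_div]
    rw [he, div_mul_eq_mul_div, div_le_iff₀ hpos]
    nlinarith [hBw k, hεpos, hv k]
  have hRv : ∀ i, R.mulVec v i < 0 := by
    intro i
    have hexp : R.mulVec v i = ∑ j, R i j * v j := by
      simp [Matrix.mulVec, dotProduct, Matrix.transpose_apply]
    have hBT : ∀ k, Bᵀ.mulVec w k = ∑ j, B j k * w j := by
      intro k; simp [Matrix.mulVec, dotProduct, Matrix.transpose_apply]
    have hbig : ∑ j, R i j * v j
        = (∑ j, A j i * w j) + p i * (∑ j, A i j * v j) + q i * v i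
          + p i * ∑ k, B i k * ((q k)⁻¹ * (∑ j, B j k * w j)) := by
      simp_rw [hRentry, add_mul, Finset.sum_add_distrib]
      congr 1
      congr 1
      congr 1
      · apply Finset.sum_congr rfl
        intro j _
        rw [mul_assoc, hw']
      · rw [Finset.mul_sum]
        apply Finset.sum_congr rfl
        intro j _
        ring
      · simp [ite_mul]
      · calc ∑ j, (∑ k, p i * B i k * (q k)⁻¹ * B j k) * p j * v j
            = ∑ j, ∑ k, p i * B i k * (q k)⁻¹ * (B j k * w j) := by
              apply Finset.sum_congr rfl
              intro j _
              rw [Finset.sum_mul, Finset.sum_mul]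
              apply Finset.sum_congr rfl
              intro k _
              rw [mul_assoc _ (p j) (v j), hw' j]
              ring
          _ = ∑ k, ∑ j, p i * B i k * (q k)⁻¹ * (B j k * w j) := Finset.sum_comm
          _ = p i * ∑ k, B i k * ((q k)⁻¹ * (∑ j, B j k * w j)) := by
              rw [Finset.mul_sum]
              apply Finset.sum_congr rfl
              intro k _
              rw [← Finset.mul_sum]
              ring
    have hS4 : p i * (∑ k, B i k * ((q k)⁻¹ * (∑ j, B j k * w j)))
        ≤ p i * ∑ k, B i k * v k := by
      apply mul_le_mul_of_nonneg_left _ (hp i).le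
      apply Finset.sum_le_sum
      intro k _
      apply mul_le_mul_of_nonneg_left _ (hB i k)
      rw [← hBT k]
      exact hqinv k
    have hle : R.mulVec v i ≤ c i + ε := by
      rw [hexp, hbig, hqv]
      have hMtw : Mᵀ.mulVec w i = (∑ j, A j i * w j) + ∑ j, B j i * w j := by
        have : Mᵀ.mulVec w i = ∑ j, (A j i + B j i) * w j := by
          simp [Matrix.mulVec, dotProduct, hMdef, Matrix.add_apply, Matrix.transpose_apply, add_mul]
        rw [this]
        simp_rw [add_mul, Finset.sum_add_distrib]
      have hMv' : M.mulVec v i = (∑ j, A i j * v j) + ∑ j, B i j * v j := by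
        have : M.mulVec v i = ∑ j, (A i j + B i j) * v j := by
          simp [Matrix.mulVec, dotProduct, hMdef, Matrix.add_apply, Matrix.transpose_apply, add_mul]
        rw [this]
        simp_rw [add_mul, Finset.sum_add_distrib]
      have hBTi : Bᵀ.mulVec w i = ∑ j, B j i * w j := hBT i
      simp only [hcdef, hMtw, hMv']
      have := hS4
      have hBk : (∑ k, B i k * v k) = ∑ j, B i j * v j := rfl
      rw [hBk] at this
      linarith
    linarith [hcε i]
  exact neg_posDef_of_metzler_vec R hsym hoffR v hv hRv
end

section
/- If diagonal positive definite P, Q satisfy A^T P + P A + Q + P B Q^{-1} B^T P ≺ 0, then both A^T P + P A ≺ 0 and (A+B)^T P + P (A+B) ≺ 0. -/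
open Matrix

theorem riccati_implies_lyapunov (n : ℕ) (A B : Matrix (Fin n) (Fin n) ℝ)
    (p q : Fin n → ℝ) (hp : ∀ i, 0 < p i) (hq : ∀ i, 0 < q i)
    (hRic : (-(Aᵀ * Matrix.diagonal p + Matrix.diagonal p * A + Matrix.diagonal q +
        Matrix.diagonal p * B * (Matrix.diagonal q)⁻¹ * Bᵀ * Matrix.diagonal p)).PosDef) :
    (-(Aᵀ * Matrix.diagonal p + Matrix.diagonal p * A)).PosDef ∧
    (-((A + B)ᵀ * Matrix.diagonal p + Matrix.diagonal p * (A + B))).PosDef := by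
  set P := Matrix.diagonal p with hP
  set Q := Matrix.diagonal q with hQdef
  set S : Matrix (Fin n) (Fin n) ℝ := Matrix.diagonal (fun i => Real.sqrt (q i)) with hS
  set Si : Matrix (Fin n) (Fin n) ℝ :=
    Matrix.diagonal (fun i => (Real.sqrt (q i))⁻¹) with hSi
  have hsq : ∀ i, 0 < Real.sqrt (q i) := fun i => Real.sqrt_pos.mpr (hq i)
  have hSSi : S * Si = 1 := by
    rw [hS, hSi, Matrix.diagonal_mul_diagonal]
    rw [show (fun i => Real.sqrt (q i) * (Real.sqrt (q i))⁻¹) = fun _ => (1:ℝ) from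
      funext fun i => mul_inv_cancel₀ (hsq i).ne', Matrix.diagonal_one]
  have hSiS : Si * S = 1 := by
    rw [hS, hSi, Matrix.diagonal_mul_diagonal]
    rw [show (fun i => (Real.sqrt (q i))⁻¹ * Real.sqrt (q i)) = fun _ => (1:ℝ) from
      funext fun i => inv_mul_cancel₀ (hsq i).ne', Matrix.diagonal_one]
  have hSS : S * S = Q := by
    rw [hS, hQdef, Matrix.diagonal_mul_diagonal]
    exact congrArg Matrix.diagonal (funext fun i => Real.mul_self_sqrt (hq i).le)
  have hQinv : Q⁻¹ = Si * Si := by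
    apply Matrix.inv_eq_right_inv
    rw [← hSS]
    calc S * S * (Si * Si) = S * (S * Si) * Si := by noncomm_ring
    _ = 1 := by rw [hSSi, mul_one, hSSi]
  have hPT : Pᵀ = P := Matrix.diagonal_transpose p
  have hST : Sᵀ = S := Matrix.diagonal_transpose _
  have hSiT : Siᵀ = Si := Matrix.diagonal_transpose _
  -- M := P B Q⁻¹ Bᵀ P is PosSemidef
  set N : Matrix (Fin n) (Fin n) ℝ := Si * Bᵀ * P with hN
  have hM : P * B * Q⁻¹ * Bᵀ * P = Nᵀ * N := by
    rw [hN, Matrix.transpose_mul, Matrix.transpose_mul, hPT, hSiT,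
      Matrix.transpose_transpose, hQinv]
    noncomm_ring
  have hMpsd : (P * B * Q⁻¹ * Bᵀ * P).PosSemidef := by
    rw [hM]
    have := Matrix.posSemidef_conjTranspose_mul_self N
    rwa [Matrix.conjTranspose_eq_transpose_of_trivial] at this
  have hQpsd : Q.PosSemidef := Matrix.PosSemidef.diagonal (fun i => (hq i).le)
  constructor
  · have : -(Aᵀ * P + P * A) =
        -(Aᵀ * P + P * A + Q + P * B * Q⁻¹ * Bᵀ * P) + (Q + P * B * Q⁻¹ * Bᵀ * P) := by
      noncomm_ring
    rw [this]
    exact hRic.add_posSemidef (hQpsd.add hMpsd)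
  · set C : Matrix (Fin n) (Fin n) ℝ := S - Si * Bᵀ * P with hC
    have hCC : Cᵀ * C = Q - Bᵀ * P - P * B + P * B * Q⁻¹ * Bᵀ * P := by
      rw [hC, Matrix.transpose_sub, Matrix.transpose_mul, Matrix.transpose_mul, hPT, hSiT,
        Matrix.transpose_transpose, hST, hQinv]
      have e1 : S * (Si * Bᵀ * P) = Bᵀ * P := by
        rw [show S * (Si * Bᵀ * P) = (S * Si) * Bᵀ * P by noncomm_ring, hSSi, one_mul]
      have e2 : P * B * Si * S = P * B := by
        rw [show P * B * Si * S = P * B * (Si * S) by noncomm_ring, hSiS, mul_one]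
      rw [sub_mul, mul_sub, mul_sub, hSS, e1]
      rw [show P * (B * Si) * S = P * B * (Si * S) by noncomm_ring, hSiS, mul_one,
        show P * (B * Si) * (Si * Bᵀ * P) = P * B * (Si * Si) * (Bᵀ * P) by noncomm_ring]
      noncomm_ring
    have hCpsd : (Cᵀ * C).PosSemidef := by
      have := Matrix.posSemidef_conjTranspose_mul_self C
      rwa [Matrix.conjTranspose_eq_transpose_of_trivial] at this
    have : -((A + B)ᵀ * P + P * (A + B)) =
        -(Aᵀ * P + P * A + Q + P * B * Q⁻¹ * Bᵀ * P) + Cᵀ * C := by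
      rw [hCC, Matrix.transpose_add]
      noncomm_ring
    rw [this]
    exact hRic.add_posSemidef hCpsd
end

section
/- For the 2×2 matrices A = [[-1,0],[-2,-1]] and B = [[-10,0],[0,-10]], there do not exist diagonal positive definite 2×2 matrices P, Q with A^T P + P A + Q + P B Q^{-1} B^T P ≺ 0, even though D = diag(4,1) satisfies A^T D + D A ≺ 0 and (A+B)^T D + D (A+B) ≺ 0. -/
open Matrix

-- helper: 2x2 posdef from entries
lemma posdef2 (a b c : ℝ) (ha : 0 < a) (hd : 0 < a*c - b*b) :
    (!![a, b; b, c] : Matrix (Fin 2) (Fin 2) ℝ).PosDef := by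
  rw [Matrix.posDef_iff_dotProduct_mulVec]
  constructor
  · ext i j; fin_cases i <;> fin_cases j <;> simp [Matrix.vecHead, Matrix.vecTail]
  · intro x hx
    have hx' : x 0 ≠ 0 ∨ x 1 ≠ 0 := by
      by_contra h
      push_neg at h
      apply hx
      ext i; fin_cases i <;> simp [h.1, h.2]
    simp [Matrix.mulVec, dotProduct, Fin.sum_univ_two]
    rcases hx' with h | h <;> nlinarith [sq_nonneg (a * x 0 + b * x 1), sq_nonneg (b * x 0 + c * x 1), sq_nonneg (x 0), sq_nonneg (x 1), mul_pos ha hd, pow_pos (abs_pos.mpr h) 2, sq_abs (x 0), sq_abs (x 1)]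

theorem counterexample_not_diag_riccati :
    let A : Matrix (Fin 2) (Fin 2) ℝ := !![-1, 0; -2, -1]
    let B : Matrix (Fin 2) (Fin 2) ℝ := !![-10, 0; 0, -10]
    let D : Matrix (Fin 2) (Fin 2) ℝ := Matrix.diagonal ![4, 1]
    (¬ ∃ p q : Fin 2 → ℝ, (∀ i, 0 < p i) ∧ (∀ i, 0 < q i) ∧
      (-(Aᵀ * Matrix.diagonal p + Matrix.diagonal p * A + Matrix.diagonal q +
        Matrix.diagonal p * B * (Matrix.diagonal q)⁻¹ * Bᵀ * Matrix.diagonal p)).PosDef) ∧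
    (-(Aᵀ * D + D * A)).PosDef ∧
    (-((A + B)ᵀ * D + D * (A + B))).PosDef := by
  intro A B D
  refine ⟨?_, ?_, ?_⟩
  · rintro ⟨p, q, hp, hq, hpd⟩
    have hqinv : (Matrix.diagonal q)⁻¹ = Matrix.diagonal fun i => (q i)⁻¹ := by
      apply Matrix.inv_eq_right_inv
      rw [Matrix.diagonal_mul_diagonal]
      convert Matrix.diagonal_one using 2
      ext i
      exact mul_inv_cancel₀ (ne_of_gt (hq i))
    have h00 := (Matrix.posDef_iff_dotProduct_mulVec.mp hpd).2 (x := (Pi.single 0 1 : Fin 2 → ℝ)) (by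
      intro h
      have := congrFun h 0
      simp [Pi.single_eq_same] at this)
    rw [hqinv] at h00
    simp [A, B, Matrix.mulVec, dotProduct, Fin.sum_univ_two, Matrix.mul_apply,
      Matrix.diagonal, Pi.single] at h00
    have hc : q 0 * (q 0)⁻¹ = 1 := mul_inv_cancel₀ (ne_of_gt (hq 0))
    nlinarith [sq_nonneg (q 0 - 10 * p 0), hp 0, hq 0, mul_pos (hp 0) (hq 0),
      mul_pos (mul_pos (hp 0) (hp 0)) (inv_pos.mpr (hq 0))]
  · have h : -(Aᵀ * D + D * A) = !![8, 2; 2, 2] := by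
      ext i j
      fin_cases i <;> fin_cases j <;>
        simp [A, D, Matrix.mul_apply, Fin.sum_univ_two, Matrix.diagonal, Matrix.vecHead, Matrix.vecTail] <;> norm_num
    rw [h]; exact posdef2 8 2 2 (by norm_num) (by norm_num)
  · have h : -((A + B)ᵀ * D + D * (A + B)) = !![88, 2; 2, 22] := by
      ext i j
      fin_cases i <;> fin_cases j <;>
        simp [A, B, D, Matrix.mul_apply, Fin.sum_univ_two, Matrix.diagonal, Matrix.vecHead, Matrix.vecTail] <;> norm_num
    rw [h]; exact posdef2 88 2 22 (by norm_num) (by norm_num)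
end

section
/- Let A, B ∈ ℝ^{n×n} be lower triangular. If there exist diagonal positive definite matrices P, Q with A^T P + P A + Q + P B Q^{-1} B^T P ≺ 0, then A is Hurwitz and |b_{ii}| < |a_{ii}| for all i = 1, …, n. -/
open Matrix

theorem lower_triangular_riccati_necessary (n : ℕ) (A B : Matrix (Fin n) (Fin n) ℝ)
    (hA : ∀ i j : Fin n, i < j → A i j = 0) (hB : ∀ i j : Fin n, i < j → B i j = 0)
    (h : ∃ p q : Fin n → ℝ, (∀ i, 0 < p i) ∧ (∀ i, 0 < q i) ∧
      (-(Aᵀ * Matrix.diagonal p + Matrix.diagonal p * A + Matrix.diagonal q +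
        Matrix.diagonal p * B * (Matrix.diagonal q)⁻¹ * Bᵀ * Matrix.diagonal p)).PosDef) :
    (∀ μ ∈ spectrum ℂ (A.map Complex.ofReal), μ.re < 0) ∧
    (∀ i : Fin n, |B i i| < |A i i|) := by
  obtain ⟨p, q, hp, hq, hP⟩ := h
  -- diagonal entries of a PosDef matrix are positive
  have hdiag : ∀ i : Fin n,
      (0 : ℝ) < (-(Aᵀ * Matrix.diagonal p + Matrix.diagonal p * A + Matrix.diagonal q +
        Matrix.diagonal p * B * (Matrix.diagonal q)⁻¹ * Bᵀ * Matrix.diagonal p)) i i := by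
    intro i
    have hne : (Pi.single i 1 : Fin n → ℝ) ≠ 0 := by
      intro hc
      have := congrFun hc i
      simp at this
    exact hP.diag_pos
  -- inverse of the diagonal matrix
  have hqinv : (Matrix.diagonal q)⁻¹ = Matrix.diagonal (fun i => (q i)⁻¹) := by
    apply Matrix.inv_eq_right_inv
    rw [Matrix.diagonal_mul_diagonal, ← Matrix.diagonal_one]
    exact congrArg Matrix.diagonal (funext fun i => mul_inv_cancel₀ (hq i).ne')
  -- the key scalar inequality for each i
  have key : ∀ i : Fin n,
      2 * p i * A i i + q i + p i ^ 2 * (B i i ^ 2 * (q i)⁻¹) < 0 := by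
    intro i
    have hd := hdiag i
    rw [hqinv] at hd
    have hentry : (-(Aᵀ * Matrix.diagonal p + Matrix.diagonal p * A + Matrix.diagonal q +
        Matrix.diagonal p * B * Matrix.diagonal (fun i => (q i)⁻¹) * Bᵀ * Matrix.diagonal p)) i i
        = -(A i i * p i + p i * A i i + q i +
            p i * (∑ k, B i k * (q k)⁻¹ * B i k) * p i) := by
      simp [Matrix.mul_apply, Matrix.diagonal_apply, Finset.mul_sum, Finset.sum_mul,
        mul_assoc, mul_comm, mul_left_comm]
    rw [hentry] at hd
    have hsum : B i i * (q i)⁻¹ * B i i ≤ ∑ k, B i k * (q k)⁻¹ * B i k := by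
      apply Finset.single_le_sum (f := fun k => B i k * (q k)⁻¹ * B i k)
      · intro k _
        have h1 : 0 ≤ (q k)⁻¹ := le_of_lt (inv_pos.mpr (hq k))
        nlinarith [mul_self_nonneg (B i k), h1]
      · exact Finset.mem_univ i
    have hpi := hp i
    nlinarith [hsum, hpi]
  have hAneg : ∀ i : Fin n, A i i < 0 := by
    intro i
    have := key i
    have h1 : 0 < q i := hq i
    have h2 : 0 ≤ p i ^ 2 * (B i i ^ 2 * (q i)⁻¹) := by
      have : 0 ≤ (q i)⁻¹ := le_of_lt (inv_pos.mpr (hq i))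
      positivity
    nlinarith [hp i]
  have habs : ∀ i : Fin n, |B i i| < |A i i| := by
    intro i
    have hk := key i
    have hqi := hq i
    have hpi := hp i
    have hai := hAneg i
    rw [abs_of_neg hai]
    have hmul : 2 * p i * A i i * q i + q i ^ 2 + p i ^ 2 * B i i ^ 2 < 0 := by
      have h1 : (2 * p i * A i i + q i + p i ^ 2 * (B i i ^ 2 * (q i)⁻¹)) * q i < 0 :=
        mul_neg_of_neg_of_pos hk hqi
      have h2 : (2 * p i * A i i + q i + p i ^ 2 * (B i i ^ 2 * (q i)⁻¹)) * q i
          = 2 * p i * A i i * q i + q i ^ 2 + p i ^ 2 * B i i ^ 2 := by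
        field_simp
      linarith [h2 ▸ h1]
    rcases abs_cases (B i i) with ⟨hb, _⟩ | ⟨hb, _⟩ <;> rw [hb]
    · nlinarith [sq_nonneg (q i - p i * B i i), hmul, mul_pos hpi hqi]
    · nlinarith [sq_nonneg (q i + p i * B i i), hmul, mul_pos hpi hqi]
  refine ⟨?_, habs⟩
  intro μ hμ
  rw [spectrum.mem_iff] at hμ
  rw [Matrix.isUnit_iff_isUnit_det] at hμ
  have hdet : (algebraMap ℂ (Matrix (Fin n) (Fin n) ℂ) μ - A.map Complex.ofReal).det = 0 := by
    by_contra hc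
    exact hμ (isUnit_iff_ne_zero.mpr hc)
  set N : Matrix (Fin n) (Fin n) ℂ := algebraMap ℂ (Matrix (Fin n) (Fin n) ℂ) μ - A.map Complex.ofReal with hN
  have hlt : N.BlockTriangular OrderDual.toDual := by
    intro i j hij
    have hij' : i < j := hij
    simp [hN, Matrix.algebraMap_matrix_apply, Matrix.map_apply, hA i j hij',
      Matrix.diagonal_apply, ne_of_lt hij']
  have hdetprod : N.det = ∏ i, N i i := Matrix.det_of_lowerTriangular N hlt
  rw [hdetprod] at hdet
  obtain ⟨i, _, hi0⟩ := Finset.prod_eq_zero_iff.mp hdet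
  have hNii : N i i = μ - (A i i : ℂ) := by
    simp [hN, Matrix.algebraMap_matrix_apply, Matrix.map_apply]
  rw [hNii, sub_eq_zero] at hi0
  rw [hi0]
  simpa using hAneg i
end

section
/- Let A, B ∈ ℝ^{n×n} be lower triangular with A Hurwitz and |b_{ii}| < |a_{ii}| for all i. Then there exist diagonal positive definite matrices P, Q with A^T P + P A + Q + P B Q^{-1} B^T P ≺ 0. -/
open Matrix Finset

lemma posdef_of_dominant {n : ℕ} (R : Matrix (Fin n) (Fin n) ℝ)
    (hsym : ∀ i j, R j i = R i j)
    (hdom : ∀ i, ∑ j ∈ Finset.univ.erase i, |R i j| < R i i) : R.PosDef := by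
  rw [posDef_iff_dotProduct_mulVec]
  constructor
  · ext i j
    simp only [conjTranspose_apply, star_trivial]
    exact hsym i j
  · intro x hx
    have hstar : star x = x := by funext i; simp
    rw [hstar]
    have expand : dotProduct x (R *ᵥ x) =
        ∑ i, (R i i * (x i * x i) + ∑ j ∈ univ.erase i, R i j * (x i * x j)) := by
      simp only [dotProduct, mulVec, Finset.mul_sum]
      refine Finset.sum_congr rfl fun i _ => ?_
      rw [← Finset.add_sum_erase _ (fun j => x i * (R i j * x j)) (Finset.mem_univ i)]
      exact congrArg₂ (· + ·) (by ring) (Finset.sum_congr rfl fun j _ => by ring)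
    have hswap : ∑ i, ∑ j ∈ univ.erase i, |R i j| * (x j * x j)
        = ∑ i, ∑ j ∈ univ.erase i, |R i j| * (x i * x i) := by
      have e0 : ∀ (g : Fin n → Fin n → ℝ), ∑ i, ∑ j ∈ univ.erase i, g i j
          = ∑ i, ∑ j, (if j = i then 0 else g i j) := by
        intro g
        refine Finset.sum_congr rfl fun i _ => ?_
        calc ∑ j ∈ univ.erase i, g i j
            = ∑ j ∈ univ.erase i, (if j = i then 0 else g i j) :=
              Finset.sum_congr rfl fun j hj => by simp [Finset.ne_of_mem_erase hj]
          _ = ∑ j, (if j = i then 0 else g i j) := Finset.sum_erase _ (by simp)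
      have e1 := e0 (fun i j => |R i j| * (x j * x j))
      have e2 := e0 (fun i j => |R i j| * (x i * x i))
      rw [e1, e2, Finset.sum_comm]
      refine Finset.sum_congr rfl fun i _ => Finset.sum_congr rfl fun j _ => ?_
      rcases eq_or_ne i j with h | h
      · simp [h]
      · simp only [h, h.symm, if_false, hsym i j]
    have hhalf : ∑ i, ∑ j ∈ univ.erase i, |R i j| * ((x i * x i + x j * x j) / 2)
        = ∑ i, (∑ j ∈ univ.erase i, |R i j|) * (x i * x i) := by
      have e : ∀ i, ∑ j ∈ univ.erase i, |R i j| * ((x i * x i + x j * x j) / 2)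
          = ((∑ j ∈ univ.erase i, |R i j| * (x i * x i)) + ∑ j ∈ univ.erase i, |R i j| * (x j * x j)) / 2 := by
        intro i
        rw [← Finset.sum_add_distrib, Finset.sum_div]
        exact Finset.sum_congr rfl fun j _ => by ring
      calc ∑ i, ∑ j ∈ univ.erase i, |R i j| * ((x i * x i + x j * x j) / 2)
          = ∑ i, ((∑ j ∈ univ.erase i, |R i j| * (x i * x i)) + ∑ j ∈ univ.erase i, |R i j| * (x j * x j)) / 2 :=
            Finset.sum_congr rfl fun i _ => e i
        _ = ((∑ i, ∑ j ∈ univ.erase i, |R i j| * (x i * x i)) + ∑ i, ∑ j ∈ univ.erase i, |R i j| * (x j * x j)) / 2 := by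
            rw [← Finset.sum_div, Finset.sum_add_distrib]
        _ = ∑ i, ∑ j ∈ univ.erase i, |R i j| * (x i * x i) := by rw [hswap]; ring
        _ = ∑ i, (∑ j ∈ univ.erase i, |R i j|) * (x i * x i) :=
            Finset.sum_congr rfl fun i _ => (Finset.sum_mul _ _ _).symm
    have key : ∑ i, (R i i - ∑ j ∈ univ.erase i, |R i j|) * (x i * x i) ≤ dotProduct x (R *ᵥ x) := by
      rw [expand]
      have lbeq : ∑ i, (R i i - ∑ j ∈ univ.erase i, |R i j|) * (x i * x i)
          = ∑ i, (R i i * (x i * x i) - ∑ j ∈ univ.erase i, |R i j| * ((x i * x i + x j * x j) / 2)) := by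
        calc ∑ i, (R i i - ∑ j ∈ univ.erase i, |R i j|) * (x i * x i)
            = ∑ i, (R i i * (x i * x i) - (∑ j ∈ univ.erase i, |R i j|) * (x i * x i)) :=
              Finset.sum_congr rfl fun i _ => by ring
          _ = (∑ i, R i i * (x i * x i)) - ∑ i, (∑ j ∈ univ.erase i, |R i j|) * (x i * x i) :=
              Finset.sum_sub_distrib _ _
          _ = (∑ i, R i i * (x i * x i)) - ∑ i, ∑ j ∈ univ.erase i, |R i j| * ((x i * x i + x j * x j) / 2) := by
              rw [hhalf]
          _ = _ := (Finset.sum_sub_distrib _ _).symm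
      rw [lbeq]
      refine Finset.sum_le_sum fun i _ => ?_
      have h : -∑ j ∈ univ.erase i, |R i j| * ((x i * x i + x j * x j) / 2)
          ≤ ∑ j ∈ univ.erase i, R i j * (x i * x j) := by
        rw [← Finset.sum_neg_distrib]
        refine Finset.sum_le_sum fun j _ => ?_
        have h1 : -|R i j * (x i * x j)| ≤ R i j * (x i * x j) := neg_abs_le _
        have h2 : |R i j * (x i * x j)| = |R i j| * (|x i| * |x j|) := by
          rw [abs_mul, abs_mul]
        have h3 : |x i| * |x j| ≤ (x i * x i + x j * x j) / 2 := by
          nlinarith [sq_nonneg (|x i| - |x j|), sq_abs (x i), sq_abs (x j)]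
        nlinarith [abs_nonneg (R i j)]
      linarith
    have pos : 0 < ∑ i, (R i i - ∑ j ∈ univ.erase i, |R i j|) * (x i * x i) := by
      obtain ⟨i0, hi0⟩ := Function.ne_iff.mp hx
      refine Finset.sum_pos' (fun i _ => mul_nonneg (le_of_lt (sub_pos.mpr (hdom i))) (mul_self_nonneg _))
        ⟨i0, Finset.mem_univ _, ?_⟩
      exact mul_pos (sub_pos.mpr (hdom i0)) (mul_self_pos.mpr (by simpa using hi0))
    exact lt_of_lt_of_le pos key

lemma posdef_of_weighted_dominant {n : ℕ} (R : Matrix (Fin n) (Fin n) ℝ)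
    (hsym : ∀ i j, R j i = R i j) (d : Fin n → ℝ) (hd : ∀ i, 0 < d i)
    (hdom : ∀ i, ∑ j ∈ Finset.univ.erase i, d i * d j * |R i j| < d i * d i * R i i) :
    R.PosDef := by
  have hS : (Matrix.of fun i j => d i * d j * R i j).PosDef := by
    refine posdef_of_dominant _ (fun i j => ?_) (fun i => ?_)
    · show d j * d i * R j i = d i * d j * R i j
      rw [hsym]; ring
    · have : ∀ j, |d i * d j * R i j| = d i * d j * |R i j| := fun j => by
        rw [abs_mul, abs_of_pos (mul_pos (hd i) (hd j))]
      calc ∑ j ∈ univ.erase i, |(Matrix.of fun i j => d i * d j * R i j) i j|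
          = ∑ j ∈ univ.erase i, d i * d j * |R i j| :=
            Finset.sum_congr rfl fun j _ => this j
        _ < d i * d i * R i i := hdom i
        _ = (Matrix.of fun i j => d i * d j * R i j) i i := rfl
  rw [posDef_iff_dotProduct_mulVec]
  constructor
  · ext i j
    simp only [conjTranspose_apply, star_trivial]
    exact hsym i j
  · intro x hx
    have hstar : star x = x := by funext i; simp
    rw [hstar]
    set y : Fin n → ℝ := fun i => x i / d i with hy
    have hyne : y ≠ 0 := by
      obtain ⟨i0, hi0⟩ := Function.ne_iff.mp hx
      refine Function.ne_iff.mpr ⟨i0, ?_⟩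
      simp only [hy, Pi.zero_apply]
      exact div_ne_zero (by simpa using hi0) (ne_of_gt (hd i0))
    have hpos := hS.dotProduct_mulVec_pos hyne
    have hstar' : star y = y := by funext i; simp
    rw [hstar'] at hpos
    have : dotProduct y ((Matrix.of fun i j => d i * d j * R i j) *ᵥ y) = dotProduct x (R *ᵥ x) := by
      simp only [dotProduct, mulVec, Finset.mul_sum]
      refine Finset.sum_congr rfl fun i _ => Finset.sum_congr rfl fun j _ => ?_
      simp only [hy, Matrix.of_apply]
      calc x i / d i * (d i * d j * R i j * (x j / d j))
          = (x i * (d i / d i)) * ((d j / d j) * (R i j * x j)) := by ring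
        _ = x i * (R i j * x j) := by
            rw [div_self (ne_of_gt (hd i)), div_self (ne_of_gt (hd j)), mul_one, one_mul]
    rwa [this] at hpos

theorem lower_triangular_riccati_sufficient (n : ℕ) (A B : Matrix (Fin n) (Fin n) ℝ)
    (hA : ∀ i j : Fin n, i < j → A i j = 0) (hB : ∀ i j : Fin n, i < j → B i j = 0)
    (hHurwitz : ∀ μ ∈ spectrum ℂ (A.map Complex.ofReal), μ.re < 0)
    (hdiag : ∀ i : Fin n, |B i i| < |A i i|) :
    ∃ p q : Fin n → ℝ, (∀ i, 0 < p i) ∧ (∀ i, 0 < q i) ∧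
      (-(Aᵀ * Matrix.diagonal p + Matrix.diagonal p * A + Matrix.diagonal q +
        Matrix.diagonal p * B * (Matrix.diagonal q)⁻¹ * Bᵀ * Matrix.diagonal p)).PosDef := by
  -- Step 1: diagonal entries of A are negative
  have haii : ∀ i, A i i < 0 := by
    intro i
    have hmem : (A i i : ℂ) ∈ spectrum ℂ (A.map Complex.ofReal) := by
      rw [spectrum.mem_iff]
      intro hunit
      rw [Matrix.isUnit_iff_isUnit_det] at hunit
      have hlt : ((algebraMap ℂ (Matrix (Fin n) (Fin n) ℂ)) (A i i) - A.map Complex.ofReal).BlockTriangular OrderDual.toDual := by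
        intro a b hab
        simp only [OrderDual.toDual_lt_toDual] at hab
        simp [Matrix.sub_apply, Matrix.algebraMap_matrix_apply, Matrix.map_apply,
          Fin.ne_of_lt hab, hA a b hab]
      rw [Matrix.det_of_lowerTriangular _ hlt] at hunit
      have hzero : ∏ j, ((algebraMap ℂ (Matrix (Fin n) (Fin n) ℂ)) (A i i) - A.map Complex.ofReal) j j = 0 := by
        apply Finset.prod_eq_zero (Finset.mem_univ i)
        simp [Matrix.algebraMap_matrix_apply]
      rw [hzero] at hunit
      exact hunit.ne_zero rfl
    simpa using hHurwitz _ hmem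
  set s : Fin n → ℝ := fun i => -A i i with hs_def
  have hs : ∀ i, 0 < s i := fun i => neg_pos.mpr (haii i)
  have hAabs : ∀ i, |A i i| = s i := fun i => abs_of_neg (haii i)
  set K : Fin n → Fin n → ℝ := fun i j => |A j i| + |A i j| + ∑ k, |B i k| * |B j k| * (s k)⁻¹ with hK_def
  set C : Fin n → ℝ := fun i => ∑ k, B i k * B i k * (s k)⁻¹ with hC_def
  set Δ : Fin n → ℝ := fun i => s i - B i i * B i i * (s i)⁻¹ with hΔ_def
  set E : Fin n → ℝ := fun i => C i + ∑ j ∈ Finset.univ.erase i, K i j with hE_def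
  have hKnn : ∀ i j, 0 ≤ K i j := by
    intro i j
    refine add_nonneg (add_nonneg (abs_nonneg _) (abs_nonneg _)) (Finset.sum_nonneg fun k _ => ?_)
    exact mul_nonneg (mul_nonneg (abs_nonneg _) (abs_nonneg _)) (inv_nonneg.mpr (hs k).le)
  have hCnn : ∀ i, 0 ≤ C i := fun i => Finset.sum_nonneg fun k _ =>
    mul_nonneg (mul_self_nonneg _) (inv_nonneg.mpr (hs k).le)
  have hΔpos : ∀ i, 0 < Δ i := by
    intro i
    have h1 : B i i * B i i < s i * s i := by
      have h2 := hdiag i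
      rw [hAabs] at h2
      nlinarith [abs_nonneg (B i i), abs_mul_abs_self (B i i)]
    have h3 : B i i * B i i * (s i)⁻¹ < s i := by
      have h4 : s i * s i * (s i)⁻¹ = s i := by field_simp
      calc B i i * B i i * (s i)⁻¹ < s i * s i * (s i)⁻¹ :=
            mul_lt_mul_of_pos_right h1 (inv_pos.mpr (hs i))
        _ = s i := h4
    simp only [hΔ_def]
    linarith
  have hEnn : ∀ i, 0 ≤ E i := fun i => add_nonneg (hCnn i)
    (Finset.sum_nonneg fun j _ => hKnn i j)
  -- choose η
  obtain ⟨η, hη0, hη1, hηE⟩ : ∃ η : ℝ, 0 < η ∧ η ≤ 1 ∧ ∀ i, η * (E i + 1) < Δ i := by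
    rcases isEmpty_or_nonempty (Fin n) with h | h
    · exact ⟨1, one_pos, le_rfl, fun i => isEmptyElim i⟩
    · obtain ⟨i0, -, hmin⟩ := Finset.exists_min_image Finset.univ (fun i => Δ i / (E i + 1))
        ⟨Classical.arbitrary _, Finset.mem_univ _⟩
      set c := Δ i0 / (E i0 + 1) with hc_def
      have hc : 0 < c := div_pos (hΔpos i0) (by linarith [hEnn i0])
      have hminc : 0 < min 1 c := lt_min one_pos hc
      refine ⟨min 1 c / 2, by positivity, ?_, fun i => ?_⟩
      · linarith [min_le_left 1 c]
      · have hpos : (0:ℝ) < E i + 1 := by linarith [hEnn i]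
        have h2 : c ≤ Δ i / (E i + 1) := hmin i (Finset.mem_univ i)
        have h1 : min 1 c / 2 < Δ i / (E i + 1) := by
          have : min 1 c / 2 < c := by linarith [min_le_right 1 c]
          linarith
        calc min 1 c / 2 * (E i + 1) < Δ i / (E i + 1) * (E i + 1) :=
              mul_lt_mul_of_pos_right h1 hpos
          _ = Δ i := div_mul_cancel₀ _ (ne_of_gt hpos)
  have hηne : η ≠ 0 := ne_of_gt hη0
  have hcoef : ∀ a b : ℕ, a + 1 ≤ b → (η ^ a)⁻¹ * η ^ b ≤ η := by
    intro a b hab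
    have h1 : (η ^ a)⁻¹ * η ^ b = η ^ (b - a) := by
      rw [mul_comm, ← pow_sub₀ η hηne (by omega)]
    rw [h1]
    calc η ^ (b - a) ≤ η ^ 1 := pow_le_pow_of_le_one hη0.le hη1 (by omega)
      _ = η := pow_one η
  set p : Fin n → ℝ := fun i => η ^ (2 * (i : ℕ)) with hp_def
  set q : Fin n → ℝ := fun i => s i * η ^ (2 * (i : ℕ)) with hq_def
  set d : Fin n → ℝ := fun i => (η ^ (i : ℕ))⁻¹ with hd_def
  have hp : ∀ i, 0 < p i := fun i => pow_pos hη0 _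
  have hq : ∀ i, 0 < q i := fun i => mul_pos (hs i) (pow_pos hη0 _)
  have hd : ∀ i, 0 < d i := fun i => inv_pos.mpr (pow_pos hη0 _)
  have hqp : ∀ i, q i = s i * p i := fun i => rfl
  have e1 : ∀ i, d i * d i * p i = 1 := by
    intro i
    simp only [hd_def, hp_def]
    rw [two_mul, pow_add, ← mul_inv]
    exact inv_mul_cancel₀ (by positivity)
  refine ⟨p, q, hp, hq, ?_⟩
  have hM : ∀ i j, (Aᵀ * Matrix.diagonal p + Matrix.diagonal p * A + Matrix.diagonal q +
      Matrix.diagonal p * B * (Matrix.diagonal q)⁻¹ * Bᵀ * Matrix.diagonal p) i j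
      = A j i * p j + p i * A i j + (if i = j then q i else 0)
        + (∑ k, p i * B i k * (q k)⁻¹ * B j k) * p j := by
    have Qinv : (Matrix.diagonal q)⁻¹ = Matrix.diagonal (fun i => (q i)⁻¹) := by
      apply Matrix.inv_eq_right_inv
      rw [diagonal_mul_diagonal]
      convert Matrix.diagonal_one with i
      exact mul_inv_cancel₀ (ne_of_gt (hq i))
    intro i j
    rw [Qinv]
    simp only [Matrix.add_apply]
    rw [Matrix.mul_diagonal, Matrix.diagonal_mul, Matrix.mul_diagonal, Matrix.diagonal_apply,
      Matrix.mul_apply, Matrix.transpose_apply]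
    simp only [Matrix.mul_diagonal, Matrix.diagonal_mul, Matrix.transpose_apply]
  have hR : ∀ i j, (-(Aᵀ * Matrix.diagonal p + Matrix.diagonal p * A + Matrix.diagonal q +
      Matrix.diagonal p * B * (Matrix.diagonal q)⁻¹ * Bᵀ * Matrix.diagonal p)) i j
      = -(A j i * p j + p i * A i j + (if i = j then q i else 0)
        + (∑ k, p i * B i k * (q k)⁻¹ * B j k) * p j) := by
    intro i j
    rw [Matrix.neg_apply, hM]
  refine posdef_of_weighted_dominant _ ?_ d hd ?_
  · -- symmetry
    intro i j
    rw [hR, hR]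
    have hif : (if j = i then q j else 0) = (if i = j then q i else 0) := by
      rcases eq_or_ne i j with h | h
      · subst h; rfl
      · rw [if_neg h.symm, if_neg h]
    have hsum : (∑ k, p j * B j k * (q k)⁻¹ * B i k) * p i
        = (∑ k, p i * B i k * (q k)⁻¹ * B j k) * p j := by
      rw [Finset.sum_mul, Finset.sum_mul]
      exact Finset.sum_congr rfl fun k _ => by ring
    rw [hif, hsum]; ring
  · -- dominance
    intro i
    -- diagonal lower bound
    have hTle : ∑ k, (p i * (q k)⁻¹) * (B i k * B i k) ≤ B i i * B i i * (s i)⁻¹ + η * C i := by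
      have hterm : ∀ k, (p i * (q k)⁻¹) * (B i k * B i k)
          ≤ (if k = i then B i i * B i i * (s i)⁻¹ else 0) + η * (B i k * B i k * (s k)⁻¹) := by
        intro k
        rcases eq_or_ne k i with hk | hk
        · subst hk
          have hpq : p k * (q k)⁻¹ = (s k)⁻¹ := by
            rw [hqp, mul_inv]
            calc p k * ((s k)⁻¹ * (p k)⁻¹) = (s k)⁻¹ * (p k * (p k)⁻¹) := by ring
              _ = (s k)⁻¹ := by rw [mul_inv_cancel₀ (ne_of_gt (hp k)), mul_one]
          rw [hpq, if_pos rfl]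
          have h0 : 0 ≤ η * (B k k * B k k * (s k)⁻¹) :=
            mul_nonneg hη0.le (mul_nonneg (mul_self_nonneg _) (inv_nonneg.mpr (hs k).le))
          nlinarith
        · rcases eq_or_ne (B i k) 0 with hB0 | hB0
          · rw [hB0]
            simp [hk]
          · have hki : (k : ℕ) < (i : ℕ) := by
              have h5 : ¬ i < k := fun h => hB0 (hB i k h)
              have h6 : k ≤ i := not_lt.mp h5
              have h7 : k ≠ i := hk
              have h8 : (k : ℕ) ≤ (i : ℕ) := h6
              have h9 : (k : ℕ) ≠ (i : ℕ) := Fin.val_ne_of_ne h7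
              omega
            have hcoefk : p i * (q k)⁻¹ ≤ η * (s k)⁻¹ := by
              have h1 : p i * (q k)⁻¹ = (s k)⁻¹ * ((η ^ (2 * (k : ℕ)))⁻¹ * η ^ (2 * (i : ℕ))) := by
                simp only [hp_def, hq_def]
                rw [mul_inv]; ring
              rw [h1]
              calc (s k)⁻¹ * ((η ^ (2 * (k : ℕ)))⁻¹ * η ^ (2 * (i : ℕ)))
                  ≤ (s k)⁻¹ * η := mul_le_mul_of_nonneg_left
                    (hcoef _ _ (by omega)) (inv_nonneg.mpr (hs k).le)
                _ = η * (s k)⁻¹ := mul_comm _ _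
            rw [if_neg hk, zero_add]
            calc (p i * (q k)⁻¹) * (B i k * B i k)
                ≤ (η * (s k)⁻¹) * (B i k * B i k) :=
                  mul_le_mul_of_nonneg_right hcoefk (mul_self_nonneg _)
              _ = η * (B i k * B i k * (s k)⁻¹) := by ring
      calc ∑ k, (p i * (q k)⁻¹) * (B i k * B i k)
          ≤ ∑ k, ((if k = i then B i i * B i i * (s i)⁻¹ else 0) + η * (B i k * B i k * (s k)⁻¹)) :=
            Finset.sum_le_sum fun k _ => hterm k
        _ = B i i * B i i * (s i)⁻¹ + η * C i := by
            rw [Finset.sum_add_distrib, Finset.sum_ite_eq' Finset.univ i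
              (fun _ => B i i * B i i * (s i)⁻¹), if_pos (Finset.mem_univ i), ← Finset.mul_sum]
    have hsum2 : d i * d i * ((∑ k, p i * B i k * (q k)⁻¹ * B i k) * p i)
        = ∑ k, (p i * (q k)⁻¹) * (B i k * B i k) := by
      rw [Finset.sum_mul, Finset.mul_sum]
      refine Finset.sum_congr rfl fun k _ => ?_
      calc d i * d i * (p i * B i k * (q k)⁻¹ * B i k * p i)
          = (d i * d i * p i) * (p i * (q k)⁻¹ * (B i k * B i k)) := by ring
        _ = (p i * (q k)⁻¹) * (B i k * B i k) := by rw [e1, one_mul]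
    have hdiagLB : Δ i - η * C i ≤ d i * d i *
        ((-(Aᵀ * Matrix.diagonal p + Matrix.diagonal p * A + Matrix.diagonal q +
          Matrix.diagonal p * B * (Matrix.diagonal q)⁻¹ * Bᵀ * Matrix.diagonal p)) i i) := by
      rw [hR i i, if_pos rfl]
      have h2 : d i * d i * (A i i * p i) = A i i := by
        calc d i * d i * (A i i * p i) = A i i * (d i * d i * p i) := by ring
          _ = A i i := by rw [e1, mul_one]
      have h2' : d i * d i * (p i * A i i) = A i i := by
        calc d i * d i * (p i * A i i) = A i i * (d i * d i * p i) := by ring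
          _ = A i i := by rw [e1, mul_one]
      have h3 : d i * d i * q i = s i := by
        calc d i * d i * q i = s i * (d i * d i * p i) := by rw [hqp]; ring
          _ = s i := by rw [e1, mul_one]
      have hAii : A i i = -s i := by simp [hs_def]
      have expand : d i * d i * (-(A i i * p i + p i * A i i + q i
            + (∑ k, p i * B i k * (q k)⁻¹ * B i k) * p i))
          = s i - ∑ k, (p i * (q k)⁻¹) * (B i k * B i k) := by
        have hXY : d i * d i * (-(A i i * p i + p i * A i i + q i
              + (∑ k, p i * B i k * (q k)⁻¹ * B i k) * p i))
            = -(d i * d i * (A i i * p i) + d i * d i * (p i * A i i) + d i * d i * q i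
              + d i * d i * ((∑ k, p i * B i k * (q k)⁻¹ * B i k) * p i)) := by ring
        rw [hXY, h2, h2', h3, hsum2, hAii]
        ring
      rw [expand]
      have hΔi : Δ i = s i - B i i * B i i * (s i)⁻¹ := rfl
      linarith
    -- off-diagonal upper bound
    have hoffd : ∀ j ∈ Finset.univ.erase i, d i * d j *
        |(-(Aᵀ * Matrix.diagonal p + Matrix.diagonal p * A + Matrix.diagonal q +
          Matrix.diagonal p * B * (Matrix.diagonal q)⁻¹ * Bᵀ * Matrix.diagonal p)) i j|
        ≤ η * K i j := by
      intro j hj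
      have hij : j ≠ i := Finset.ne_of_mem_erase hj
      rw [hR i j, if_neg (fun h => hij h.symm)]
      have habs : |A j i * p j + p i * A i j + 0 + (∑ k, p i * B i k * (q k)⁻¹ * B j k) * p j|
          ≤ |A j i| * p j + p i * |A i j| + (∑ k, p i * |B i k| * (q k)⁻¹ * |B j k|) * p j := by
        calc |A j i * p j + p i * A i j + 0 + (∑ k, p i * B i k * (q k)⁻¹ * B j k) * p j|
            = |A j i * p j + p i * A i j + (∑ k, p i * B i k * (q k)⁻¹ * B j k) * p j| := by
              rw [add_zero]
          _ ≤ |A j i * p j| + |p i * A i j| + |(∑ k, p i * B i k * (q k)⁻¹ * B j k) * p j| :=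
              abs_add_three _ _ _
          _ ≤ |A j i| * p j + p i * |A i j| + (∑ k, p i * |B i k| * (q k)⁻¹ * |B j k|) * p j := by
              have ha1 : |A j i * p j| = |A j i| * p j := by
                rw [abs_mul, abs_of_pos (hp j)]
              have ha2 : |p i * A i j| = p i * |A i j| := by
                rw [abs_mul, abs_of_pos (hp i)]
              have ha3 : |(∑ k, p i * B i k * (q k)⁻¹ * B j k) * p j|
                  ≤ (∑ k, p i * |B i k| * (q k)⁻¹ * |B j k|) * p j := by
                rw [abs_mul, abs_of_pos (hp j)]
                refine mul_le_mul_of_nonneg_right ?_ (hp j).le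
                calc |∑ k, p i * B i k * (q k)⁻¹ * B j k|
                    ≤ ∑ k, |p i * B i k * (q k)⁻¹ * B j k| := Finset.abs_sum_le_sum_abs _ _
                  _ = ∑ k, p i * |B i k| * (q k)⁻¹ * |B j k| := by
                      refine Finset.sum_congr rfl fun k _ => ?_
                      rw [abs_mul, abs_mul, abs_mul, abs_of_pos (hp i),
                        abs_of_pos (inv_pos.mpr (hq k))]
              linarith
      rw [abs_neg]
      have hstep : d i * d j * |A j i * p j + p i * A i j + 0
            + (∑ k, p i * B i k * (q k)⁻¹ * B j k) * p j|
          ≤ d i * d j * (|A j i| * p j + p i * |A i j|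
            + (∑ k, p i * |B i k| * (q k)⁻¹ * |B j k|) * p j) :=
        mul_le_mul_of_nonneg_left habs (mul_pos (hd i) (hd j)).le
      have piece1 : d i * d j * (|A j i| * p j) ≤ η * |A j i| := by
        rcases lt_trichotomy i j with h | h | h
        · have hc : d i * d j * p j ≤ η := by
            have heq : d i * d j * p j = (η ^ ((i : ℕ) + (j : ℕ)))⁻¹ * η ^ (2 * (j : ℕ)) := by
              simp only [hd_def, hp_def]
              rw [pow_add, mul_inv]
            rw [heq]
            exact hcoef _ _ (by have h' : (i : ℕ) < (j : ℕ) := h; omega)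
          calc d i * d j * (|A j i| * p j) = (d i * d j * p j) * |A j i| := by ring
            _ ≤ η * |A j i| := mul_le_mul_of_nonneg_right hc (abs_nonneg _)
        · exact (hij h.symm).elim
        · rw [hA j i h]
          simp
      have piece2 : d i * d j * (p i * |A i j|) ≤ η * |A i j| := by
        rcases lt_trichotomy i j with h | h | h
        · rw [hA i j h]
          simp
        · exact (hij h.symm).elim
        · have hc : d i * d j * p i ≤ η := by
            have heq : d i * d j * p i = (η ^ ((i : ℕ) + (j : ℕ)))⁻¹ * η ^ (2 * (i : ℕ)) := by
              simp only [hd_def, hp_def]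
              rw [pow_add, mul_inv]
            rw [heq]
            exact hcoef _ _ (by have h' : (j : ℕ) < (i : ℕ) := h; omega)
          calc d i * d j * (p i * |A i j|) = (d i * d j * p i) * |A i j| := by ring
            _ ≤ η * |A i j| := mul_le_mul_of_nonneg_right hc (abs_nonneg _)
      have piece3 : d i * d j * ((∑ k, p i * |B i k| * (q k)⁻¹ * |B j k|) * p j)
          ≤ η * ∑ k, |B i k| * |B j k| * (s k)⁻¹ := by
        rw [Finset.sum_mul, Finset.mul_sum, Finset.mul_sum]
        refine Finset.sum_le_sum fun k _ => ?_
        rcases eq_or_ne (B i k) 0 with h0 | h0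
        · rw [h0]; simp
        · rcases eq_or_ne (B j k) 0 with h1 | h1
          · rw [h1]; simp
          · have hki : (k : ℕ) ≤ (i : ℕ) := by
              have h5 : ¬ i < k := fun h => h0 (hB i k h)
              exact not_lt.mp h5
            have hkj : (k : ℕ) ≤ (j : ℕ) := by
              have h5 : ¬ j < k := fun h => h1 (hB j k h)
              exact not_lt.mp h5
            have hijv : (i : ℕ) ≠ (j : ℕ) := Fin.val_ne_of_ne (fun h => hij h.symm)
            have hc2 : d i * d j * (p i * (q k)⁻¹ * p j)
                = (s k)⁻¹ * ((η ^ ((i : ℕ) + (j : ℕ) + 2 * (k : ℕ)))⁻¹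
                  * η ^ (2 * (i : ℕ) + 2 * (j : ℕ))) := by
              simp only [hd_def, hp_def, hq_def]
              rw [mul_inv (s k), pow_add, pow_add, mul_inv, mul_inv]
              ring
            have hc3 : d i * d j * (p i * (q k)⁻¹ * p j) ≤ η * (s k)⁻¹ := by
              rw [hc2]
              calc (s k)⁻¹ * ((η ^ ((i : ℕ) + (j : ℕ) + 2 * (k : ℕ)))⁻¹
                    * η ^ (2 * (i : ℕ) + 2 * (j : ℕ)))
                  ≤ (s k)⁻¹ * η := mul_le_mul_of_nonneg_left
                    (hcoef _ _ (by omega)) (inv_nonneg.mpr (hs k).le)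
                _ = η * (s k)⁻¹ := mul_comm _ _
            calc d i * d j * (p i * |B i k| * (q k)⁻¹ * |B j k| * p j)
                = (d i * d j * (p i * (q k)⁻¹ * p j)) * (|B i k| * |B j k|) := by ring
              _ ≤ (η * (s k)⁻¹) * (|B i k| * |B j k|) :=
                  mul_le_mul_of_nonneg_right hc3
                    (mul_nonneg (abs_nonneg _) (abs_nonneg _))
              _ = η * (|B i k| * |B j k| * (s k)⁻¹) := by ring
      calc d i * d j * |A j i * p j + p i * A i j + 0
            + (∑ k, p i * B i k * (q k)⁻¹ * B j k) * p j|
          ≤ d i * d j * (|A j i| * p j) + d i * d j * (p i * |A i j|)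
            + d i * d j * ((∑ k, p i * |B i k| * (q k)⁻¹ * |B j k|) * p j) := by
            have : d i * d j * (|A j i| * p j + p i * |A i j|
                + (∑ k, p i * |B i k| * (q k)⁻¹ * |B j k|) * p j)
                = d i * d j * (|A j i| * p j) + d i * d j * (p i * |A i j|)
                + d i * d j * ((∑ k, p i * |B i k| * (q k)⁻¹ * |B j k|) * p j) := by ring
            linarith [hstep]
        _ ≤ η * |A j i| + η * |A i j| + η * ∑ k, |B i k| * |B j k| * (s k)⁻¹ := by
            linarith [piece1, piece2, piece3]
        _ = η * K i j := by rw [hK_def]; ring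
    have hEi : E i = C i + ∑ j ∈ Finset.univ.erase i, K i j := rfl
    calc ∑ j ∈ Finset.univ.erase i, d i * d j *
          |(-(Aᵀ * Matrix.diagonal p + Matrix.diagonal p * A + Matrix.diagonal q +
            Matrix.diagonal p * B * (Matrix.diagonal q)⁻¹ * Bᵀ * Matrix.diagonal p)) i j|
        ≤ ∑ j ∈ Finset.univ.erase i, η * K i j := Finset.sum_le_sum hoffd
      _ = η * ∑ j ∈ Finset.univ.erase i, K i j := (Finset.mul_sum _ _ _).symm
      _ < Δ i - η * C i := by
          have h6 := hηE i
          have h7 : η * ∑ j ∈ Finset.univ.erase i, K i j = η * E i - η * C i := by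
            rw [hEi]; ring
          nlinarith
      _ ≤ _ := hdiagLB
end

section
/- Let A be Metzler, B nonnegative, A + B Hurwitz, and let P be a diagonal positive definite matrix with (A+B)^T P + P (A+B) ≺ 0. Then there exists a diagonal positive definite matrix Q such that A^T P + P A + Q + P B Q^{-1} B^T P ≺ 0. -/
open Matrix

lemma zmat_posdef {n : ℕ} (N : Matrix (Fin n) (Fin n) ℝ)
    (hsym : ∀ i j, N j i = N i j) (hoff : ∀ i j, i ≠ j → N i j ≤ 0)
    (v : Fin n → ℝ) (hv : ∀ i, 0 < v i) (hNv : ∀ i, 0 < (N *ᵥ v) i) :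
    N.PosDef := by
  classical
  refine Matrix.PosDef.of_dotProduct_mulVec_pos ?_ ?_
  · ext i j
    simp [Matrix.conjTranspose_apply, hsym]
  intro x hx
  have hstar : star x = x := by funext i; simp
  rw [hstar]
  set y : Fin n → ℝ := fun i => x i / v i with hy
  have hxy : ∀ i, x i = v i * y i := by
    intro i
    rw [hy]
    field_simp
    exact (mul_div_cancel_right₀ (x i) (hv i).ne').symm
  have hmv : ∀ i, (N *ᵥ v) i = ∑ j, N i j * v j := by
    intro i; simp [mulVec, dotProduct]
  have hdot : x ⬝ᵥ N *ᵥ x = ∑ i, ∑ j, N i j * (x i * x j) := by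
    simp only [dotProduct, mulVec, Finset.mul_sum]
    exact Finset.sum_congr rfl fun i _ => Finset.sum_congr rfl fun j _ => by ring
  set T1 : ℝ := ∑ i, (N *ᵥ v) i * v i * (y i)^2 with hT1
  set S : ℝ := ∑ i, ∑ j, (-(v i * N i j * v j)) * (y i - y j)^2 with hS
  have hSnn : 0 ≤ S := by
    apply Finset.sum_nonneg; intro i _
    apply Finset.sum_nonneg; intro j _
    by_cases h : i = j
    · subst h; simp
    · have h0 : 0 ≤ v i * -N i j * v j :=
        mul_nonneg (mul_nonneg (hv i).le (neg_nonneg.2 (hoff i j h))) (hv j).le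
      have h1 : 0 ≤ -(v i * N i j * v j) := by
        rw [show -(v i * N i j * v j) = v i * -N i j * v j by ring]; exact h0
      positivity
  have hS1 : ∑ i : Fin n, ∑ j : Fin n, (-(N i j * v j)) * (v i * (y i)^2) = -T1 := by
    rw [hT1, ← Finset.sum_neg_distrib]
    refine Finset.sum_congr rfl fun i _ => ?_
    rw [← Finset.sum_mul, Finset.sum_neg_distrib, hmv i]
    ring
  have hS3 : ∑ i : Fin n, ∑ j : Fin n, (-(v i * N i j)) * (v j * (y j)^2) = -T1 := by
    rw [Finset.sum_comm, hT1, ← Finset.sum_neg_distrib]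
    refine Finset.sum_congr rfl fun j _ => ?_
    have : ∀ i : Fin n, (-(v i * N i j)) * (v j * (y j)^2)
        = (-(N j i * v i)) * (v j * (y j)^2) := by
      intro i; rw [hsym i j]; ring
    rw [Finset.sum_congr rfl fun i _ => this i]
    rw [← Finset.sum_mul, Finset.sum_neg_distrib, hmv j]
    ring
  have hS2 : ∑ i : Fin n, ∑ j : Fin n, 2 * (N i j * (x i * x j)) = 2 * (x ⬝ᵥ N *ᵥ x) := by
    rw [hdot, Finset.mul_sum]
    refine Finset.sum_congr rfl fun i _ => ?_
    rw [Finset.mul_sum]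
  have hiden : S = 2 * (x ⬝ᵥ N *ᵥ x) - 2 * T1 := by
    have expand : ∀ i j : Fin n, (-(v i * N i j * v j)) * (y i - y j)^2
        = (-(N i j * v j)) * (v i * (y i)^2) + 2 * (N i j * (x i * x j))
          + (-(v i * N i j)) * (v j * (y j)^2) := by
      intro i j
      rw [hxy i, hxy j]; ring
    calc S = ∑ i : Fin n, ∑ j : Fin n, ((-(N i j * v j)) * (v i * (y i)^2)
          + 2 * (N i j * (x i * x j)) + (-(v i * N i j)) * (v j * (y j)^2)) := by
            rw [hS]
            exact Finset.sum_congr rfl fun i _ => Finset.sum_congr rfl fun j _ => expand i j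
      _ = (∑ i : Fin n, ∑ j : Fin n, (-(N i j * v j)) * (v i * (y i)^2))
          + (∑ i : Fin n, ∑ j : Fin n, 2 * (N i j * (x i * x j)))
          + (∑ i : Fin n, ∑ j : Fin n, (-(v i * N i j)) * (v j * (y j)^2)) := by
            simp [Finset.sum_add_distrib]
      _ = -T1 + 2 * (x ⬝ᵥ N *ᵥ x) + -T1 := by rw [hS1, hS2, hS3]
      _ = 2 * (x ⬝ᵥ N *ᵥ x) - 2 * T1 := by ring
  have hT1pos : 0 < T1 := by
    obtain ⟨i0, hi0⟩ : ∃ i, x i ≠ 0 := by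
      by_contra h; push_neg at h; exact hx (funext h)
    rw [hT1]
    apply Finset.sum_pos'
    · intro i _
      have := (hNv i).le
      have := (hv i).le
      positivity
    · refine ⟨i0, Finset.mem_univ _, ?_⟩
      have hyi : y i0 ≠ 0 := by
        rw [hy]; exact div_ne_zero hi0 (hv i0).ne'
      have := hNv i0
      have := hv i0
      positivity
  linarith

lemma zmat_exists_pos_vec {n : ℕ} (M : Matrix (Fin n) (Fin n) ℝ)
    (hM : M.PosDef) (hoff : ∀ i j, i ≠ j → M i j ≤ 0) :
    ∃ v : Fin n → ℝ, (∀ i, 0 < v i) ∧ M *ᵥ v = 1 := by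
  classical
  have hsym : ∀ i j, M j i = M i j := by
    intro i j
    have := congrFun (congrFun hM.isHermitian i) j
    simpa [Matrix.conjTranspose_apply] using this
  have hdet : IsUnit M.det := hM.det_pos.ne'.isUnit
  set v : Fin n → ℝ := M⁻¹ *ᵥ 1 with hv
  have hMv : M *ᵥ v = 1 := by
    rw [hv, mulVec_mulVec, Matrix.mul_nonsing_inv _ hdet, one_mulVec]
  have hMvi : ∀ i, ∑ j, M i j * v j = 1 := by
    intro i
    have := congrFun hMv i
    simpa [mulVec, dotProduct] using this
  set u : Fin n → ℝ := fun i => |v i| with hu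
  have hvu : ∀ i, v i ≤ u i := fun i => le_abs_self _
  have huv : u = v := by
    by_contra hne
    have hz : u - v ≠ 0 := fun h => hne (by rwa [sub_eq_zero] at h)
    have hpos := hM.dotProduct_mulVec_pos hz
    have hstar : star (u - v) = u - v := by funext i; simp
    rw [hstar] at hpos
    have hdp : (u - v) ⬝ᵥ M *ᵥ (u - v)
        = ∑ i, ∑ j, (M i j * u i * u j - M i j * u i * v j
            - M i j * v i * u j + M i j * v i * v j) := by
      simp only [dotProduct, mulVec, Finset.mul_sum]
      exact Finset.sum_congr rfl fun i _ => Finset.sum_congr rfl fun j _ => by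
        simp only [Pi.sub_apply]; ring
    have hsplit : (u - v) ⬝ᵥ M *ᵥ (u - v)
        = (∑ i, ∑ j, M i j * u i * u j) - (∑ i, ∑ j, M i j * u i * v j)
          - (∑ i, ∑ j, M i j * v i * u j) + (∑ i, ∑ j, M i j * v i * v j) := by
      rw [hdp]
      simp [Finset.sum_add_distrib, Finset.sum_sub_distrib]
    have hc : (∑ i, ∑ j, M i j * u i * v j) = ∑ i, u i := by
      refine Finset.sum_congr rfl fun i _ => ?_
      rw [show (∑ j, M i j * u i * v j) = u i * ∑ j, M i j * v j by
        rw [Finset.mul_sum]; exact Finset.sum_congr rfl fun j _ => by ring]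
      rw [hMvi i, mul_one]
    have hc' : (∑ i, ∑ j, M i j * v i * u j) = ∑ i, u i := by
      rw [Finset.sum_comm]
      refine Finset.sum_congr rfl fun j _ => ?_
      rw [show (∑ i, M i j * v i * u j) = u j * ∑ i, M j i * v i by
        rw [Finset.mul_sum]; exact Finset.sum_congr rfl fun i _ => by rw [hsym i j]; ring]
      rw [hMvi j, mul_one]
    have hb : (∑ i, ∑ j, M i j * v i * v j) = ∑ i, v i := by
      refine Finset.sum_congr rfl fun i _ => ?_
      rw [show (∑ j, M i j * v i * v j) = v i * ∑ j, M i j * v j by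
        rw [Finset.mul_sum]; exact Finset.sum_congr rfl fun j _ => by ring]
      rw [hMvi i, mul_one]
    have hab : (∑ i, ∑ j, M i j * u i * u j) ≤ ∑ i, ∑ j, M i j * v i * v j := by
      refine Finset.sum_le_sum fun i _ => Finset.sum_le_sum fun j _ => ?_
      by_cases h : i = j
      · subst h
        have h4 : u i * u i = v i * v i := by rw [hu]; simp [abs_mul_abs_self]
        rw [mul_assoc, mul_assoc, h4]
      · have hM0 : M i j ≤ 0 := hoff i j h
        have habs : v i * v j ≤ u i * u j := by
          rw [hu]; calc v i * v j ≤ |v i * v j| := le_abs_self _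
            _ = |v i| * |v j| := abs_mul _ _
        nlinarith [habs, hM0]
    have hsum_le : (∑ i, v i) ≤ ∑ i, u i := Finset.sum_le_sum fun i _ => hvu i
    rw [hsplit, hc, hc', hb] at hpos
    linarith
  have hvnn : ∀ i, 0 ≤ v i := fun i => by rw [← huv, hu]; exact abs_nonneg _
  refine ⟨v, fun i => ?_, hMv⟩
  have h1 : M i i * v i + ∑ j ∈ Finset.univ.erase i, M i j * v j = 1 := by
    rw [Finset.add_sum_erase _ (fun j => M i j * v j) (Finset.mem_univ i)]
    exact hMvi i
  have h2 : ∑ j ∈ Finset.univ.erase i, M i j * v j ≤ 0 := by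
    apply Finset.sum_nonpos
    intro j hj
    have hji : j ≠ i := Finset.ne_of_mem_erase hj
    exact mul_nonpos_of_nonpos_of_nonneg (hoff i j (Ne.symm hji)) (hvnn j)
  have h3 : 0 < M i i * v i := by linarith
  rcases (hvnn i).lt_or_eq with h | h
  · exact h
  · exfalso; rw [← h, mul_zero] at h3; exact lt_irrefl _ h3

theorem metzler_riccati_given_P (n : ℕ) (A B : Matrix (Fin n) (Fin n) ℝ)
    (hMetzler : ∀ i j, i ≠ j → 0 ≤ A i j) (hB : ∀ i j, 0 ≤ B i j)
    (hHurwitz : ∀ μ ∈ spectrum ℂ ((A + B).map Complex.ofReal), μ.re < 0)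
    (p : Fin n → ℝ) (hp : ∀ i, 0 < p i)
    (hLyap : (-((A + B)ᵀ * Matrix.diagonal p + Matrix.diagonal p * (A + B))).PosDef) :
    ∃ q : Fin n → ℝ, (∀ i, 0 < q i) ∧
      (-(Aᵀ * Matrix.diagonal p + Matrix.diagonal p * A + Matrix.diagonal q +
        Matrix.diagonal p * B * (Matrix.diagonal q)⁻¹ * Bᵀ * Matrix.diagonal p)).PosDef := by
  classical
  set M := -((A + B)ᵀ * Matrix.diagonal p + Matrix.diagonal p * (A + B)) with hMdef
  have hMij : ∀ i j, M i j = -((A j i + B j i) * p j + p i * (A i j + B i j)) := by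
    intro i j
    rw [hMdef]
    simp [Matrix.mul_diagonal, Matrix.diagonal_mul, Matrix.transpose_apply,
      Matrix.neg_apply, Matrix.add_apply]
  have hoffM : ∀ i j, i ≠ j → M i j ≤ 0 := by
    intro i j hij
    rw [hMij]
    have h1 := hMetzler i j hij
    have h2 := hMetzler j i (Ne.symm hij)
    have h3 := hB i j
    have h4 := hB j i
    have h5 := (hp i).le
    have h6 := (hp j).le
    nlinarith
  obtain ⟨v, hv, hMv⟩ := zmat_exists_pos_vec M hLyap hoffM
  set d : Fin n → ℝ := fun k => ∑ j, B j k * (p j * v j) with hd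
  have hdnn : ∀ k, 0 ≤ d k := by
    intro k
    apply Finset.sum_nonneg
    intro j _
    have := hB j k
    have := (hp j).le
    have := (hv j).le
    positivity
  set q : Fin n → ℝ := fun k => (d k + 1/2) / v k with hqdef
  have hq : ∀ k, 0 < q k := by
    intro k
    rw [hqdef]
    have h1 := hdnn k
    have h2 := hv k
    positivity
  have hqv : ∀ k, q k * v k = d k + 1/2 := by
    intro k
    rw [hqdef]
    exact div_mul_cancel₀ _ (hv k).ne'
  have hQinv : (Matrix.diagonal q)⁻¹ = Matrix.diagonal (fun k => (q k)⁻¹) := by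
    apply Matrix.inv_eq_right_inv
    rw [Matrix.diagonal_mul_diagonal]
    rw [show (fun i => q i * (q i)⁻¹) = fun _ : Fin n => (1:ℝ) from
      funext fun k => mul_inv_cancel₀ (hq k).ne', Matrix.diagonal_one]
  refine ⟨q, hq, ?_⟩
  set N := -(Aᵀ * Matrix.diagonal p + Matrix.diagonal p * A + Matrix.diagonal q +
        Matrix.diagonal p * B * (Matrix.diagonal q)⁻¹ * Bᵀ * Matrix.diagonal p) with hNdef
  have hNij : ∀ i j, N i j = -(A j i * p j + p i * A i j + (if i = j then q i else 0)
          + ∑ k, p i * B i k * (q k)⁻¹ * (B j k * p j)) := by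
    intro i j
    rw [hNdef, hQinv]
    simp [Matrix.mul_apply, Matrix.diagonal_apply, Matrix.mul_diagonal, Matrix.diagonal_mul,
      Matrix.transpose_apply, Matrix.neg_apply, Matrix.add_apply]
    rw [Finset.sum_mul]
    exact Finset.sum_congr rfl fun k _ => by ring
  have hsymN : ∀ i j, N j i = N i j := by
    intro i j
    rw [hNij, hNij]
    have hite : (if j = i then q j else 0) = (if i = j then q i else 0) := by
      by_cases h : i = j
      · subst h; simp
      · rw [if_neg (Ne.symm h), if_neg h]
    have hsum : (∑ k, p j * B j k * (q k)⁻¹ * (B i k * p i))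
        = ∑ k, p i * B i k * (q k)⁻¹ * (B j k * p j) :=
      Finset.sum_congr rfl fun k _ => by ring
    rw [hite, hsum]
    ring
  have hoffN : ∀ i j, i ≠ j → N i j ≤ 0 := by
    intro i j hij
    rw [hNij, if_neg hij]
    have h1 := hMetzler i j hij
    have h2 := hMetzler j i (Ne.symm hij)
    have h5 := (hp i).le
    have h6 := (hp j).le
    have hs : 0 ≤ ∑ k, p i * B i k * (q k)⁻¹ * (B j k * p j) := by
      apply Finset.sum_nonneg
      intro k _
      have := hB i k
      have := hB j k
      have := (hq k).le
      positivity
    nlinarith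
  -- the four sums
  set S1 : Fin n → ℝ := fun i => ∑ j, A j i * p j * v j with hS1
  set S2 : Fin n → ℝ := fun i => ∑ j, A i j * v j with hS2
  set S3 : Fin n → ℝ := fun i => ∑ j, B i j * v j with hS3
  set T : Fin n → ℝ := fun i => ∑ k, B i k * ((q k)⁻¹ * d k) with hT
  have hM1 : ∀ i, S1 i + d i + p i * S2 i + p i * S3 i = -1 := by
    intro i
    have h1 : ∑ j, M i j * v j = 1 := by
      have := congrFun hMv i
      simpa [Matrix.mulVec, dotProduct] using this
    have h2 : ∑ j, M i j * v j
        = ∑ j, (-(A j i * p j * v j + B j i * (p j * v j) + p i * (A i j * v j)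
            + p i * (B i j * v j))) := by
      refine Finset.sum_congr rfl fun j _ => ?_
      rw [hMij]; ring
    rw [h2, Finset.sum_neg_distrib] at h1
    have h3 : ∑ j, (A j i * p j * v j + B j i * (p j * v j) + p i * (A i j * v j)
        + p i * (B i j * v j)) = S1 i + d i + p i * S2 i + p i * S3 i := by
      simp only [Finset.sum_add_distrib, hS1, hS2, hS3, hd, Finset.mul_sum]
    rw [h3] at h1
    linarith
  have hNvi : ∀ i, (N *ᵥ v) i = -(S1 i + p i * S2 i + q i * v i + p i * T i) := by
    intro i
    have e0 : (N *ᵥ v) i = ∑ j, N i j * v j := by simp [Matrix.mulVec, dotProduct]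
    rw [e0]
    have e1 : ∀ j : Fin n, N i j * v j = -((A j i * p j * v j) + p i * (A i j * v j)
        + (if i = j then q i * v j else 0)
        + ∑ k, p i * (B i k * ((q k)⁻¹ * (B j k * (p j * v j))))) := by
      intro j
      rw [hNij, neg_mul]
      congr 1
      rw [add_mul, add_mul, add_mul, ite_mul, zero_mul, Finset.sum_mul]
      rw [show (∑ k, p i * B i k * (q k)⁻¹ * (B j k * p j) * v j)
          = ∑ k, p i * (B i k * ((q k)⁻¹ * (B j k * (p j * v j)))) from
        Finset.sum_congr rfl fun k _ => by ring]
      ring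
    rw [Finset.sum_congr rfl fun j _ => e1 j, Finset.sum_neg_distrib]
    congr 1
    simp only [Finset.sum_add_distrib]
    have p1 : (∑ j, A j i * p j * v j) = S1 i := rfl
    have p2 : (∑ j, p i * (A i j * v j)) = p i * S2 i := by
      rw [hS2, Finset.mul_sum]
    have p3 : (∑ j, if i = j then q i * v j else 0) = q i * v i := by
      rw [Finset.sum_ite_eq, if_pos (Finset.mem_univ i)]
    have p4 : (∑ j, ∑ k, p i * (B i k * ((q k)⁻¹ * (B j k * (p j * v j))))) = p i * T i := by
      rw [Finset.sum_comm]
      simp only [← Finset.mul_sum]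
      rfl
    rw [p1, p2, p3, p4]
  have hNv : ∀ i, 0 < (N *ᵥ v) i := by
    intro i
    rw [hNvi i]
    have hTle : T i ≤ S3 i := by
      refine Finset.sum_le_sum fun k _ => ?_
      have hk : (q k)⁻¹ * d k ≤ v k := by
        rw [inv_mul_le_iff₀ (hq k)]
        linarith [hqv k]
      exact mul_le_mul_of_nonneg_left hk (hB i k)
    have hpT : p i * T i ≤ p i * S3 i := mul_le_mul_of_nonneg_left hTle (hp i).le
    have h1 := hM1 i
    have h2 := hqv i
    linarith
  exact zmat_posdef N hsymN hoffN v hv hNv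
end

section
/- Let M be a symmetric real n×n Metzler matrix. If there exists a vector v with all entries positive such that M v has all entries negative, then M is negative definite. -/
open Matrix Finset

theorem symm_metzler_pos_vec_negdef (n : ℕ) (M : Matrix (Fin n) (Fin n) ℝ)
    (hSymm : M.IsSymm) (hMetzler : ∀ i j, i ≠ j → 0 ≤ M i j)
    (v : Fin n → ℝ) (hv : ∀ i, 0 < v i) (hMv : ∀ i, (M.mulVec v) i < 0) :
    (-M).PosDef := by
  have hsym : ∀ i j, M i j = M j i := fun i j => (hSymm.apply i j).symm
  have hvne : ∀ i, v i ≠ 0 := fun i => (hv i).ne'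
  have key : ∀ x : Fin n → ℝ, x ≠ 0 → x ⬝ᵥ M.mulVec x < 0 := by
    intro x hx
    set Q : ℝ := ∑ i, ∑ j, x i * (M i j * x j) with hQ
    set A : ℝ := ∑ i, ∑ j, M i j * v j * x i ^ 2 / v i with hA
    set S : ℝ := ∑ i, ∑ j, M i j * ((v j * x i - v i * x j) ^ 2 / (v i * v j)) with hS
    have hxQ : x ⬝ᵥ M.mulVec x = Q := by
      simp [dotProduct, Matrix.mulVec, Finset.mul_sum, hQ]
    have hid : S = 2 * A - 2 * Q := by
      have expand : S = (∑ i, ∑ j, M i j * v j * x i ^ 2 / v i)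
          + (∑ i, ∑ j, M i j * v i * x j ^ 2 / v j)
          - 2 * ∑ i, ∑ j, x i * (M i j * x j) := by
        rw [hS]
        rw [Finset.mul_sum, ← Finset.sum_add_distrib, ← Finset.sum_sub_distrib]
        refine Finset.sum_congr rfl fun i _ => ?_
        rw [Finset.mul_sum, ← Finset.sum_add_distrib, ← Finset.sum_sub_distrib]
        refine Finset.sum_congr rfl fun j _ => ?_
        field_simp [hvne i, hvne j]
        ring
      have swap : (∑ i, ∑ j, M i j * v i * x j ^ 2 / v j)
          = ∑ i, ∑ j, M i j * v j * x i ^ 2 / v i := by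
        rw [Finset.sum_comm]
        refine Finset.sum_congr rfl fun i _ => Finset.sum_congr rfl fun j _ => ?_
        rw [hsym j i]
      rw [expand, swap, ← hA, ← hQ]; ring
    have hSnn : 0 ≤ S := by
      refine Finset.sum_nonneg fun i _ => Finset.sum_nonneg fun j _ => ?_
      by_cases h : i = j
      · subst h; simp
      · exact mul_nonneg (hMetzler i j h)
          (div_nonneg (sq_nonneg _) (le_of_lt (mul_pos (hv i) (hv j))))
    have hAneg : A < 0 := by
      have hAeq : A = ∑ i, (M.mulVec v) i * x i ^ 2 / v i := by
        refine Finset.sum_congr rfl fun i _ => ?_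
        simp [Matrix.mulVec, dotProduct, Finset.sum_div, Finset.sum_mul]
      rw [hAeq]
      obtain ⟨i0, hi0⟩ : ∃ i, x i ≠ 0 := by
        by_contra h
        push_neg at h
        exact hx (funext h)
      have : (∑ i, (M.mulVec v) i * x i ^ 2 / v i) < ∑ _i : Fin n, (0:ℝ) := by
        refine Finset.sum_lt_sum (fun i _ => ?_) ⟨i0, Finset.mem_univ i0, ?_⟩
        · exact div_nonpos_of_nonpos_of_nonneg
            (mul_nonpos_of_nonpos_of_nonneg (le_of_lt (hMv i)) (sq_nonneg _))
            (le_of_lt (hv i))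
        · exact div_neg_of_neg_of_pos
            (mul_neg_of_neg_of_pos (hMv i0) (by positivity)) (hv i0)
      simpa using this
    rw [hxQ]
    nlinarith
  rw [Matrix.posDef_iff_dotProduct_mulVec]
  constructor
  · rw [Matrix.IsHermitian]
    ext i j
    simp [hsym i j]
  · intro x hx
    have := key x hx
    simp only [Matrix.neg_mulVec, dotProduct_neg, star_trivial]
    linarith
end

section
/- Let C1, C2 be non-empty convex subsets of a finite-dimensional real inner product space E with C2 a cone and C1 ∩ C2 = ∅. Then there exists a non-zero v ∈ E such that ⟨v, x⟩ ≥ 0 for all x ∈ C1 and ⟨v, x⟩ ≤ 0 for all x ∈ C2. -/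
open Pointwise

open InnerProductSpace in
lemma point_sep_aux {E : Type*} [NormedAddCommGroup E]
    [InnerProductSpace ℝ E] [FiniteDimensional ℝ E]
    (D : Set E) (hD : Convex ℝ D) (hne : D.Nonempty) (h0 : (0 : E) ∉ D) :
    ∃ v : E, v ≠ 0 ∧ ∀ d ∈ D, 0 ≤ (inner ℝ v d : ℝ) := by
  by_cases htop : affineSpan ℝ D = ⊤
  · -- interior is nonempty
    have hint : (interior D).Nonempty :=
      hD.interior_nonempty_iff_affineSpan_eq_top.mpr htop
    obtain ⟨x, hx⟩ := hint
    have h0i : (0 : E) ∉ interior D := fun h => h0 (interior_subset h)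
    obtain ⟨f, hf⟩ := geometric_hahn_banach_open_point hD.interior isOpen_interior h0i
    have hf0 : f 0 = 0 := map_zero f
    have hfx : f x < 0 := by have := hf x hx; rwa [hf0] at this
    have hfd : ∀ d ∈ D, f d ≤ 0 := by
      intro d hd
      by_contra hpos
      push_neg at hpos
      set b : ℝ := -f x with hb
      have hbpos : 0 < b := by simp [hb]; linarith
      set t : ℝ := b / (b + f d) with ht
      have hsum : 0 < b + f d := by linarith
      have ht0 : 0 < t := div_pos hbpos hsum
      have h1t : 1 - t = f d / (b + f d) := by
        rw [ht, eq_div_iff hsum.ne', sub_mul, div_mul_cancel₀ _ hsum.ne']; ring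
      have h1tpos : 0 < 1 - t := by rw [h1t]; exact div_pos hpos hsum
      have hmem : (1 - t) • x + t • d ∈ interior D :=
        hD.combo_interior_closure_mem_interior hx (subset_closure hd)
          h1tpos ht0.le (by ring)
      have := hf _ hmem
      rw [hf0, map_add, map_smul, map_smul] at this
      simp only [smul_eq_mul] at this
      rw [h1t, ht] at this
      have : f d / (b + f d) * f x + b / (b + f d) * f d = 0 := by
        field_simp
        ring
      nlinarith [hf _ hmem, hf0, map_add f ((1-t) • x) (t • d),
        map_smul f (1-t) x, map_smul f t d]
    set v : E := -(toDual ℝ E).symm f with hv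
    refine ⟨v, ?_, ?_⟩
    · intro h
      have : (inner ℝ ((toDual ℝ E).symm f) x : ℝ) = f x := toDual_symm_apply
      rw [show (toDual ℝ E).symm f = -v by simp [hv], inner_neg_left, h] at this
      simp at this
      linarith
    · intro d hd
      have : (inner ℝ ((toDual ℝ E).symm f) d : ℝ) = f d := toDual_symm_apply
      rw [hv, inner_neg_left, this]
      linarith [hfd d hd]
  · -- D lies in a proper affine subspace
    obtain ⟨a, ha⟩ := hne
    have hW : vectorSpan ℝ D ≠ ⊤ := by
      intro h
      apply htop
      rw [← AffineSubspace.direction_eq_top_iff_of_nonempty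
        ((affineSpan_nonempty ℝ).mpr ⟨a, ha⟩), direction_affineSpan]
      exact h
    have horth : (vectorSpan ℝ D)ᗮ ≠ ⊥ := by
      intro h
      exact hW (Submodule.orthogonal_eq_bot_iff.mp h)
    obtain ⟨u, hu, hune⟩ := Submodule.exists_mem_ne_zero_of_ne_bot horth
    have hconst : ∀ d ∈ D, (inner ℝ u d : ℝ) = inner ℝ u a := by
      intro d hd
      have hmem : d - a ∈ vectorSpan ℝ D := by
        have := vsub_mem_vectorSpan ℝ hd ha
        simpa using this
      have : (inner ℝ u (d - a) : ℝ) = 0 := by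
        rw [real_inner_comm]
        exact (Submodule.mem_orthogonal _ u).mp hu (d - a) hmem
      rw [inner_sub_right] at this
      linarith
    rcases le_or_gt 0 (inner ℝ u a : ℝ) with h | h
    · exact ⟨u, hune, fun d hd => by rw [hconst d hd]; exact h⟩
    · refine ⟨-u, neg_ne_zero.mpr hune, fun d hd => ?_⟩
      rw [inner_neg_left, hconst d hd]
      linarith

theorem convex_cone_separation {E : Type*} [NormedAddCommGroup E]
    [InnerProductSpace ℝ E] [FiniteDimensional ℝ E]
    (C1 C2 : Set E) (hC1 : Convex ℝ C1) (hC2 : Convex ℝ C2)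
    (hC1ne : C1.Nonempty) (hC2ne : C2.Nonempty)
    (hcone : ∀ x ∈ C2, ∀ t : ℝ, 0 < t → t • x ∈ C2)
    (hdisj : C1 ∩ C2 = ∅) :
    ∃ v : E, v ≠ 0 ∧ (∀ x ∈ C1, 0 ≤ (inner ℝ v x : ℝ)) ∧
      (∀ x ∈ C2, (inner ℝ v x : ℝ) ≤ 0) := by
  set D : Set E := C1 - C2 with hDdef
  have hD : Convex ℝ D := hC1.sub hC2
  have hne : D.Nonempty := hC1ne.sub hC2ne
  have h0 : (0 : E) ∉ D := by
    intro h
    rw [hDdef, Set.mem_sub] at h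
    obtain ⟨x, hx, y, hy, hxy⟩ := h
    have hxy' : x = y := sub_eq_zero.mp hxy
    have hmem : x ∈ C1 ∩ C2 := ⟨hx, hxy' ▸ hy⟩
    rw [hdisj] at hmem
    exact hmem
  obtain ⟨v, hvne, hv⟩ := point_sep_aux D hD hne h0
  have key : ∀ x1 ∈ C1, ∀ x2 ∈ C2, (inner ℝ v x2 : ℝ) ≤ inner ℝ v x1 := by
    intro x1 h1 x2 h2
    have : x1 - x2 ∈ D := Set.sub_mem_sub h1 h2
    have := hv _ this
    rw [inner_sub_right] at this
    linarith
  obtain ⟨y1, hy1⟩ := hC1ne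
  obtain ⟨y2, hy2⟩ := hC2ne
  have hC2le : ∀ x ∈ C2, (inner ℝ v x : ℝ) ≤ 0 := by
    intro x hx
    by_contra hpos
    push_neg at hpos
    set t : ℝ := (|inner ℝ v y1| + 1) / inner ℝ v x with ht
    have htpos : 0 < t := div_pos (by positivity) hpos
    have := key y1 hy1 (t • x) (hcone x hx t htpos)
    rw [inner_smul_right] at this
    rw [ht] at this
    rw [div_mul_cancel₀] at this
    · have : (inner ℝ v y1 : ℝ) < |inner ℝ v y1| + 1 := by
        cases abs_cases (inner ℝ v y1 : ℝ) with
        | inl h => linarith [h.1]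
        | inr h => linarith [h.1, h.2]
      linarith
    · exact ne_of_gt hpos
  refine ⟨v, hvne, ?_, hC2le⟩
  intro x hx
  by_contra hneg
  push_neg at hneg
  have hc2 : (inner ℝ v y2 : ℝ) ≤ 0 := hC2le y2 hy2
  rcases eq_or_lt_of_le hc2 with h | h
  · have := key x hx y2 hy2
    rw [h] at this
    linarith
  · set t : ℝ := (inner ℝ v x : ℝ) / (2 * inner ℝ v y2) with ht
    have htpos : 0 < t := div_pos_of_neg_of_neg hneg (by linarith)
    have := key x hx (t • y2) (hcone y2 hy2 t htpos)
    rw [inner_smul_right, ht] at this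
    have hcc : (inner ℝ v x : ℝ) / (2 * inner ℝ v y2) * (2 * inner ℝ v y2) = inner ℝ v x :=
      div_mul_cancel₀ _ (by linarith)
    nlinarith [this, hcc, hneg, h]
end
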